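/- arXiv:1808.01277 — 5 statements merged into one kernel-verified Lean document; each statement's English description precedes it below -/
import Mathlib

section
/- Let (Z_j)_{j≥1} be independent Poisson random variables where Z_j has mean λ_j ≤ (α/j)·(1/(2e))^j for some α > 0. Then E[exp(Σ_{j≥1} j·Z_j)] ≤ e^α, and consequently for every k ≥ 0, P[Σ_{j≥1} j·Z_j ≥ k] ≤ exp(α − k). -/
open MeasureTheory ProbabilityTheory Filter Topology
open scoped ENNReal NNReal

/-- `exp` extended to `ℝ≥0∞`, with `exp ∞ = ∞`. -/
noncomputable def expENN (x : ℝ≥0∞) : ℝ≥0∞ :=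
  if x = ∞ then ∞ else ENNReal.ofReal (Real.exp x.toReal)

lemma expENN_ofReal {a : ℝ} (ha : 0 ≤ a) :
    expENN (ENNReal.ofReal a) = ENNReal.ofReal (Real.exp a) := by
  rw [expENN, if_neg ENNReal.ofReal_ne_top, ENNReal.toReal_ofReal ha]

lemma expENN_eq_tsum (x : ℝ≥0∞) :
    expENN x = ∑' k : ℕ, x ^ k / (Nat.factorial k : ℝ≥0∞) := by
  rcases eq_or_ne x ∞ with h | h
  · subst h
    rw [expENN, if_pos rfl]
    refine (top_le_iff.mp ?_).symm
    calc (∞ : ℝ≥0∞) = ∞ ^ 1 / (Nat.factorial 1 : ℝ≥0∞) := by simp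
      _ ≤ _ := ENNReal.le_tsum 1
  · rw [expENN, if_neg h]
    have hx : x = ENNReal.ofReal x.toReal := (ENNReal.ofReal_toReal h).symm
    rw [Real.exp_eq_exp_ℝ, NormedSpace.exp_eq_tsum_div,
      ENNReal.ofReal_tsum_of_nonneg (fun k => by positivity)
        (NormedSpace.expSeries_div_summable _)]
    refine tsum_congr fun k => ?_
    rw [ENNReal.ofReal_div_of_pos (by positivity),
      ENNReal.ofReal_pow ENNReal.toReal_nonneg, ← hx, ENNReal.ofReal_natCast]

lemma expENN_mono : Monotone expENN := by
  intro a b hab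
  simp only [expENN_eq_tsum]
  exact ENNReal.tsum_le_tsum fun k =>
    ENNReal.div_le_div_right (pow_le_pow_left' hab k) _

lemma measurable_expENN : Measurable expENN := by
  have : expENN = fun x => ∑' k : ℕ, x ^ k / (Nat.factorial k : ℝ≥0∞) :=
    funext expENN_eq_tsum
  rw [this]
  exact Measurable.ennreal_tsum fun k => (measurable_id.pow_const k).div_const _

lemma expENN_iSup {u : ℕ → ℝ≥0∞} (hu : Monotone u) :
    expENN (⨆ n, u n) = ⨆ n, expENN (u n) := by
  simp only [expENN_eq_tsum]
  have key : ∀ k : ℕ, (⨆ n, u n) ^ k / (Nat.factorial k : ℝ≥0∞)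
      = ⨆ n, u n ^ k / (Nat.factorial k : ℝ≥0∞) := by
    intro k
    have hcont : Continuous fun x : ℝ≥0∞ => x ^ k / (Nat.factorial k : ℝ≥0∞) := by
      simp only [div_eq_mul_inv]
      exact (ENNReal.continuous_mul_const
        (ENNReal.inv_ne_top.mpr (by exact_mod_cast (Nat.factorial_pos k).ne'))).comp
        (ENNReal.continuous_pow k)
    have hmono : Monotone fun x : ℝ≥0∞ => x ^ k / (Nat.factorial k : ℝ≥0∞) :=
      fun a b hab => ENNReal.div_le_div_right (pow_le_pow_left' hab k) _
    exact tendsto_nhds_unique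
      ((hcont.tendsto _).comp (tendsto_atTop_iSup hu))
      (tendsto_atTop_iSup (hmono.comp hu))
  calc ∑' k : ℕ, (⨆ n, u n) ^ k / (Nat.factorial k : ℝ≥0∞)
      = ∑' k : ℕ, ⨆ n, u n ^ k / (Nat.factorial k : ℝ≥0∞) := tsum_congr key
    _ = ∫⁻ k : ℕ, ⨆ n, u n ^ k / (Nat.factorial k : ℝ≥0∞) ∂Measure.count :=
        (lintegral_count _).symm
    _ = ⨆ n, ∫⁻ k : ℕ, u n ^ k / (Nat.factorial k : ℝ≥0∞) ∂Measure.count := by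
        refine lintegral_iSup (fun n => measurable_from_top) ?_
        intro a b hab k
        exact ENNReal.div_le_div_right (pow_le_pow_left' (hu hab) k) _
    _ = ⨆ n, ∑' k : ℕ, u n ^ k / (Nat.factorial k : ℝ≥0∞) := by
        simp only [lintegral_count]

/-- MGF of the Poisson distribution. -/
lemma lintegral_exp_poisson (r : ℝ≥0) (t : ℝ) :
    ∫⁻ n : ℕ, ENNReal.ofReal (Real.exp (t * n)) ∂(poissonMeasure r) =
      ENNReal.ofReal (Real.exp (r * (Real.exp t - 1))) := by
  rw [lintegral_countable']
  have h1 : ∀ n : ℕ, poissonMeasure r {n} = ENNReal.ofReal (poissonPMFReal r n) := by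
    intro n
    rw [poissonMeasure_singleton]
    rfl
  have hsum : HasSum (fun n : ℕ => Real.exp (t * n) * poissonPMFReal r n)
      (Real.exp ((r : ℝ) * (Real.exp t - 1))) := by
    have h := (NormedSpace.expSeries_div_hasSum_exp ((r : ℝ) * Real.exp t)).mul_left
      (Real.exp (-(r : ℝ)))
    have heq : (fun n : ℕ => Real.exp (-(r : ℝ)) *
        (((r : ℝ) * Real.exp t) ^ n / (Nat.factorial n : ℝ)))
        = fun n : ℕ => Real.exp (t * n) * poissonPMFReal r n := by
      funext n
      have hpow : Real.exp t ^ n = Real.exp (t * n) := by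
        rw [← Real.exp_nat_mul, mul_comm]
      rw [mul_pow, hpow, poissonPMFReal]
      ring
    rw [heq] at h
    have hval : Real.exp (-(r : ℝ)) * NormedSpace.exp ((r : ℝ) * Real.exp t)
        = Real.exp ((r : ℝ) * (Real.exp t - 1)) := by
      rw [← Real.exp_eq_exp_ℝ, ← Real.exp_add]
      ring_nf
    rwa [hval] at h
  calc ∑' n : ℕ, ENNReal.ofReal (Real.exp (t * n)) * poissonMeasure r {n}
      = ∑' n : ℕ, ENNReal.ofReal (Real.exp (t * n) * poissonPMFReal r n) := by
        refine tsum_congr fun n => ?_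
        rw [h1 n, ← ENNReal.ofReal_mul (Real.exp_pos _).le]
    _ = ENNReal.ofReal (∑' n : ℕ, Real.exp (t * n) * poissonPMFReal r n) :=
        (ENNReal.ofReal_tsum_of_nonneg
          (fun n => mul_nonneg (Real.exp_pos _).le poissonPMFReal_nonneg)
          hsum.summable).symm
    _ = _ := by rw [hsum.tsum_eq]

lemma geom_half_sum_le (n : ℕ) : ∑ j ∈ Finset.range n, (1 / 2 : ℝ) ^ (j + 1) ≤ 1 := by
  have h : ∀ m : ℕ, ∑ j ∈ Finset.range m, (1 / 2 : ℝ) ^ (j + 1) = 1 - (1 / 2 : ℝ) ^ m := by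
    intro m
    induction m with
    | zero => simp
    | succ m ih => rw [Finset.sum_range_succ, ih]; ring
  rw [h n]
  have : (0 : ℝ) ≤ (1 / 2 : ℝ) ^ n := by positivity
  linarith

/-- Let `Z 0, Z 1, …` (representing `Z_1, Z_2, …`) be independent Poisson random variables,
where `Z j` (i.e. `Z_{j+1}`) has mean `lam j ≤ (α/(j+1))·(1/(2e))^{j+1}` for some `α > 0`.
Then `E[exp (Σ_{j≥1} j·Z_j)] ≤ e^α`, and hence for every `k`,
`P[Σ_{j≥1} j·Z_j ≥ k] ≤ exp (α − k)`. -/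
theorem poisson_sum_exp_moment_bound
    {Ω : Type*} [MeasurableSpace Ω] (μpr : Measure Ω) [IsProbabilityMeasure μpr]
    (α : ℝ) (hα : 0 < α) (lam : ℕ → ℝ≥0) (Z : ℕ → Ω → ℕ)
    (hmeas : ∀ j, Measurable (Z j))
    (hindep : iIndepFun Z μpr)
    (hdist : ∀ j, Measure.map (Z j) μpr = poissonMeasure (lam j))
    (hlam : ∀ j : ℕ,
      (lam j : ℝ) ≤ (α / (j + 1)) * (1 / (2 * Real.exp 1)) ^ (j + 1)) :
    (∫⁻ ω, expENN (∑' j : ℕ, ((j : ℝ≥0∞) + 1) * (Z j ω : ℝ≥0∞)) ∂μpr)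
        ≤ ENNReal.ofReal (Real.exp α) ∧
      ∀ k : ℕ,
        μpr {ω | (k : ℝ≥0∞) ≤ ∑' j : ℕ, ((j : ℝ≥0∞) + 1) * (Z j ω : ℝ≥0∞)}
          ≤ ENNReal.ofReal (Real.exp (α - k)) := by

  classical
  -- the per-coordinate exponential factors
  set g : ℕ → ℕ → ℝ≥0∞ :=
    fun j m => ENNReal.ofReal (Real.exp (((j : ℝ) + 1) * m)) with hg
  have hgmeas : ∀ j, Measurable (g j) := fun j => measurable_from_top
  set W : ℕ → Ω → ℝ≥0∞ := fun j => g j ∘ Z j with hW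
  have hWmeas : ∀ j, Measurable (W j) := fun j => (hgmeas j).comp (hmeas j)
  have hWindep : iIndepFun W μpr := hindep.comp g hgmeas
  -- value of each factor
  have hfactor : ∀ j, ∫⁻ ω, W j ω ∂μpr
      = ENNReal.ofReal (Real.exp ((lam j : ℝ) * (Real.exp ((j : ℝ) + 1) - 1))) := by
    intro j
    have : ∫⁻ ω, W j ω ∂μpr = ∫⁻ m, g j m ∂(Measure.map (Z j) μpr) :=
      (lintegral_map (hgmeas j) (hmeas j)).symm
    rw [this, hdist j]
    exact lintegral_exp_poisson (lam j) ((j : ℝ) + 1)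
  -- product over a range equals product of integrals
  have hprod : ∀ n, ∫⁻ ω, ∏ j ∈ Finset.range n, W j ω ∂μpr
      = ∏ j ∈ Finset.range n, ∫⁻ ω, W j ω ∂μpr := by
    intro n
    induction n with
    | zero => simp
    | succ n ih =>
      have hip : IndepFun (∏ j ∈ Finset.range n, W j) (W n) μpr :=
        hWindep.indepFun_prod_range_succ hWmeas n
      have hmp : Measurable fun ω => ∏ j ∈ Finset.range n, W j ω :=
        Finset.measurable_prod _ fun j _ => hWmeas j
      have hip' : IndepFun (fun ω => ∏ j ∈ Finset.range n, W j ω) (W n) μpr := by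
        have : (∏ j ∈ Finset.range n, W j) = fun ω => ∏ j ∈ Finset.range n, W j ω := by
          funext ω; simp [Finset.prod_apply]
        rwa [this] at hip
      calc ∫⁻ ω, ∏ j ∈ Finset.range (n + 1), W j ω ∂μpr
          = ∫⁻ ω, (∏ j ∈ Finset.range n, W j ω) * W n ω ∂μpr := by
            simp [Finset.prod_range_succ]
        _ = (∫⁻ ω, ∏ j ∈ Finset.range n, W j ω ∂μpr) * ∫⁻ ω, W n ω ∂μpr :=
            lintegral_mul_eq_lintegral_mul_lintegral_of_indepFun''
              hmp.aemeasurable (hWmeas n).aemeasurable hip'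
        _ = ∏ j ∈ Finset.range (n + 1), ∫⁻ ω, W j ω ∂μpr := by
            rw [ih, Finset.prod_range_succ]
  -- bound on the sum of the exponents
  have hterm : ∀ j : ℕ, (lam j : ℝ) * (Real.exp ((j : ℝ) + 1) - 1) ≤ α * (1 / 2) ^ (j + 1) := by
    intro j
    have hexp1 : (0 : ℝ) < Real.exp 1 := Real.exp_pos 1
    have hepow : Real.exp ((j : ℝ) + 1) = Real.exp 1 ^ (j + 1) := by
      rw [← Real.exp_nat_mul]
      norm_num
    have h1 : (lam j : ℝ) * (Real.exp ((j : ℝ) + 1) - 1)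
        ≤ (lam j : ℝ) * Real.exp ((j : ℝ) + 1) := by
      have : (0 : ℝ) ≤ (lam j : ℝ) := (lam j).coe_nonneg
      nlinarith [Real.exp_pos ((j : ℝ) + 1)]
    have h2 : (lam j : ℝ) * Real.exp ((j : ℝ) + 1)
        ≤ (α / (j + 1)) * (1 / (2 * Real.exp 1)) ^ (j + 1) * Real.exp ((j : ℝ) + 1) :=
      mul_le_mul_of_nonneg_right (hlam j) (Real.exp_pos _).le
    have h3 : (α / (j + 1)) * (1 / (2 * Real.exp 1)) ^ (j + 1) * Real.exp ((j : ℝ) + 1)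
        = (α / (j + 1)) * (1 / 2) ^ (j + 1) := by
      rw [hepow, mul_assoc, ← mul_pow]
      congr 2
      field_simp
    have h4 : (α / ((j : ℝ) + 1)) ≤ α := by
      apply div_le_self hα.le
      have : (0 : ℝ) ≤ (j : ℝ) := Nat.cast_nonneg j
      linarith
    have h5 : (α / ((j : ℝ) + 1)) * (1 / 2 : ℝ) ^ (j + 1) ≤ α * (1 / 2) ^ (j + 1) :=
      mul_le_mul_of_nonneg_right h4 (by positivity)
    calc (lam j : ℝ) * (Real.exp ((j : ℝ) + 1) - 1)
        ≤ (α / (j + 1)) * (1 / (2 * Real.exp 1)) ^ (j + 1) * Real.exp ((j : ℝ) + 1) :=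
          h1.trans h2
      _ = (α / ((j : ℝ) + 1)) * (1 / 2) ^ (j + 1) := h3
      _ ≤ α * (1 / 2) ^ (j + 1) := h5
  have hsumle : ∀ n, ∑ j ∈ Finset.range n, (lam j : ℝ) * (Real.exp ((j : ℝ) + 1) - 1) ≤ α := by
    intro n
    calc ∑ j ∈ Finset.range n, (lam j : ℝ) * (Real.exp ((j : ℝ) + 1) - 1)
        ≤ ∑ j ∈ Finset.range n, α * (1 / 2 : ℝ) ^ (j + 1) :=
          Finset.sum_le_sum fun j _ => hterm j
      _ = α * ∑ j ∈ Finset.range n, (1 / 2 : ℝ) ^ (j + 1) := by rw [Finset.mul_sum]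
      _ ≤ α * 1 := mul_le_mul_of_nonneg_left (geom_half_sum_le n) hα.le
      _ = α := mul_one α
  -- each truncated integral is bounded
  have hbound : ∀ n, ∫⁻ ω, ∏ j ∈ Finset.range n, W j ω ∂μpr
      ≤ ENNReal.ofReal (Real.exp α) := by
    intro n
    rw [hprod n]
    have : ∏ j ∈ Finset.range n, ∫⁻ ω, W j ω ∂μpr
        = ENNReal.ofReal
          (Real.exp (∑ j ∈ Finset.range n, (lam j : ℝ) * (Real.exp ((j : ℝ) + 1) - 1))) := by
      rw [Real.exp_sum, ENNReal.ofReal_prod_of_nonneg fun j _ => (Real.exp_pos _).le]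
      exact Finset.prod_congr rfl fun j _ => hfactor j
    rw [this]
    exact ENNReal.ofReal_le_ofReal (Real.exp_le_exp.mpr (hsumle n))
  -- partial sums
  set S : Ω → ℝ≥0∞ := fun ω => ∑' j : ℕ, ((j : ℝ≥0∞) + 1) * (Z j ω : ℝ≥0∞) with hSdef
  set Sn : ℕ → Ω → ℝ≥0∞ :=
    fun n ω => ∑ j ∈ Finset.range n, ((j : ℝ≥0∞) + 1) * (Z j ω : ℝ≥0∞) with hSn
  have hSnmeas : ∀ n, Measurable (Sn n) := by
    intro n
    apply Finset.measurable_sum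
    intro j _
    exact (measurable_from_top.comp (hmeas j)).const_mul _
  have hSnmono : ∀ ω, Monotone fun n => Sn n ω := by
    intro ω a b hab
    exact Finset.sum_le_sum_of_subset (Finset.range_subset_range.mpr hab)
  have hSsup : ∀ ω, S ω = ⨆ n, Sn n ω := fun ω => ENNReal.tsum_eq_iSup_nat
  have hSmeas : Measurable S :=
    Measurable.ennreal_tsum fun j => (measurable_from_top.comp (hmeas j)).const_mul _
  -- expENN of partial sums is the product of the W's
  have hpart : ∀ n ω, expENN (Sn n ω) = ∏ j ∈ Finset.range n, W j ω := by
    intro n ω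
    have hterm' : ∀ j : ℕ, ((j : ℝ≥0∞) + 1) * (Z j ω : ℝ≥0∞)
        = ENNReal.ofReal (((j : ℝ) + 1) * (Z j ω : ℝ)) := by
      intro j
      rw [ENNReal.ofReal_mul (by positivity), ENNReal.ofReal_add (Nat.cast_nonneg j) zero_le_one,
        ENNReal.ofReal_natCast, ENNReal.ofReal_one, ENNReal.ofReal_natCast]
    have hsum' : Sn n ω
        = ENNReal.ofReal (∑ j ∈ Finset.range n, ((j : ℝ) + 1) * (Z j ω : ℝ)) := by
      rw [ENNReal.ofReal_sum_of_nonneg fun j _ => by positivity]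
      exact Finset.sum_congr rfl fun j _ => hterm' j
    rw [hsum', expENN_ofReal (Finset.sum_nonneg fun j _ => by positivity), Real.exp_sum,
      ENNReal.ofReal_prod_of_nonneg fun j _ => (Real.exp_pos _).le]
    rfl
  -- part 1
  have hE : (∫⁻ ω, expENN (S ω) ∂μpr) ≤ ENNReal.ofReal (Real.exp α) := by
    have h1 : ∀ ω, expENN (S ω) = ⨆ n, expENN (Sn n ω) := by
      intro ω
      rw [hSsup ω, expENN_iSup (hSnmono ω)]
    calc ∫⁻ ω, expENN (S ω) ∂μpr = ∫⁻ ω, ⨆ n, expENN (Sn n ω) ∂μpr :=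
          lintegral_congr h1
      _ = ⨆ n, ∫⁻ ω, expENN (Sn n ω) ∂μpr := by
          refine lintegral_iSup (fun n => measurable_expENN.comp (hSnmeas n)) ?_
          exact fun a b hab ω => expENN_mono (hSnmono ω hab)
      _ ≤ ENNReal.ofReal (Real.exp α) := by
          refine iSup_le fun n => ?_
          have : ∫⁻ ω, expENN (Sn n ω) ∂μpr = ∫⁻ ω, ∏ j ∈ Finset.range n, W j ω ∂μpr :=
            lintegral_congr fun ω => hpart n ω
          rw [this]
          exact hbound n
  refine ⟨hE, fun k => ?_⟩
  -- Markov / Chernoff step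
  have hek : expENN ((k : ℝ≥0∞)) = ENNReal.ofReal (Real.exp (k : ℝ)) := by
    rw [← ENNReal.ofReal_natCast k, expENN_ofReal (Nat.cast_nonneg k)]
  have hsubset : {ω | (k : ℝ≥0∞) ≤ S ω}
      ⊆ {ω | ENNReal.ofReal (Real.exp (k : ℝ)) ≤ expENN (S ω)} := by
    intro ω hω
    have := expENN_mono hω
    rwa [hek] at this
  have hmarkov := mul_meas_ge_le_lintegral₀
    (μ := μpr) (measurable_expENN.comp hSmeas).aemeasurable
    (ENNReal.ofReal (Real.exp (k : ℝ)))
  have h2 : ENNReal.ofReal (Real.exp (k : ℝ)) * μpr {ω | (k : ℝ≥0∞) ≤ S ω}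
      ≤ ENNReal.ofReal (Real.exp α) :=
    le_trans (le_trans (mul_le_mul_right (measure_mono hsubset) _) hmarkov) hE
  have hk0 : ENNReal.ofReal (Real.exp (k : ℝ)) ≠ 0 := by
    simp [ENNReal.ofReal_eq_zero, not_le, Real.exp_pos]
  have h3 : μpr {ω | (k : ℝ≥0∞) ≤ S ω}
      ≤ ENNReal.ofReal (Real.exp α) / ENNReal.ofReal (Real.exp (k : ℝ)) := by
    rw [ENNReal.le_div_iff_mul_le (Or.inl hk0) (Or.inl ENNReal.ofReal_ne_top)]
    rwa [mul_comm]
  calc μpr {ω | (k : ℝ≥0∞) ≤ S ω}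
      ≤ ENNReal.ofReal (Real.exp α) / ENNReal.ofReal (Real.exp (k : ℝ)) := h3
    _ = ENNReal.ofReal (Real.exp α / Real.exp (k : ℝ)) :=
        (ENNReal.ofReal_div_of_pos (Real.exp_pos _)).symm
    _ = ENNReal.ofReal (Real.exp (α - k)) := by rw [Real.exp_sub]
end

section
/- With the setup of the dyadic-tree embeddings: fix l ≥ 6, scales L_n = L_0 l^n, and 𝒯 ∈ Λ_n. Then for every k ≥ 0 and every leaf m ∈ T_{(n)}, the number of leaves m' ∈ T_{(n)} with ‖𝒯(m') − 𝒯(m)‖_∞ ≤ ((l−5)/(l−1))·L_{k+1} is at most 2^k. -/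
/-- ℓ∞ norm on `ℤ^d`. -/
def linf {d : ℕ} (x : Fin d → ℤ) : ℕ := Finset.univ.sup fun i => (x i).natAbs

/-- Vertices of the dyadic tree of depth `n`: binary words of length at most `n`. -/
def TreeVert (n : ℕ) := {l : List (Fin 2) // l.length ≤ n}

/-- The set `Λ_n` of embeddings `𝒯` of the depth-`n` dyadic tree into `ℤ^d`:
`𝒯(∅) = 0`; `𝒯(m) ∈ L_{n-k} ℤ^d` for `m` at depth `k` (where `L_j = L₀ l^j`); and
`‖𝒯(mi) − 𝒯(m)‖_∞ = i · L_{n-k}` for `m` at depth `k` and child label `i ∈ {1,2}`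
(a label `i : Fin 2` stands for the digit `i+1`). -/
def Lam (d n L₀ l : ℕ) : Set (TreeVert n → (Fin d → ℤ)) :=
  {T | T ⟨[], by simp⟩ = 0 ∧
    (∀ m : TreeVert n, ∀ i : Fin d,
      ((L₀ * l ^ (n - m.1.length) : ℕ) : ℤ) ∣ T m i) ∧
    ∀ (m : TreeVert n) (hm : m.1.length < n) (i : Fin 2),
      linf (T ⟨m.1 ++ [i], by simpa using hm⟩ - T m)
        = (i.1 + 1) * (L₀ * l ^ (n - m.1.length))}

lemma linf_zero {d : ℕ} : linf (0 : Fin d → ℤ) = 0 := by simp [linf]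
lemma linf_neg {d : ℕ} (x : Fin d → ℤ) : linf (-x) = linf x := by simp [linf]
lemma linf_sub_comm {d : ℕ} (x y : Fin d → ℤ) : linf (x - y) = linf (y - x) := by
  rw [← linf_neg (x - y), neg_sub]
lemma linf_add_le {d : ℕ} (x y : Fin d → ℤ) : linf (x + y) ≤ linf x + linf y := by
  unfold linf
  refine Finset.sup_le fun i _ => ?_
  exact (Int.natAbs_add_le _ _).trans
    (add_le_add (Finset.le_sup (f := fun j => (x j).natAbs) (Finset.mem_univ i))
      (Finset.le_sup (f := fun j => (y j).natAbs) (Finset.mem_univ i)))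
lemma linf_triangle {d : ℕ} (x y z : Fin d → ℤ) :
    linf (x - z) ≤ linf (x - y) + linf (y - z) := by
  have := linf_add_le (x - y) (y - z)
  simpa using this

lemma take_len {n : ℕ} (w : List (Fin 2)) (hw : w.length = n) (j : ℕ) :
    (w.take j).length ≤ n := by rw [List.length_take, hw]; omega

/-- Distance from a leaf to its depth-`(n-t)` ancestor. -/
lemma ancestor_bound (d n L₀ l : ℕ) (T : TreeVert n → (Fin d → ℤ)) (hT : T ∈ Lam d n L₀ l)
    (w : List (Fin 2)) (hw : w.length = n) :
    ∀ t, t ≤ n →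
      linf (T ⟨w, hw.le⟩ - T ⟨w.take (n - t), take_len w hw _⟩)
        ≤ 2 * ∑ s ∈ Finset.range t, L₀ * l ^ (s + 1) := by
  obtain ⟨-, -, hstep⟩ := hT
  intro t
  induction t with
  | zero =>
    intro _
    have : w.take (n - 0) = w := by
      rw [Nat.sub_zero, ← hw, List.take_length]
    rw [show (⟨w.take (n - 0), take_len w hw _⟩ : TreeVert n) = ⟨w, hw.le⟩ from
      Subtype.ext this]
    simp [linf_zero]
  | succ t IH =>
    intro ht
    have hIH := IH (by omega)
    set j := n - (t + 1) with hj
    have hjn : j < n := by omega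
    have hlenj : (w.take j).length = j := by rw [List.length_take]; omega
    have hjlt : j < w.length := by omega
    -- child = take (j+1)
    have hchild : w.take j ++ [w[j]] = w.take (j + 1) := List.take_concat_get' w j hjlt
    have hstep' := hstep ⟨w.take j, take_len w hw _⟩ (by rw [hlenj]; exact hjn) (w[j])
    have hexp : n - (w.take j).length = t + 1 := by rw [hlenj]; omega
    rw [hexp] at hstep'
    have hceq : (⟨(w.take j) ++ [w[j]], by rw [List.length_append, hlenj]; simpa using hjn⟩ : TreeVert n)
        = ⟨w.take (j + 1), take_len w hw _⟩ := Subtype.ext hchild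
    rw [hceq] at hstep'
    have hstepLe : linf (T ⟨w.take (j + 1), take_len w hw _⟩ - T ⟨w.take j, take_len w hw _⟩)
        ≤ 2 * (L₀ * l ^ (t + 1)) := by
      rw [hstep']
      have h2 : (w[j]).1 + 1 ≤ 2 := by omega
      exact Nat.mul_le_mul h2 le_rfl
    have hprev : (⟨w.take (n - t), take_len w hw _⟩ : TreeVert n)
        = ⟨w.take (j + 1), take_len w hw _⟩ := Subtype.ext (by rw [show n - t = j + 1 by omega])
    rw [hprev] at hIH
    calc linf (T ⟨w, hw.le⟩ - T ⟨w.take j, take_len w hw _⟩)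
        ≤ linf (T ⟨w, hw.le⟩ - T ⟨w.take (j + 1), take_len w hw _⟩)
          + linf (T ⟨w.take (j + 1), take_len w hw _⟩ - T ⟨w.take j, take_len w hw _⟩) :=
          linf_triangle _ _ _
      _ ≤ 2 * ∑ s ∈ Finset.range t, L₀ * l ^ (s + 1) + 2 * (L₀ * l ^ (t + 1)) :=
          add_le_add hIH hstepLe
      _ = 2 * ∑ s ∈ Finset.range (t + 1), L₀ * l ^ (s + 1) := by
          rw [Finset.sum_range_succ]; ring

/-- Two distinct children of a vertex are far apart. -/
lemma sibling_sep (d n L₀ l : ℕ) (T : TreeVert n → (Fin d → ℤ)) (hT : T ∈ Lam d n L₀ l)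
    (a : List (Fin 2)) (p : ℕ) (ha : a.length = p) (hp : p < n) (i j : Fin 2) (hij : i ≠ j)
    (hi : (a ++ [i]).length ≤ n) (hj : (a ++ [j]).length ≤ n) :
    L₀ * l ^ (n - p) ≤ linf (T ⟨a ++ [i], hi⟩ - T ⟨a ++ [j], hj⟩) := by
  obtain ⟨-, -, hstep⟩ := hT
  have han : a.length ≤ n := by omega
  have key : ∀ i j : Fin 2, (i : ℕ) = 0 → (j : ℕ) = 1 → ∀ hi hj,
      L₀ * l ^ (n - p) ≤ linf (T ⟨a ++ [i], hi⟩ - T ⟨a ++ [j], hj⟩) := by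
    intro i j hi0 hj1 hi hj
    have hi' := hstep ⟨a, han⟩ (by simpa [ha] using hp) i
    have hj' := hstep ⟨a, han⟩ (by simpa [ha] using hp) j
    simp only [ha, hi0, hj1] at hi' hj'
    have htri := linf_triangle (T ⟨a ++ [j], hj⟩) (T ⟨a ++ [i], hi⟩) (T ⟨a, han⟩)
    rw [hj', hi'] at htri
    have := linf_sub_comm (T ⟨a ++ [j], hj⟩) (T ⟨a ++ [i], hi⟩)
    omega
  fin_cases i <;> fin_cases j
  · exact absurd rfl hij
  · exact key _ _ rfl rfl _ _
  · rw [linf_sub_comm]; exact key _ _ rfl rfl _ _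
  · exact absurd rfl hij

lemma geom_id (x : ℝ) : ∀ j : ℕ, (x - 1) * ∑ s ∈ Finset.range j, x ^ (s + 1) = x ^ (j + 1) - x := by
  intro j
  induction j with
  | zero => simp
  | succ j IH =>
    rw [Finset.sum_range_succ, mul_add, IH]
    ring

/-- Core: two leaves diverging before depth `n - k` are farther than the threshold. -/
lemma core_sep (d n L₀ l k : ℕ) (hL₀ : 1 ≤ L₀) (hl : 6 ≤ l)
    (T : TreeVert n → (Fin d → ℤ)) (hT : T ∈ Lam d n L₀ l)
    (w w' : List (Fin 2)) (hw : w.length = n) (hw' : w'.length = n)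
    (p : ℕ) (hpk : p + k < n) (htake : w.take p = w'.take p)
    (hne : w[p]'(by omega) ≠ w'[p]'(by omega)) :
    ¬ ((linf (T ⟨w', hw'.le⟩ - T ⟨w, hw.le⟩) : ℝ)
        ≤ (((l : ℝ) - 5) / ((l : ℝ) - 1)) * (L₀ * l ^ (k + 1))) := by
  intro hbound
  set k' := n - p - 1 with hk'
  have hpn : p < n := by omega
  have hkk' : k ≤ k' := by omega
  have hplt : p < w.length := by omega
  have hplt' : p < w'.length := by omega
  have hk'n : k' ≤ n := by omega
  have hnk : n - k' = p + 1 := by omega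
  have hnp : n - p = k' + 1 := by omega
  have hlen1 : (w.take p ++ [w[p]'hplt]).length ≤ n := by
    simp [List.length_take]; omega
  have hlen2 : (w.take p ++ [w'[p]'hplt']).length ≤ n := by
    simp [List.length_take]; omega
  have hlentp : (w.take p).length = p := by rw [List.length_take]; omega
  have hc1 : w.take p ++ [w[p]'hplt] = w.take (p + 1) :=
    List.take_concat_get' w p hplt
  have hc2 : w.take p ++ [w'[p]'hplt'] = w'.take (p + 1) := by
    rw [htake]; exact List.take_concat_get' w' p hplt'
  have hsib := sibling_sep d n L₀ l T hT (w.take p) p hlentp hpn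
    (w'[p]'hplt') (w[p]'hplt) (Ne.symm hne) hlen2 hlen1
  have e2 : T ⟨w.take p ++ [w'[p]'hplt'], hlen2⟩
      = T ⟨w'.take (p + 1), take_len w' hw' (p + 1)⟩ := congrArg T (Subtype.ext hc2)
  have e1 : T ⟨w.take p ++ [w[p]'hplt], hlen1⟩
      = T ⟨w.take (p + 1), take_len w hw (p + 1)⟩ := congrArg T (Subtype.ext hc1)
  rw [e1, e2, hnp] at hsib
  -- ancestor bounds
  have hanc1 := ancestor_bound d n L₀ l T hT w hw k' hk'n
  have hanc2 := ancestor_bound d n L₀ l T hT w' hw' k' hk'n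
  rw [hnk] at hanc1 hanc2
  -- triangle chain
  set S := ∑ s ∈ Finset.range k', L₀ * l ^ (s + 1) with hS
  have hchain : L₀ * l ^ (k' + 1) ≤ linf (T ⟨w', hw'.le⟩ - T ⟨w, hw.le⟩) + 4 * S := by
    have t1 := linf_triangle (T ⟨w'.take (p+1), take_len w' hw' (p+1)⟩) (T ⟨w', hw'.le⟩)
      (T ⟨w.take (p+1), take_len w hw (p+1)⟩)
    have t2 := linf_triangle (T ⟨w', hw'.le⟩) (T ⟨w, hw.le⟩)
      (T ⟨w.take (p+1), take_len w hw (p+1)⟩)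
    have e3 : linf (T ⟨w'.take (p+1), take_len w' hw' (p+1)⟩ - T ⟨w', hw'.le⟩)
        = linf (T ⟨w', hw'.le⟩ - T ⟨w'.take (p+1), take_len w' hw' (p+1)⟩) := linf_sub_comm _ _
    have e4 : linf (T ⟨w, hw.le⟩ - T ⟨w.take (p+1), take_len w hw (p+1)⟩)
        = linf (T ⟨w.take (p+1), take_len w hw (p+1)⟩ - T ⟨w, hw.le⟩) := linf_sub_comm _ _
    set A := linf (T ⟨w', hw'.le⟩ - T ⟨w, hw.le⟩)
    set B := linf (T ⟨w'.take (p+1), take_len w' hw' (p+1)⟩ - T ⟨w.take (p+1), take_len w hw (p+1)⟩)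
    set C1 := linf (T ⟨w', hw'.le⟩ - T ⟨w'.take (p+1), take_len w' hw' (p+1)⟩)
    set C2 := linf (T ⟨w, hw.le⟩ - T ⟨w.take (p+1), take_len w hw (p+1)⟩)
    set C3 := linf (T ⟨w'.take (p+1), take_len w' hw' (p+1)⟩ - T ⟨w', hw'.le⟩)
    set C4 := linf (T ⟨w', hw'.le⟩ - T ⟨w.take (p+1), take_len w hw (p+1)⟩)
    set C5 := linf (T ⟨w.take (p+1), take_len w hw (p+1)⟩ - T ⟨w, hw.le⟩)
    omega
  generalize hLi : linf (T ⟨w', hw'.le⟩ - T ⟨w, hw.le⟩) = Li at hbound hchain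
  generalize hSg : S = S₀ at hchain hS
  -- pass to ℝ and derive a contradiction
  have hxR : (6 : ℝ) ≤ (l : ℝ) := by exact_mod_cast hl
  have hx1 : (0 : ℝ) < (l : ℝ) - 1 := by linarith
  have hCR : (1 : ℝ) ≤ (L₀ : ℝ) := by exact_mod_cast hL₀
  have hSR : (S₀ : ℝ) = (L₀ : ℝ) * ∑ s ∈ Finset.range k', (l : ℝ) ^ (s + 1) := by
    rw [hS]; push_cast [Finset.mul_sum]; ring
  have hchainR : (L₀ : ℝ) * (l : ℝ) ^ (k' + 1)
      ≤ (Li : ℝ) + 4 * (S₀ : ℝ) := by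
    exact_mod_cast hchain
  have hgeom := geom_id (l : ℝ) k'
  have hpow : ((l : ℝ)) ^ (k + 1) ≤ ((l : ℝ)) ^ (k' + 1) :=
    pow_le_pow_right₀ (by linarith) (by omega)
  have hbound' : (Li : ℝ) * ((l : ℝ) - 1)
      ≤ ((l : ℝ) - 5) * ((L₀ : ℝ) * (l : ℝ) ^ (k + 1)) := by
    rw [div_mul_eq_mul_div, le_div_iff₀ hx1] at hbound
    convert hbound using 2 <;> push_cast <;> ring
  have hlinf0 : (0 : ℝ) ≤ (Li : ℝ) := Nat.cast_nonneg _
  clear hbound hsib hanc1 hanc2 hLi e1 e2 hc1 hc2 hlen1 hlen2 hlentp htake hne hT T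
  nlinarith [mul_le_mul_of_nonneg_right hchainR (le_of_lt hx1),
    mul_le_mul_of_nonneg_left hpow (show (0:ℝ) ≤ ((l:ℝ) - 5) * (L₀:ℝ) by nlinarith),
    hgeom, hSR, hCR, hxR, hbound']

/-- Separation of leaves of a tree embedding: for `l ≥ 6`, `𝒯 ∈ Λ_n`, every `k ≥ 0` and every
leaf `m` (depth `n`), the number of leaves `m'` with
`‖𝒯(m') − 𝒯(m)‖_∞ ≤ ((l−5)/(l−1))·L_{k+1}` is at most `2^k`. -/
theorem Lam_leaf_separation (d n L₀ l : ℕ) (hd : 1 ≤ d) (hL₀ : 1 ≤ L₀) (hl : 6 ≤ l)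
    (T : TreeVert n → (Fin d → ℤ)) (hT : T ∈ Lam d n L₀ l)
    (k : ℕ) (m : TreeVert n) (hm : m.1.length = n) :
    Set.ncard {m' : TreeVert n | m'.1.length = n ∧
        (linf (T m' - T m) : ℝ) ≤ (((l : ℝ) - 5) / ((l : ℝ) - 1)) * (L₀ * l ^ (k + 1))}
      ≤ 2 ^ k := by
  classical
  set st := {m' : TreeVert n | m'.1.length = n ∧
      (linf (T m' - T m) : ℝ) ≤ (((l : ℝ) - 5) / ((l : ℝ) - 1)) * (L₀ * l ^ (k + 1))} with hst
  have prefixlem : ∀ (w' : List (Fin 2)) (hw' : w'.length = n),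
      ((linf (T ⟨w', hw'.le⟩ - T m) : ℝ)
        ≤ (((l : ℝ) - 5) / ((l : ℝ) - 1)) * (L₀ * l ^ (k + 1))) →
      ∀ p, ∀ hp : p + k < n, w'[p]'(by omega) = m.1[p]'(by omega) := by
    intro w' hw' hb p
    induction p using Nat.strong_induction_on with
    | _ p IH =>
      intro hp
      by_contra hne
      have hlt : (List.take p m.1).length = (List.take p w').length := by
        rw [List.length_take, List.length_take, hm, hw']
      have htake : m.1.take p = w'.take p := by
        refine List.ext_getElem hlt fun q hq1 hq2 => ?_
        have hq : q < p := by
          rw [List.length_take] at hq1; omega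
        rw [List.getElem_take, List.getElem_take]
        exact (IH q hq (by omega)).symm
      have hmeta : T ⟨m.1, hm.le⟩ = T m := congrArg T (Subtype.ext rfl)
      exact core_sep d n L₀ l k hL₀ hl T hT m.1 w' hm hw' p hp htake
        (fun h => hne h.symm) (by rw [hmeta]; exact hb)
  set f : TreeVert n → (Fin k → Fin 2) := fun m' i => m'.1.getD (n - k + i) 0 with hf
  have hinj : Set.InjOn f st := by
    rintro m₁ ⟨h₁len, h₁b⟩ m₂ ⟨h₂len, h₂b⟩ hfe
    apply Subtype.ext
    refine List.ext_getElem (by rw [h₁len, h₂len]) fun j hj1 hj2 => ?_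
    by_cases hcase : j + k < n
    · rw [prefixlem m₁.1 h₁len h₁b j hcase, prefixlem m₂.1 h₂len h₂b j hcase]
    · have hjn : j < n := by rw [← h₁len]; exact hj1
      have hik : j - (n - k) < k := by omega
      have hthis := congrFun hfe ⟨j - (n - k), hik⟩
      simp only [f] at hthis
      have hidx : n - k + (j - (n - k)) = j := by omega
      rw [hidx] at hthis
      rw [List.getD_eq_getElem (m₁.1) 0 (show j < m₁.1.length by omega),
        List.getD_eq_getElem (m₂.1) 0 (show j < m₂.1.length by omega)] at hthis
      exact hthis
  calc st.ncard = (f '' st).ncard := (Set.ncard_image_of_injOn hinj).symm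
    _ ≤ (Set.univ : Set (Fin k → Fin 2)).ncard :=
        Set.ncard_le_ncard (Set.subset_univ _) Set.finite_univ
    _ = 2 ^ k := by simp [Set.ncard_univ, Nat.card_eq_fintype_card]
end

section
/- Stochastic domination of the loop-soup vacant set by Bernoulli percolation: the vacant set V^α of the random walk loop soup on Z^d at intensity α is stochastically dominated by Bernoulli site percolation with parameter exp(−α/(4d²)); in particular, for each x ∈ Z^d, P[x ∈ V^α] ≤ exp(−α/(4d²)). -/
open MeasureTheory ProbabilityTheory
open scoped ENNReal NNReal Classical

/-- ℓ¹ norm on `ℤ^d`. -/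
def lone {d : ℕ} (x : Fin d → ℤ) : ℕ := ∑ i, (x i).natAbs

/-- A (non-trivial discrete) based loop in `ℤ^d`: a nearest-neighbor path `(x₁,…,x_n)` with
`x_n` a neighbor of `x₁`. -/
def IsBasedLoop {d : ℕ} (p : List (Fin d → ℤ)) : Prop :=
  2 ≤ p.length ∧ (∀ i, i + 1 < p.length → lone (p.getD (i + 1) 0 - p.getD i 0) = 1) ∧
    lone (p.getD 0 0 - p.getD (p.length - 1) 0) = 1

/-- The based-loop measure `μ̇((x₁,…,x_n)) = (1/n)·(1/(2d))^n`, as an `ℝ≥0`. -/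
noncomputable def loopWeight {d : ℕ} (p : List (Fin d → ℤ)) : ℝ≥0 :=
  ((p.length : ℝ≥0))⁻¹ * ((2 * d : ℝ≥0))⁻¹ ^ p.length

/-- The vacant set of a loop configuration `N` (occupation numbers of based loops): vertices
visited by no loop present in the configuration. -/
def vacantSet {d : ℕ} (N : List (Fin d → ℤ) → ℕ) : Set (Fin d → ℤ) :=
  {x | ∀ p, IsBasedLoop p → 0 < N p → x ∉ p}

/-- The `{0,1}`-valued vacancy field of a configuration. -/
noncomputable def vacField {d : ℕ} (N : List (Fin d → ℤ) → ℕ) : (Fin d → ℤ) → Bool :=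
  fun x => if x ∈ vacantSet N then true else false

section Aux

variable {d : ℕ}

/-- The first unit vector in `ℤ^d`. -/
def eV (d : ℕ) : Fin d → ℤ := fun i => if (i : ℕ) = 0 then 1 else 0

lemma lone_eV (hd : 0 < d) : lone (eV d) = 1 := by
  unfold lone eV
  rw [Finset.sum_eq_single (⟨0, hd⟩ : Fin d)]
  · simp
  · intro b _ hb
    have hb' : (b : ℕ) ≠ 0 := fun h => hb (Fin.ext h)
    simp [hb']
  · intro h; exact absurd (Finset.mem_univ _) h

lemma lone_neg (x : Fin d → ℤ) : lone (-x) = lone x := by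
  unfold lone; simp

lemma isBasedLoop_pair (a b : Fin d → ℤ) (h : lone (b - a) = 1) :
    IsBasedLoop [a, b] := by
  refine ⟨by simp, ?_, ?_⟩
  · intro i hi
    have hi2 : i = 0 := by simp at hi; omega
    subst hi2
    have h01 : (0:ℕ) + 1 = 1 := rfl
    simp only [h01, List.getD_cons_succ, List.getD_cons_zero]
    exact h
  · have hlen : [a, b].length - 1 = 1 := rfl
    have hab : a - b = -(b - a) := by ring
    simp only [hlen, List.getD_cons_succ, List.getD_cons_zero]
    rw [hab, lone_neg]
    exact h

/-- the two length-2 based loops attached to a vertex -/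
def q1 (d : ℕ) (x : Fin d → ℤ) : List (Fin d → ℤ) := [x, x + eV d]
def q2 (d : ℕ) (x : Fin d → ℤ) : List (Fin d → ℤ) := [x + eV d, x]

lemma isBasedLoop_q1 (hd : 0 < d) (x : Fin d → ℤ) : IsBasedLoop (q1 d x) :=
  isBasedLoop_pair _ _ (by simpa using lone_eV hd)

lemma isBasedLoop_q2 (hd : 0 < d) (x : Fin d → ℤ) : IsBasedLoop (q2 d x) := by
  apply isBasedLoop_pair
  have h1 : x - (x + eV d) = -(eV d) := by ring
  rw [h1, lone_neg]
  exact lone_eV hd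

lemma eV_ne_zero (hd : 0 < d) : eV d ≠ 0 := by
  intro h
  have := congrFun h ⟨0, hd⟩
  simp [eV] at this

lemma q1_injective : Function.Injective (q1 d) := by
  intro x y h
  simpa [q1] using List.head_eq_of_cons_eq h

lemma q2_injective : Function.Injective (q2 d) := by
  intro x y h
  obtain ⟨-, h2⟩ := List.cons_eq_cons.mp h
  simpa using List.head_eq_of_cons_eq h2

lemma q1_ne_q2 (hd : 0 < d) (x y : Fin d → ℤ) : q1 d x ≠ q2 d y := by
  intro h
  simp only [q1, q2, List.cons_eq_cons, List.cons.injEq] at h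
  obtain ⟨h1, h2, -⟩ := h
  have : eV d + eV d = 0 := by
    have := h1 ▸ h2  -- x + eV d = y  and  x = y + eV d
    -- from h1 : x = y + eV d and h2 : x + eV d = y
    have h3 : (y + eV d) + eV d = y := by rw [← h1]; exact h2
    have := congrArg (fun z => z - y) h3
    simpa [add_assoc, add_sub_cancel_left, add_comm, add_left_comm] using this
  have := congrFun this ⟨0, hd⟩
  simp [eV] at this

lemma loopWeight_pair (a b : Fin d → ℤ) :
    loopWeight [a, b] = (2 : ℝ≥0)⁻¹ * ((2 * d : ℝ≥0))⁻¹ ^ 2 := by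
  simp [loopWeight]

/-- the "all-true on `s`" cylinder sets in the field space -/
def trueCyl (d : ℕ) (s : Finset (Fin d → ℤ)) : Set ((Fin d → ℤ) → Bool) :=
  {f | ∀ i ∈ s, f i = true}

lemma measurableSet_trueCyl (s : Finset (Fin d → ℤ)) :
    MeasurableSet (trueCyl d s) := by
  have : trueCyl d s = ⋂ i ∈ s, (fun f : (Fin d → ℤ) → Bool => f i) ⁻¹' {true} := by
    ext f; simp [trueCyl]
  rw [this]
  exact MeasurableSet.biInter s.countable_toSet
    (fun i _ => measurable_pi_apply i (measurableSet_singleton true))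

lemma isPiSystem_trueCyl :
    IsPiSystem {S : Set ((Fin d → ℤ) → Bool) | ∃ s : Finset (Fin d → ℤ), S = trueCyl d s} := by
  rintro S ⟨s, rfl⟩ T ⟨t, rfl⟩ -
  refine ⟨s ∪ t, ?_⟩
  ext f
  simp only [trueCyl, Set.mem_inter_iff, Set.mem_setOf_eq, Finset.mem_union]
  constructor
  · rintro ⟨h1, h2⟩ i (hi | hi)
    exacts [h1 i hi, h2 i hi]
  · intro h
    exact ⟨fun i hi => h i (Or.inl hi), fun i hi => h i (Or.inr hi)⟩

lemma generateFrom_trueCyl :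
    MeasurableSpace.generateFrom
        {S : Set ((Fin d → ℤ) → Bool) | ∃ s : Finset (Fin d → ℤ), S = trueCyl d s}
      = MeasurableSpace.pi := by
  apply le_antisymm
  · apply MeasurableSpace.generateFrom_le
    rintro S ⟨s, rfl⟩
    exact measurableSet_trueCyl s
  · rw [show (MeasurableSpace.pi : MeasurableSpace ((Fin d → ℤ) → Bool))
        = ⨆ a, MeasurableSpace.comap (fun f => f a) inferInstance from rfl]
    apply iSup_le
    intro x
    intro S hS
    obtain ⟨A, -, rfl⟩ := hS
    have htrue : MeasurableSet[MeasurableSpace.generateFrom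
        {S : Set ((Fin d → ℤ) → Bool) | ∃ s : Finset (Fin d → ℤ), S = trueCyl d s}]
        ((fun f : (Fin d → ℤ) → Bool => f x) ⁻¹' {true}) := by
      apply MeasurableSpace.measurableSet_generateFrom
      exact ⟨{x}, by ext f; simp [trueCyl]⟩
    have hA : A = ∅ ∨ A = {true} ∨ A = {false} ∨ A = {false, true} := by
      by_cases h1 : true ∈ A <;> by_cases h2 : false ∈ A
      · right; right; right; ext b; cases b <;> simp [h1, h2]
      · right; left; ext b; cases b <;> simp [h1, h2]
      · right; right; left; ext b; cases b <;> simp [h1, h2]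
      · left; ext b; cases b <;> simp [h1, h2]
    have hfalse : ((fun f : (Fin d → ℤ) → Bool => f x) ⁻¹' {false})
        = ((fun f : (Fin d → ℤ) → Bool => f x) ⁻¹' {true})ᶜ := by
      ext f; simp
    rcases hA with rfl | rfl | rfl | rfl
    · simp
    · exact htrue
    · rw [hfalse]; exact htrue.compl
    · have hu : ((fun f : (Fin d → ℤ) → Bool => f x) ⁻¹' ({false, true} : Set Bool))
          = Set.univ := by ext f; cases f x <;> simp
      rw [hu]
      exact MeasurableSet.univ

end Aux

/-- The vacant set `V^α` of the random walk loop soup at intensity `α` (realized as independent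
Poisson occupation numbers `N p` with mean `α μ̇(p)` on the countable space of based loops) is
stochastically dominated by Bernoulli site percolation with parameter `exp(−α/(4d²))`: for every
increasing measurable event `E` of fields and any iid Bernoulli(`exp(−α/(4d²))`) field `η`,
`P[1_{V^α} ∈ E] ≤ P'[η ∈ E]`; in particular `P[x ∈ V^α] ≤ exp(−α/(4d²))` for every `x`. -/
theorem vacant_set_dominated_by_bernoulli (d : ℕ) (hd : 3 ≤ d) (α : ℝ≥0) (hα : 0 < α)
    {Ω : Type*} [MeasurableSpace Ω] (μpr : Measure Ω) [IsProbabilityMeasure μpr]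
    (N : List (Fin d → ℤ) → Ω → ℕ)
    (hNmeas : ∀ p, Measurable (N p))
    (hNindep : iIndepFun N μpr)
    (hNdist : ∀ p, IsBasedLoop p →
      Measure.map (N p) μpr = poissonMeasure (α * loopWeight p))
    (hNzero : ∀ p, ¬ IsBasedLoop p → ∀ ω, N p ω = 0)
    {Ω' : Type*} [MeasurableSpace Ω'] (μpr' : Measure Ω') [IsProbabilityMeasure μpr']
    (η : (Fin d → ℤ) → Ω' → Bool)
    (hηmeas : ∀ x, Measurable (η x))
    (hηindep : iIndepFun η μpr')
    (hηdist : ∀ x, μpr' {ω' | η x ω' = true}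
      = ENNReal.ofReal (Real.exp (-(α : ℝ) / (4 * d ^ 2)))) :
    (∀ x : Fin d → ℤ, μpr {ω | x ∈ vacantSet (fun p => N p ω)}
        ≤ ENNReal.ofReal (Real.exp (-(α : ℝ) / (4 * d ^ 2)))) ∧
      ∀ E : Set ((Fin d → ℤ) → Bool), MeasurableSet E →
        (∀ f g : (Fin d → ℤ) → Bool, (∀ x, f x ≤ g x) → f ∈ E → g ∈ E) →
        μpr {ω | vacField (fun p => N p ω) ∈ E} ≤ μpr' {ω' | (fun x => η x ω') ∈ E} := by
  have hd0 : 0 < d := by omega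
  have hdR : (d : ℝ) ≠ 0 := by positivity
  set ρ : ℝ≥0∞ := ENNReal.ofReal (Real.exp (-(α : ℝ) / (4 * d ^ 2))) with hρ
  -- the single-loop absence probability
  have hmeasN : ∀ p, IsBasedLoop p → μpr (N p ⁻¹' {0})
      = ENNReal.ofReal (Real.exp (-((α * loopWeight p : ℝ≥0) : ℝ))) := by
    intro p hp
    rw [← Measure.map_apply (hNmeas p) (measurableSet_singleton 0), hNdist p hp,
      poissonMeasure_singleton]
    simp
  -- value of the weight for length-2 loops
  have hwval : ∀ a b : Fin d → ℤ,
      ((α * loopWeight [a, b] : ℝ≥0) : ℝ) = (α : ℝ) / (8 * d ^ 2) := by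
    intro a b
    rw [loopWeight_pair]
    push_cast
    rw [eq_div_iff (by positivity), mul_inv, mul_pow]
    have hdd : ((d:ℝ))⁻¹ ^ 2 * (d:ℝ) ^ 2 = 1 := by
      rw [inv_pow, inv_mul_cancel₀ (by positivity)]
    calc (α:ℝ) * (2⁻¹ * (2⁻¹ ^ 2 * ((d:ℝ))⁻¹ ^ 2)) * (8 * (d:ℝ) ^ 2)
        = (α:ℝ) * (2⁻¹ * 2⁻¹ ^ 2 * 8) * (((d:ℝ))⁻¹ ^ 2 * (d:ℝ) ^ 2) := by ring
      _ = (α:ℝ) := by rw [hdd]; norm_num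
  -- probability that a given length-2 loop is absent
  have hc : ∀ a b : Fin d → ℤ, IsBasedLoop [a, b] → μpr (N [a, b] ⁻¹' {0})
      = ENNReal.ofReal (Real.exp (-(α : ℝ) / (8 * d ^ 2))) := by
    intro a b hab
    rw [hmeasN _ hab, hwval a b, neg_div]
  set c : ℝ≥0∞ := ENNReal.ofReal (Real.exp (-(α : ℝ) / (8 * d ^ 2))) with hcdef
  have hcc : c * c = ρ := by
    rw [hcdef, hρ, ← ENNReal.ofReal_mul (Real.exp_nonneg _), ← Real.exp_add]
    congr 1
    field_simp
    ring
  -- the Bernoulli field built from the two length-2 loops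
  set B : (Fin d → ℤ) → Ω → Bool := fun x ω =>
    if N (q1 d x) ω = 0 ∧ N (q2 d x) ω = 0 then true else false with hBdef
  have hBpre : ∀ x, B x ⁻¹' {true} = N (q1 d x) ⁻¹' {0} ∩ N (q2 d x) ⁻¹' {0} := by
    intro x
    ext ω
    by_cases h : N (q1 d x) ω = 0 ∧ N (q2 d x) ω = 0 <;>
      simp [hBdef, h] <;> tauto
  have hBmeas : ∀ x, Measurable (B x) := by
    intro x
    apply Measurable.ite _ measurable_const measurable_const
    have : {ω | N (q1 d x) ω = 0 ∧ N (q2 d x) ω = 0}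
        = N (q1 d x) ⁻¹' {0} ∩ N (q2 d x) ⁻¹' {0} := by ext ω; simp
    rw [Set.setOf_and]
    exact ((hNmeas _ (measurableSet_singleton 0))).inter
      ((hNmeas _ (measurableSet_singleton 0)))
  -- the cylinder probability for the B-field
  have hBcyl : ∀ s : Finset (Fin d → ℤ), μpr (⋂ i ∈ s, B i ⁻¹' {true}) = ρ ^ s.card := by
    intro s
    classical
    set S' : Finset (List (Fin d → ℤ)) := s.image (q1 d) ∪ s.image (q2 d) with hS'
    have hset : (⋂ i ∈ s, B i ⁻¹' {true}) = ⋂ p ∈ S', N p ⁻¹' {0} := by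
      ext ω
      simp only [Set.mem_iInter, hS', Finset.mem_union, Finset.mem_image, hBpre,
        Set.mem_inter_iff, Set.mem_preimage, Set.mem_singleton_iff]
      constructor
      · rintro h p (⟨i, hi, rfl⟩ | ⟨i, hi, rfl⟩)
        exacts [(h i hi).1, (h i hi).2]
      · intro h i hi
        exact ⟨h _ (Or.inl ⟨i, hi, rfl⟩), h _ (Or.inr ⟨i, hi, rfl⟩)⟩
    have hloop : ∀ p ∈ S', IsBasedLoop p := by
      intro p hp
      rw [hS', Finset.mem_union] at hp
      rcases hp with hp | hp <;> rw [Finset.mem_image] at hp <;> obtain ⟨i, -, rfl⟩ := hp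
      · exact isBasedLoop_q1 hd0 i
      · exact isBasedLoop_q2 hd0 i
    have hprod := hNindep.measure_inter_preimage_eq_mul S'
      (sets := fun _ => ({0} : Set ℕ)) (fun i _ => measurableSet_singleton 0)
    have hfactor : ∀ p ∈ S', μpr (N p ⁻¹' {0}) = c := by
      intro p hp
      have hpl := hloop p hp
      rw [hS', Finset.mem_union] at hp
      rcases hp with hp | hp <;> rw [Finset.mem_image] at hp <;> obtain ⟨i, -, rfl⟩ := hp
      · exact hc _ _ (isBasedLoop_q1 hd0 i)
      · exact hc _ _ (isBasedLoop_q2 hd0 i)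
    have hcard : S'.card = 2 * s.card := by
      rw [hS', Finset.card_union_of_disjoint, Finset.card_image_of_injective _ q1_injective,
        Finset.card_image_of_injective _ q2_injective]
      · ring
      · rw [Finset.disjoint_left]
        rintro p hp1 hp2
        rw [Finset.mem_image] at hp1 hp2
        obtain ⟨i, -, rfl⟩ := hp1
        obtain ⟨j, -, hj⟩ := hp2
        exact q1_ne_q2 hd0 i j hj.symm
    rw [hset, hprod, Finset.prod_congr rfl hfactor, Finset.prod_const, hcard,
      pow_mul, sq, hcc]
  -- the cylinder probability for the η-field
  have hηcyl : ∀ s : Finset (Fin d → ℤ), μpr' (⋂ i ∈ s, η i ⁻¹' {true}) = ρ ^ s.card := by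
    intro s
    have hprod := hηindep.measure_inter_preimage_eq_mul s
      (sets := fun _ => ({true} : Set Bool)) (fun i _ => trivial)
    rw [hprod]
    have : ∀ i ∈ s, μpr' (η i ⁻¹' {true}) = ρ := by
      intro i _
      have : η i ⁻¹' {true} = {ω' | η i ω' = true} := by ext ω'; simp
      rw [this, hηdist i]
    rw [Finset.prod_congr rfl this, Finset.prod_const]
  -- the laws of the two Bernoulli fields coincide
  have hFmeas : Measurable (fun ω x => B x ω) :=
    measurable_pi_lambda _ (fun x => hBmeas x)
  have hF'meas : Measurable (fun ω' x => η x ω') :=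
    measurable_pi_lambda _ (fun x => hηmeas x)
  have hlaw : μpr.map (fun ω x => B x ω) = μpr'.map (fun ω' x => η x ω') := by
    apply ext_of_generate_finite
      {S : Set ((Fin d → ℤ) → Bool) | ∃ s : Finset (Fin d → ℤ), S = trueCyl d s}
      generateFrom_trueCyl.symm isPiSystem_trueCyl
    · rintro S ⟨s, rfl⟩
      rw [Measure.map_apply hFmeas (measurableSet_trueCyl s),
        Measure.map_apply hF'meas (measurableSet_trueCyl s)]
      have h1 : (fun ω x => B x ω) ⁻¹' trueCyl d s = ⋂ i ∈ s, B i ⁻¹' {true} := by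
        ext ω; simp [trueCyl]
      have h2 : (fun ω' x => η x ω') ⁻¹' trueCyl d s = ⋂ i ∈ s, η i ⁻¹' {true} := by
        ext ω'; simp [trueCyl]
      rw [h1, h2, hBcyl s, hηcyl s]
    · rw [Measure.map_apply hFmeas MeasurableSet.univ,
        Measure.map_apply hF'meas MeasurableSet.univ]
      simp
  -- pointwise domination of the vacancy field by B
  have hdom : ∀ ω x, vacField (fun p => N p ω) x ≤ B x ω := by
    intro ω x
    by_cases hx : x ∈ vacantSet (fun p => N p ω)
    · have h1 : N (q1 d x) ω = 0 := by
        by_contra h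
        exact hx (q1 d x) (isBasedLoop_q1 hd0 x) (Nat.pos_of_ne_zero h)
          (by simp [q1])
      have h2 : N (q2 d x) ω = 0 := by
        by_contra h
        exact hx (q2 d x) (isBasedLoop_q2 hd0 x) (Nat.pos_of_ne_zero h)
          (by simp [q2])
      simp [vacField, hx, hBdef, h1, h2]
    · simp only [vacField, hx, if_false]
      exact Bool.false_le _
  constructor
  · -- single-site bound
    intro x
    have hsub : {ω | x ∈ vacantSet (fun p => N p ω)} ⊆ B x ⁻¹' {true} := by
      intro ω hω
      have := hdom ω x
      simp only [vacField, Set.mem_setOf_eq] at hω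
      simp only [vacField, if_pos hω] at this
      simpa using le_antisymm (Bool.le_true _) this
    calc μpr {ω | x ∈ vacantSet (fun p => N p ω)} ≤ μpr (B x ⁻¹' {true}) :=
          measure_mono hsub
      _ = ρ ^ ({x} : Finset (Fin d → ℤ)).card := by
          rw [← hBcyl {x}]
          congr 1
          simp
      _ = ρ := by simp
  · -- stochastic domination for increasing events
    intro E hE hmono
    have hsub : {ω | vacField (fun p => N p ω) ∈ E} ⊆ {ω | (fun x => B x ω) ∈ E} := by
      intro ω hω
      exact hmono _ _ (hdom ω) hω
    calc μpr {ω | vacField (fun p => N p ω) ∈ E} ≤ μpr {ω | (fun x => B x ω) ∈ E} :=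
          measure_mono hsub
      _ = μpr.map (fun ω x => B x ω) E := by rw [Measure.map_apply hFmeas hE]; rfl
      _ = μpr'.map (fun ω' x => η x ω') E := by rw [hlaw]
      _ = μpr' {ω' | (fun x => η x ω') ∈ E} := by rw [Measure.map_apply hF'meas hE]; rfl
end

section
/- Abstract decoupling-to-cascading bound (Theorem 6.1 of the paper, increasing case): Let (P^u)_{u∈(a,b)} be a family of probability measures on {0,1}^{Z^d} satisfying: there exist β, γ, ζ > 0 and constants C, c such that for all L, s ≥ 1, x₁, x₂ with ‖x₁−x₂‖ = sL, u < u' in (a,b), and increasing events A_i depending only on coordinates in B(x_i, L), one has P^u[A₁ ∩ A₂] ≤ P^{u'}[A₁]·P^{u'}[A₂] + C·exp(−c·min{(u'−u)^β s^γ, e^{(log L)^ζ}}). Fix θ > 1 with (θ+1)ζ > 1 and scales l_k = l₀4^{⌊k^θ⌋}, r_k = r₀2^{⌊k^θ⌋}, L_{k+1} = l_k L_k. Let seeds Ḡ_x (x ∈ L₀Z^d) be increasing events depending on coordinates in x + [−L₀, 3L₀)^d with lim_{L₀→∞} sup_x P^{u'}[Ḡ_x] = 0, and define cascading events Ḡ_{x,k+1}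 = ∪ Ḡ_{x₁,k} ∩ Ḡ_{x₂,k} over pairs x₁, x₂ in the box Λ_{x,k+1} of the k-th lattice with ‖x₁−x₂‖ > r_k L_k. Then for every u ∈ (a, u') there is C(u,u') such that for all l₀ ≥ 1, r₀ ≥ C(1+log l₀)^{2/γ}, and all sufficiently large L₀: sup_{x∈L_kZ^d} P^u[Ḡ_{x,k}] ≤ 2^{−2^k} for all k ≥ 0. -/
set_option maxHeartbeats 1600000


open MeasureTheory Filter
open scoped ENNReal Topology

/-- Configuration space `{0,1}^{ℤ^d}`. -/
abbrev Config (d : ℕ) := (Fin d → ℤ) → Bool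

/-- An increasing event. -/
def IncrEvent {d : ℕ} (E : Set (Config d)) : Prop :=
  ∀ ω ω' : Config d, (∀ x, ω x ≤ ω' x) → ω ∈ E → ω' ∈ E

/-- `E` depends only on the coordinates in `s`. -/
def DepOn {d : ℕ} (E : Set (Config d)) (s : Set (Fin d → ℤ)) : Prop :=
  ∀ ω ω' : Config d, (∀ x ∈ s, ω x = ω' x) → (ω ∈ E ↔ ω' ∈ E)

/-- The renormalized lattice `L·ℤ^d`. -/
def latticeZ (d L : ℕ) : Set (Fin d → ℤ) := {x | ∀ i, (L : ℤ) ∣ x i}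

/-- The box `Λ_{x,k+1} = G_k ∩ (x + [0, L_{k+1})^d)` (here `Lk` is `L_k`, `Lk1 = L_{k+1}`). -/
def boxLam {d : ℕ} (x : Fin d → ℤ) (Lk Lk1 : ℕ) : Set (Fin d → ℤ) :=
  {y ∈ latticeZ d Lk | ∀ i, x i ≤ y i ∧ y i < x i + (Lk1 : ℤ)}

namespace DTC
open Real


lemma linf_le_iff {d : ℕ} {v : Fin d → ℤ} {n : ℕ} :
    linf v ≤ n ↔ ∀ i, (v i).natAbs ≤ n := by
  simp [linf, Finset.sup_le_iff]

lemma linf_eq_of_max {d : ℕ} (v : Fin d → ℤ) (i₀ : Fin d)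
    (h : ∀ i, (v i).natAbs ≤ (v i₀).natAbs) : linf v = (v i₀).natAbs := by
  refine le_antisymm (linf_le_iff.2 h) ?_
  exact Finset.le_sup (f := fun i => (v i).natAbs) (Finset.mem_univ i₀)

lemma DepOn.mono {d : ℕ} {E : Set (Config d)} {s s' : Set (Fin d → ℤ)}
    (hss : s ⊆ s') (h : DepOn E s) : DepOn E s' :=
  fun ω ω' hag => h ω ω' (fun x hx => hag x (hss hx))

lemma DepOn.inter {d : ℕ} {E F : Set (Config d)} {s : Set (Fin d → ℤ)}
    (hE : DepOn E s) (hF : DepOn F s) : DepOn (E ∩ F) s := by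
  intro ω ω' hag
  simp only [Set.mem_inter_iff, hE ω ω' hag, hF ω ω' hag]

lemma DepOn.iUnion {d : ℕ} {ι : Sort*} {E : ι → Set (Config d)} {s : Set (Fin d → ℤ)}
    (h : ∀ i, DepOn (E i) s) : DepOn (⋃ i, E i) s := by
  intro ω ω' hag
  simp only [Set.mem_iUnion]
  exact exists_congr fun i => h i ω ω' hag

lemma DepOn.univ {d : ℕ} {s : Set (Fin d → ℤ)} : DepOn (Set.univ : Set (Config d)) s :=
  fun _ _ _ => by simp

lemma IncrEvent.inter {d : ℕ} {E F : Set (Config d)} (hE : IncrEvent E) (hF : IncrEvent F) :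
    IncrEvent (E ∩ F) := fun ω ω' h hm => ⟨hE ω ω' h hm.1, hF ω ω' h hm.2⟩

lemma IncrEvent.iUnion {d : ℕ} {ι : Sort*} {E : ι → Set (Config d)}
    (h : ∀ i, IncrEvent (E i)) : IncrEvent (⋃ i, E i) := by
  intro ω ω' hle hm
  rw [Set.mem_iUnion] at hm ⊢
  obtain ⟨i, hi⟩ := hm
  exact ⟨i, h i ω ω' hle hi⟩

lemma IncrEvent.univ {d : ℕ} : IncrEvent (Set.univ : Set (Config d)) := fun _ _ _ _ => trivial

lemma recenter {d : ℕ} (L r : ℕ) (hL : 1 ≤ L) (hr : 6 ≤ r)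
    (x₁ x₂ : Fin d → ℤ) (hm : r * L < linf (x₁ - x₂)) :
    ∃ (y₁ y₂ : Fin d → ℤ) (s : ℕ), 1 ≤ s ∧ r ≤ 6 * s ∧ linf (y₁ - y₂) = s * (6 * L) ∧
      (∀ i, (y₁ i - x₁ i).natAbs ≤ 3 * L) ∧ (∀ i, (y₂ i - x₂ i).natAbs ≤ 3 * L) := by
  set m := linf (x₁ - x₂) with hmdef
  have hd0 : 0 < d := by
    by_contra h
    have hd0' : d = 0 := by omega
    subst hd0'
    have : m = 0 := by simp [hmdef, linf]
    omega
  have hne : (Finset.univ : Finset (Fin d)).Nonempty := ⟨⟨0, hd0⟩, Finset.mem_univ _⟩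
  obtain ⟨i₀, -, hi₀⟩ := Finset.exists_mem_eq_sup Finset.univ hne fun i => ((x₁ - x₂) i).natAbs
  have hmax : ∀ i, ((x₁ - x₂) i).natAbs ≤ ((x₁ - x₂) i₀).natAbs := by
    intro i
    rw [← hi₀]
    exact Finset.le_sup (f := fun i => ((x₁ - x₂) i).natAbs) (Finset.mem_univ i)
  have hmi₀ : ((x₁ - x₂) i₀).natAbs = m := hi₀.symm
  have h6L : 0 < 6 * L := by omega
  have hdm := Nat.div_add_mod m (6 * L)
  have hmod := Nat.mod_lt m h6L
  set rem := m % (6 * L) with hremdef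
  set q := m / (6 * L) with hqdef
  set c : ℕ := if rem = 0 then 0 else 6 * L - rem with hcdef
  set s : ℕ := if rem = 0 then q else q + 1 with hsdef
  have hQ : (q + 1) * (6 * L) = 6 * L * q + 6 * L := by ring
  have hQ0 : q * (6 * L) = 6 * L * q := by ring
  have hkey : m + c = s * (6 * L) := by
    by_cases h0 : rem = 0 <;> simp only [hcdef, hsdef, if_pos, if_neg, h0, if_true, if_false] <;>
      omega
  have hclt : c < 6 * L := by
    by_cases h0 : rem = 0 <;> simp only [hcdef, if_pos, if_neg, h0, if_true, if_false] <;> omega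
  set c₁ := min c (3 * L) with hc₁
  set c₂ := c - c₁ with hc₂
  have hc₁le : c₁ ≤ 3 * L := by omega
  have hc₂le : c₂ ≤ 3 * L := by omega
  have hcsum : c₁ + c₂ = c := by omega
  set σ : ℤ := if 0 ≤ (x₁ - x₂) i₀ then 1 else -1 with hσ
  set y₁ : Fin d → ℤ := Function.update x₁ i₀ (x₁ i₀ + σ * c₁) with hy₁
  set y₂ : Fin d → ℤ := Function.update x₂ i₀ (x₂ i₀ - σ * c₂) with hy₂
  have happ : ∀ i, (x₁ - x₂) i = x₁ i - x₂ i := fun i => rfl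
  have hv₀ : (y₁ - y₂) i₀ = (x₁ i₀ - x₂ i₀) + σ * (c₁ + c₂) := by
    simp [hy₁, hy₂, Function.update_self]
    ring
  have hvne : ∀ i, i ≠ i₀ → (y₁ - y₂) i = x₁ i - x₂ i := by
    intro i hi
    simp [hy₁, hy₂, Function.update_of_ne hi]

  have hcs : (c₁ : ℤ) + (c₂ : ℤ) = (c : ℤ) := by exact_mod_cast hcsum
  have habs₀ : ((y₁ - y₂) i₀).natAbs = m + c := by
    rw [hv₀, hcs]
    have h1 : (x₁ i₀ - x₂ i₀).natAbs = m := by rw [← happ i₀]; exact hmi₀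
    by_cases hpos : 0 ≤ (x₁ - x₂) i₀ <;>
      [rw [hσ, if_pos hpos] ; rw [hσ, if_neg hpos]] <;>
      rw [happ i₀] at hpos <;> omega
  have hs1 : 1 ≤ s := by
    rcases Nat.eq_zero_or_pos s with h0 | h0
    · rw [h0, zero_mul] at hkey; omega
    · exact h0
  refine ⟨y₁, y₂, s, hs1, ?_, ?_, ?_, ?_⟩
  · -- r ≤ 6 * s
    have h2 : r * L < (6 * s) * L := by
      calc r * L < m := hm
        _ ≤ m + c := Nat.le_add_right _ _
        _ = s * (6 * L) := hkey
        _ = (6 * s) * L := by ring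
    exact le_of_lt (Nat.lt_of_mul_lt_mul_right h2)
  · -- linf
    have heq := linf_eq_of_max (y₁ - y₂) i₀ (by
      intro i
      by_cases hi : i = i₀
      · subst hi; exact le_rfl
      · rw [hvne i hi, habs₀]
        calc (x₁ i - x₂ i).natAbs = ((x₁ - x₂) i).natAbs := rfl
          _ ≤ m := hmi₀ ▸ hmax i
          _ ≤ m + c := Nat.le_add_right _ _)
    rw [heq, habs₀, hkey]
  · intro i
    by_cases hi : i = i₀
    · rw [hi]
      simp only [hy₁, Function.update_self]
      have h3 : x₁ i₀ + σ * c₁ - x₁ i₀ = σ * c₁ := by ring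
      rw [h3]
      by_cases hpos : 0 ≤ (x₁ - x₂) i₀ <;> [rw [hσ, if_pos hpos] ; rw [hσ, if_neg hpos]] <;>
        simp only [one_mul, neg_one_mul, Int.natAbs_neg, Int.natAbs_natCast] <;> omega
    · simp [hy₁, Function.update_of_ne hi]
  · intro i
    by_cases hi : i = i₀
    · rw [hi]
      simp only [hy₂, Function.update_self]
      have h3 : x₂ i₀ - σ * c₂ - x₂ i₀ = -(σ * c₂) := by ring
      rw [h3]
      by_cases hpos : 0 ≤ (x₁ - x₂) i₀ <;> [rw [hσ, if_pos hpos] ; rw [hσ, if_neg hpos]] <;>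
        simp only [one_mul, neg_one_mul, Int.natAbs_neg, Int.natAbs_natCast] <;> omega
    · simp [hy₂, Function.update_of_ne hi]



variable {θ ζ β γ : ℝ}

section FS
variable (θ) in
noncomputable def Ff (k : ℕ) : ℕ := ⌊(k : ℝ) ^ θ⌋₊
variable (θ) in
noncomputable def Sf (k : ℕ) : ℕ := ∑ j ∈ Finset.range k, Ff θ j

lemma Ff_mono (hθ : 0 ≤ θ) {k m : ℕ} (h : k ≤ m) : Ff θ k ≤ Ff θ m :=
  Nat.floor_mono (rpow_le_rpow (by positivity) (by exact_mod_cast h) hθ)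

lemma Ff_le (k : ℕ) : (Ff θ k : ℝ) ≤ (k : ℝ) ^ θ := Nat.floor_le (by positivity)

lemma lt_Ff_add_one (k : ℕ) : (k : ℝ) ^ θ < Ff θ k + 1 := Nat.lt_floor_add_one _

lemma Ff_ge (k : ℕ) : (k : ℝ) ^ θ - 1 ≤ (Ff θ k : ℝ) := le_of_lt (Nat.sub_one_lt_floor _)

lemma one_le_Ff (hθ : 0 ≤ θ) {k : ℕ} (hk : 1 ≤ k) : 1 ≤ Ff θ k := by
  apply Nat.le_floor
  have : (1:ℝ) ≤ (k:ℝ) := by exact_mod_cast hk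
  calc ((1:ℕ):ℝ) = 1 := by norm_num
    _ ≤ (k:ℝ) ^ θ := one_le_rpow this hθ

lemma Sf_succ (k : ℕ) : Sf θ (k+1) = Sf θ k + Ff θ k := Finset.sum_range_succ _ _

/-- Half-range lower bound on the sum. -/
lemma Sf_ge_half (hθ : 0 ≤ θ) (k : ℕ) : (k - (k+1)/2) * Ff θ ((k+1)/2) ≤ Sf θ k := by
  set h := (k+1)/2 with hh
  have hsub : Finset.Ico h k ⊆ Finset.range k := by
    intro j hj; rw [Finset.mem_range]; exact (Finset.mem_Ico.1 hj).2
  calc (k - h) * Ff θ h = (Finset.Ico h k).card • Ff θ h := by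
        rw [Nat.card_Ico]; rfl
    _ ≤ ∑ j ∈ Finset.Ico h k, Ff θ j := by
        apply Finset.card_nsmul_le_sum
        intro j hj
        exact Ff_mono hθ (Finset.mem_Ico.1 hj).1
    _ ≤ Sf θ k := Finset.sum_le_sum_of_subset hsub

/-- For `k ≥ K₇ := 2⌈(4d+1)2^(θ+1)⌉₊ + 4`, `(4d+1) F k ≤ S k`. -/
lemma exists_K7 (hθ : 1 < θ) (d : ℕ) :
    ∃ K₇ : ℕ, 1 ≤ K₇ ∧ ∀ k, K₇ ≤ k → (4*d+1) * Ff θ k ≤ Sf θ k := by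
  have hθ0 : (0:ℝ) ≤ θ := by linarith
  set Z : ℕ := ⌈((4*d+1 : ℕ) : ℝ) * (2:ℝ) ^ (θ+1)⌉₊ with hZ
  refine ⟨2*Z + 4, by omega, ?_⟩
  intro k hk
  set h := (k+1)/2 with hh
  have hk1 : 1 ≤ h := by omega
  have hkh : k ≤ 2 * h := by omega
  have hFh1 : 1 ≤ Ff θ h := one_le_Ff hθ0 hk1
  have hkey : ((4*d+1 : ℕ) : ℝ) * Ff θ k ≤ ((k - h : ℕ) : ℝ) * Ff θ h := by
    have h2h : (0:ℝ) ≤ (h:ℝ) := by positivity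
    have hFk : (Ff θ k : ℝ) ≤ (2:ℝ)^(θ+1) * Ff θ h := by
      calc (Ff θ k : ℝ) ≤ (k:ℝ) ^ θ := Ff_le k
        _ ≤ ((2*h : ℕ) : ℝ) ^ θ := rpow_le_rpow (by positivity) (by exact_mod_cast hkh) hθ0
        _ = (2:ℝ)^θ * ((h:ℝ))^θ := by push_cast; rw [mul_rpow] <;> positivity
        _ ≤ (2:ℝ)^θ * ((Ff θ h : ℝ) + 1) := by
            exact mul_le_mul_of_nonneg_left (le_of_lt (lt_Ff_add_one h)) (by positivity)
        _ ≤ (2:ℝ)^θ * (2 * Ff θ h) := by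
            have h1 : (1:ℝ) ≤ (Ff θ h : ℝ) := by exact_mod_cast hFh1
            exact mul_le_mul_of_nonneg_left (by linarith) (by positivity)
        _ = (2:ℝ)^(θ+1) * Ff θ h := by rw [rpow_add two_pos, rpow_one]; ring
    have hZle : ((4*d+1:ℕ):ℝ) * (2:ℝ)^(θ+1) ≤ ((k - h : ℕ) : ℝ) := by
      have h1 : ((4*d+1:ℕ):ℝ) * (2:ℝ)^(θ+1) ≤ (Z:ℝ) := Nat.le_ceil _
      have h2 : Z ≤ k - h := by omega
      have h3 : (Z:ℝ) ≤ ((k-h:ℕ):ℝ) := by exact_mod_cast h2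
      linarith
    calc ((4*d+1 : ℕ) : ℝ) * Ff θ k ≤ ((4*d+1:ℕ):ℝ) * ((2:ℝ)^(θ+1) * Ff θ h) := by
          have : (0:ℝ) ≤ ((4*d+1:ℕ):ℝ) := by positivity
          exact mul_le_mul_of_nonneg_left hFk this
      _ = (((4*d+1:ℕ):ℝ) * (2:ℝ)^(θ+1)) * Ff θ h := by ring
      _ ≤ ((k - h : ℕ) : ℝ) * Ff θ h := by
          apply mul_le_mul_of_nonneg_right hZle (by positivity)
  have : (4*d+1) * Ff θ k ≤ (k - h) * Ff θ h := by exact_mod_cast hkey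
  calc (4*d+1) * Ff θ k ≤ (k - h) * Ff θ h := this
    _ ≤ Sf θ k := Sf_ge_half hθ0 k


/-- `2^k` as real exponential. -/
lemma two_pow_eq_exp (k : ℕ) : ((2:ℝ))^k = Real.exp ((k:ℝ) * Real.log 2) := by
  rw [← Real.exp_log (show (0:ℝ) < 2^k by positivity), Real.log_pow]

lemma half_pow_eq_exp (k : ℕ) : ((1/2 : ℝ))^k = Real.exp (-((k:ℝ) * Real.log 2)) := by
  rw [Real.exp_neg, ← two_pow_eq_exp, one_div, inv_pow]

/-- Poly ≤ exp constant. -/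
lemma exists_Ctheta (hθ : 1 < θ) :
    ∃ Cθ : ℝ, 1 ≤ Cθ ∧ ∀ k : ℕ, ((k:ℝ)+1) ^ (θ+1) ≤ Cθ * 2^k := by
  have hlog2 : (0:ℝ) < Real.log 2 := Real.log_pos one_lt_two
  have h1 : Tendsto (fun x : ℝ => x ^ (θ+1) * Real.exp (-(Real.log 2) * x)) atTop (𝓝 0) :=
    tendsto_rpow_mul_exp_neg_mul_atTop_nhds_zero (θ+1) (Real.log 2) hlog2
  have h2 : Tendsto (fun k : ℕ => ((k:ℝ) + 1)) atTop atTop :=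
    tendsto_atTop_add_const_right _ 1 tendsto_natCast_atTop_atTop
  have h3 : Tendsto (fun k : ℕ => (((k:ℝ)+1) ^ (θ+1) * Real.exp (-(Real.log 2) * ((k:ℝ)+1)))
      * Real.exp (Real.log 2)) atTop (𝓝 (0 * Real.exp (Real.log 2))) :=
    Tendsto.mul_const _ (h1.comp h2)
  rw [zero_mul] at h3
  have h4 : Tendsto (fun k : ℕ => ((k:ℝ)+1) ^ (θ+1) * ((2:ℝ)^k)⁻¹) atTop (𝓝 0) := by
    apply h3.congr
    intro k
    rw [two_pow_eq_exp, ← Real.exp_neg, mul_assoc, ← Real.exp_add]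
    ring_nf
  obtain ⟨C, hC⟩ := h4.bddAbove_range
  refine ⟨max C 1, le_max_right _ _, fun k => ?_⟩
  have := hC (Set.mem_range_self (f := fun k : ℕ => ((k:ℝ)+1) ^ (θ+1) * ((2:ℝ)^k)⁻¹) k)
  have h2k : (0:ℝ) < 2^k := by positivity
  calc ((k:ℝ)+1) ^ (θ+1) = (((k:ℝ)+1) ^ (θ+1) * ((2:ℝ)^k)⁻¹) * 2^k := by
        field_simp
    _ ≤ max C 1 * 2^k := by
        apply mul_le_mul_of_nonneg_right _ (le_of_lt h2k)
        exact le_trans this (le_max_left _ _)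

/-- The quantity `2^(k + (k+2)β + γ − γ k^θ)` is bounded. -/
lemma exists_Cg (hθ : 1 < θ) (hβ : 0 < β) (hγ : 0 < γ) :
    ∃ Cg : ℝ, 1 ≤ Cg ∧ ∀ k : ℕ,
      (2:ℝ) ^ ((k:ℝ) + ((k:ℝ)+2)*β + γ - γ * (k:ℝ)^θ) ≤ Cg := by
  have hlog2 : (0:ℝ) < Real.log 2 := Real.log_pos one_lt_two
  -- the exponent tends to -∞
  have hA : Tendsto (fun x : ℝ => γ * x ^ (θ-1) - (1+β)) atTop atTop := by
    apply tendsto_atTop_add_const_right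
    exact (tendsto_rpow_atTop (by linarith)).const_mul_atTop hγ
  have hB : Tendsto (fun x : ℝ => x * (γ * x ^ (θ-1) - (1+β))) atTop atTop :=
    tendsto_id.atTop_mul_atTop₀ hA
  have hE : Tendsto (fun x : ℝ => (2*β + γ) + -(x * (γ * x ^ (θ-1) - (1+β)))) atTop atBot := by
    apply tendsto_atBot_add_const_left
    exact tendsto_neg_atTop_atBot.comp hB
  have hE' : Tendsto (fun x : ℝ => x + (x+2)*β + γ - γ * x^θ) atTop atBot := by
    apply hE.congr'
    filter_upwards [eventually_gt_atTop (0:ℝ)] with x hx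
    have hxθ : x ^ (θ-1) * x = x ^ θ := by
      rw [← Real.rpow_add_one (ne_of_gt hx)]
      ring_nf
    have : x * (γ * x ^ (θ-1)) = γ * x ^ θ := by rw [← hxθ]; ring
    nlinarith [this]
  have hEexp : Tendsto (fun x : ℝ => Real.exp (Real.log 2 * (x + (x+2)*β + γ - γ * x^θ)))
      atTop (𝓝 0) := by
    apply Real.tendsto_exp_atBot.comp
    exact (hE'.atBot_mul_const hlog2).congr (fun x => by ring)
  have h4 : Tendsto (fun k : ℕ => (2:ℝ) ^ (((k:ℝ)) + ((k:ℝ)+2)*β + γ - γ * (k:ℝ)^θ))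
      atTop (𝓝 0) := by
    apply (hEexp.comp tendsto_natCast_atTop_atTop).congr
    intro k
    simp only [Function.comp_apply]
    rw [Real.rpow_def_of_pos two_pos]
  obtain ⟨C, hC⟩ := h4.bddAbove_range
  refine ⟨max C 1, le_max_right _ _, fun k => ?_⟩
  exact le_trans (hC (Set.mem_range_self k)) (le_max_left _ _)

/-- Real lower bound `S_k ≥ k^(θ+1) / (8·2^θ)` for `k ≥ 4`. -/
lemma Sf_lower (hθ : 1 < θ) {k : ℕ} (hk : 4 ≤ k) :
    (k:ℝ) ^ (θ+1) * ((8:ℝ) * (2:ℝ)^θ)⁻¹ ≤ (Sf θ k : ℝ) := by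
  have hθ0 : (0:ℝ) ≤ θ := by linarith
  set h := (k+1)/2 with hh
  have hk2 : (2:ℝ) ≤ ((h:ℕ):ℝ) := by
    have : 2 ≤ h := by omega
    exact_mod_cast this
  have hhalf : ((k:ℝ))/2 ≤ ((h:ℕ):ℝ) := by
    have h1 : k ≤ 2 * h := by omega
    have h2 : (k:ℝ) ≤ 2*(h:ℝ) := by exact_mod_cast h1
    linarith
  have hq : ((k - h : ℕ):ℝ) ≥ ((k:ℝ) - 1)/2 := by
    have h1 : k - 1 ≤ 2 * (k - h) := by omega
    have h2 : ((k - 1 : ℕ):ℝ) ≤ ((2 * (k - h) : ℕ):ℝ) := by exact_mod_cast h1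
    rw [Nat.cast_sub (by omega), Nat.cast_mul] at h2
    push_cast at h2
    linarith
  -- F h ≥ (k/2)^θ − 1 ≥ (k/2)^θ / 2
  have hk4 : (4:ℝ) ≤ (k:ℝ) := by exact_mod_cast hk
  have hhpos : (0:ℝ) < (k:ℝ)/2 := by linarith
  have hFh : ((k:ℝ)/2) ^ θ - 1 ≤ (Ff θ h : ℝ) := by
    calc ((k:ℝ)/2) ^ θ - 1 ≤ ((h:ℕ):ℝ) ^ θ - 1 := by
          have := rpow_le_rpow (le_of_lt hhpos) hhalf hθ0
          linarith
      _ ≤ (Ff θ h : ℝ) := Ff_ge h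
  have h2big : (2:ℝ) ≤ ((k:ℝ)/2) ^ θ := by
    calc (2:ℝ) ≤ (k:ℝ)/2 := by linarith
      _ = ((k:ℝ)/2) ^ (1:ℝ) := (rpow_one _).symm
      _ ≤ ((k:ℝ)/2) ^ θ := rpow_le_rpow_of_exponent_le (by linarith) (by linarith)
  have hFh2 : ((k:ℝ)/2) ^ θ / 2 ≤ (Ff θ h : ℝ) := by linarith
  have hmain : (k:ℝ)/4 * (((k:ℝ)/2)^θ / 2) ≤ ((k - h : ℕ):ℝ) * (Ff θ h : ℝ) := by
    apply mul_le_mul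
    · linarith
    · exact hFh2
    · positivity
    · linarith
  have hSk : ((k - h : ℕ):ℝ) * (Ff θ h : ℝ) ≤ (Sf θ k : ℝ) := by
    have := Sf_ge_half (θ := θ) hθ0 k
    exact_mod_cast this
  have hfinal : (k:ℝ) ^ (θ+1) * ((8:ℝ) * (2:ℝ)^θ)⁻¹ = (k:ℝ)/4 * (((k:ℝ)/2)^θ / 2) := by
    rw [div_rpow (by linarith) (by norm_num)]
    rw [rpow_add (by linarith), rpow_one]
    have h2θ : (0:ℝ) < (2:ℝ)^θ := by positivity
    field_simp
    ring
  rw [hfinal]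
  linarith

/-- Existence of `K₆`. -/
lemma exists_K6 (hθ : 1 < θ) (hζ : 0 < ζ) (hθζ : (θ+1)*ζ > 1) (Y : ℝ) :
    ∃ K₆ : ℕ, ∀ k, K₆ ≤ k → Y + (k:ℝ) * Real.log 2 ≤ ((Sf θ k : ℝ) * Real.log 4) ^ ζ := by
  have hlog2 : (0:ℝ) < Real.log 2 := Real.log_pos one_lt_two
  have hlog4 : (0:ℝ) < Real.log 4 := Real.log_pos (by norm_num)
  set c₃ : ℝ := ((8:ℝ) * (2:ℝ)^θ)⁻¹ with hc₃
  have hc₃pos : 0 < c₃ := by positivity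
  set c₄ : ℝ := (c₃ * Real.log 4) ^ ζ with hc₄
  have hc₄pos : 0 < c₄ := by positivity
  set p : ℝ := (θ+1)*ζ with hp
  have hppos : 0 < p - 1 := by linarith
  have hD : Tendsto (fun x : ℝ => x * (c₄ * x ^ (p-1) - Real.log 2)) atTop atTop := by
    apply tendsto_id.atTop_mul_atTop₀
    apply tendsto_atTop_add_const_right
    exact (tendsto_rpow_atTop hppos).const_mul_atTop hc₄pos
  have hD' : Tendsto (fun x : ℝ => c₄ * x ^ p - x * Real.log 2) atTop atTop := by
    apply hD.congr'
    filter_upwards [eventually_gt_atTop (0:ℝ)] with x hx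
    have hxp : x ^ (p-1) * x = x ^ p := by
      rw [← Real.rpow_add_one (ne_of_gt hx)]; ring_nf
    have : x * (c₄ * x ^ (p-1)) = c₄ * x ^ p := by rw [← hxp]; ring
    nlinarith [this]
  have hev : ∀ᶠ k : ℕ in atTop, Y ≤ c₄ * (k:ℝ) ^ p - (k:ℝ) * Real.log 2 :=
    (hD'.comp tendsto_natCast_atTop_atTop).eventually_ge_atTop Y
  obtain ⟨K₆, hK₆⟩ := (hev.and (eventually_ge_atTop 4)).exists_forall_of_atTop
  refine ⟨K₆, fun k hk => ?_⟩
  obtain ⟨h1, h2⟩ := hK₆ k hk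
  have hkpos : (0:ℝ) ≤ (k:ℝ) := by positivity
  have hS : c₃ * (k:ℝ)^(θ+1) ≤ (Sf θ k : ℝ) := by
    have := Sf_lower hθ h2
    linarith [this]
  have hstep : c₄ * (k:ℝ)^p ≤ ((Sf θ k : ℝ) * Real.log 4) ^ ζ := by
    have hc : (c₃ * (k:ℝ)^(θ+1)) * Real.log 4 ≤ (Sf θ k : ℝ) * Real.log 4 :=
      mul_le_mul_of_nonneg_right hS (le_of_lt hlog4)
    have e1 : ((k:ℝ))^p = ((k:ℝ)^(θ+1))^ζ := by rw [hp, Real.rpow_mul hkpos]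
    calc c₄ * (k:ℝ)^p = ((c₃ * Real.log 4) ^ ζ) * ((k:ℝ)^(θ+1))^ζ := by rw [e1]
      _ = ((c₃ * Real.log 4) * (k:ℝ)^(θ+1)) ^ ζ :=
          (mul_rpow (by positivity) (by positivity)).symm
      _ ≤ ((Sf θ k : ℝ) * Real.log 4) ^ ζ := by
          apply rpow_le_rpow (by positivity) _ (le_of_lt hζ)
          calc c₃ * Real.log 4 * (k:ℝ)^(θ+1) = (c₃ * (k:ℝ)^(θ+1)) * Real.log 4 := by ring
            _ ≤ (Sf θ k : ℝ) * Real.log 4 := hc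
  linarith

/-- Bound on `Nat.clog 2 l₀`. -/
lemma clog_le (l₀ : ℕ) (hl₀ : 1 ≤ l₀) :
    ((Nat.clog 2 l₀ : ℕ) : ℝ) ≤ 1 + 2 * Real.log l₀ := by
  have hlog2 : (0:ℝ) < Real.log 2 := Real.log_pos one_lt_two
  have hlog2half : (1:ℝ)/2 ≤ Real.log 2 := by
    have := Real.log_two_gt_d9
    linarith
  rcases Nat.lt_or_ge l₀ 2 with h | h
  · interval_cases l₀
    · simp
  · have hll : (0:ℝ) ≤ Real.log l₀ := by
      apply Real.log_nonneg
      exact_mod_cast hl₀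
    set t := Nat.clog 2 l₀ with ht
    have h1 : 1 ≤ t := Nat.clog_pos (by norm_num) h
    have h2 : 2 ^ (t - 1) < l₀ := by
      have := Nat.pow_pred_clog_lt_self (b := 2) (by norm_num) (x := l₀) h
      simpa [Nat.pred_eq_sub_one] using this
    have h3 : ((2:ℝ)) ^ ((t-1 : ℕ)) < (l₀ : ℝ) := by exact_mod_cast h2
    have h4 : ((t-1:ℕ):ℝ) * Real.log 2 < Real.log l₀ := by
      rw [← Real.log_pow]
      apply Real.log_lt_log (by positivity) h3
    have h5 : ((t:ℝ)) = ((t-1:ℕ):ℝ) + 1 := by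
      rw [Nat.cast_sub h1]; ring
    have h6 : (0:ℝ) ≤ ((t-1:ℕ):ℝ) := by positivity
    nlinarith [h4, hlog2half, h6, hll]

end FS


lemma DepOn.mono' {d : ℕ} {E : Set (Config d)} {s s' : Set (Fin d → ℤ)}
    (hss : s ⊆ s') (h : DepOn E s) : DepOn E s' :=
  fun ω ω' hag => h ω ω' (fun x hx => hag x (hss hx))

lemma DepOn.univ' {d : ℕ} {s : Set (Fin d → ℤ)} : DepOn (Set.univ : Set (Config d)) s :=
  fun _ _ _ => by simp

lemma IncrEvent.univ' {d : ℕ} : IncrEvent (Set.univ : Set (Config d)) := fun _ _ _ _ => trivial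

/-- Monotonicity of `P` on increasing local events. -/
lemma mono_meas
    (d : ℕ) (hd : 1 ≤ d) (a b : ℝ)
    (P : ℝ → Measure (Config d))
    (hprob : ∀ u, a < u → u < b → IsProbabilityMeasure (P u))
    (β γ ζ : ℝ) (hβ : 0 < β) (hγ : 0 < γ) (hζ : 0 < ζ)
    (Cd cd : ℝ) (hCd : 0 < Cd) (hcd : 0 < cd)
    (hdec : ∀ L s : ℕ, 1 ≤ L → 1 ≤ s → ∀ x₁ x₂ : Fin d → ℤ, linf (x₁ - x₂) = s * L →
      ∀ u u' : ℝ, a < u → u < u' → u' < b →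
        ∀ A₁ A₂ : Set (Config d), IncrEvent A₁ → IncrEvent A₂ →
          DepOn A₁ {y | linf (y - x₁) ≤ L} → DepOn A₂ {y | linf (y - x₂) ≤ L} →
          (P u (A₁ ∩ A₂)).toReal ≤ (P u' A₁).toReal * (P u' A₂).toReal +
            Cd * Real.exp (-cd * min ((u' - u) ^ β * (s : ℝ) ^ γ)
              (Real.exp ((Real.log L) ^ ζ))))
    (u₁ u₂ : ℝ) (h1 : a < u₁) (h12 : u₁ < u₂) (h2 : u₂ < b)
    (A : Set (Config d)) (hA : IncrEvent A) (x₀ : Fin d → ℤ) (ρ : ℕ)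
    (hdep : DepOn A {y | linf (y - x₀) ≤ ρ}) :
    P u₁ A ≤ P u₂ A := by
  haveI := hprob u₁ h1 (lt_trans h12 h2)
  haveI := hprob u₂ (lt_trans h1 h12) h2
  rw [← ENNReal.toReal_le_toReal (measure_ne_top _ _) (measure_ne_top _ _)]
  apply le_of_forall_pos_le_add
  intro ε hε
  -- choose L
  have hLtend : Tendsto (fun L : ℕ => Cd * Real.exp (-cd * Real.exp ((Real.log L) ^ ζ)))
      atTop (𝓝 (Cd * 0)) := by
    apply Tendsto.const_mul
    apply Real.tendsto_exp_atBot.comp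
    have h5 : Tendsto (fun L : ℕ => Real.exp ((Real.log L) ^ ζ)) atTop atTop := by
      apply Real.tendsto_exp_atTop.comp
      apply (tendsto_rpow_atTop hζ).comp
      exact Real.tendsto_log_atTop.comp tendsto_natCast_atTop_atTop
    exact (tendsto_neg_atTop_atBot.comp (h5.const_mul_atTop hcd)).congr (fun L => by
      simp only [Function.comp_apply, neg_mul])
  rw [mul_zero] at hLtend
  have hev : ∀ᶠ L : ℕ in atTop,
      Cd * Real.exp (-cd * Real.exp ((Real.log L) ^ ζ)) < ε :=
    hLtend.eventually_lt_const hε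
  obtain ⟨L, hL⟩ := ((hev.and (eventually_ge_atTop ρ)).and (eventually_ge_atTop 1)).exists
  obtain ⟨⟨hLε, hLρ⟩, hL1⟩ := hL
  -- choose s
  have hstend : Tendsto (fun s : ℕ => (u₂ - u₁) ^ β * (s : ℝ) ^ γ) atTop atTop := by
    apply Tendsto.const_mul_atTop (rpow_pos_of_pos (by linarith) β)
    exact (tendsto_rpow_atTop hγ).comp tendsto_natCast_atTop_atTop
  obtain ⟨s, hsE, hs1⟩ :=
    ((hstend.eventually_ge_atTop (Real.exp ((Real.log L) ^ ζ))).and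
      (eventually_ge_atTop 1)).exists
  -- the far away point
  have hd0 : 0 < d := hd
  set i₀ : Fin d := ⟨0, hd0⟩ with hi₀
  set x₂ : Fin d → ℤ := fun j => x₀ j + (if j = i₀ then ((s * L : ℕ) : ℤ) else 0) with hx₂
  have hlinf : linf (x₀ - x₂) = s * L := by
    have happ : ∀ j, (x₀ - x₂) j = -(if j = i₀ then ((s * L : ℕ) : ℤ) else 0) := by
      intro j; simp [hx₂]
    have h := linf_eq_of_max (x₀ - x₂) i₀ (by
      intro i
      rw [happ i, happ i₀, if_pos rfl]
      by_cases hi : i = i₀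
      · rw [if_pos hi]
      · rw [if_neg hi]; simp)
    rw [h, happ i₀, if_pos rfl]
    simp only [Int.natAbs_neg, Int.natAbs_natCast]
  have hrad : DepOn A {y | linf (y - x₀) ≤ L} :=
    DepOn.mono' (fun y hy => le_trans hy hLρ) hdep
  have key := hdec L s hL1 hs1 x₀ x₂ hlinf u₁ u₂ h1 h12 h2 A Set.univ hA IncrEvent.univ'
    hrad DepOn.univ'
  rw [Set.inter_univ, measure_univ] at key
  simp only [ENNReal.toReal_one, mul_one] at key
  have hmin : min ((u₂ - u₁) ^ β * (s : ℝ) ^ γ) (Real.exp ((Real.log L) ^ ζ))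
      = Real.exp ((Real.log L) ^ ζ) := min_eq_right hsE
  rw [hmin] at key
  exact le_trans key (by linarith [hLε])



lemma depOn_mono {d : ℕ} {E : Set (Config d)} {s s' : Set (Fin d → ℤ)}
    (hss : s ⊆ s') (h : DepOn E s) : DepOn E s' :=
  fun ω ω' hag => h ω ω' (fun x hx => hag x (hss hx))

lemma depOn_inter {d : ℕ} {E F : Set (Config d)} {s : Set (Fin d → ℤ)}
    (hE : DepOn E s) (hF : DepOn F s) : DepOn (E ∩ F) s := by
  intro ω ω' hag
  simp only [Set.mem_inter_iff, hE ω ω' hag, hF ω ω' hag]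

lemma depOn_iUnion {d : ℕ} {ι : Sort*} {E : ι → Set (Config d)} {s : Set (Fin d → ℤ)}
    (h : ∀ i, DepOn (E i) s) : DepOn (⋃ i, E i) s := by
  intro ω ω' hag
  simp only [Set.mem_iUnion]
  exact exists_congr fun i => h i ω ω' hag

lemma incr_inter {d : ℕ} {E F : Set (Config d)} (hE : IncrEvent E) (hF : IncrEvent F) :
    IncrEvent (E ∩ F) := fun ω ω' h hm => ⟨hE ω ω' h hm.1, hF ω ω' h hm.2⟩

lemma incr_iUnion {d : ℕ} {ι : Sort*} {E : ι → Set (Config d)}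
    (h : ∀ i, IncrEvent (E i)) : IncrEvent (⋃ i, E i) := by
  intro ω ω' hle hm
  rw [Set.mem_iUnion] at hm ⊢
  obtain ⟨i, hi⟩ := hm
  exact ⟨i, h i ω ω' hle hi⟩

section Gfacts

variable {d : ℕ} (θ : ℝ)
variable (LL : ℕ → ℕ → ℕ → ℕ)
variable (G0 : ℕ → (Fin d → ℤ) → Set (Config d))
variable (G : ℕ → ℕ → ℕ → ℕ → (Fin d → ℤ) → Set (Config d))
variable (l₀ r₀ L₀ : ℕ)

/-- `G` is increasing. -/
lemma G_incr
    (hseedIncr : ∀ L₀ x, IncrEvent (G0 L₀ x))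
    (hG0 : ∀ l₀ r₀ L₀ x, G l₀ r₀ L₀ 0 x = G0 L₀ x)
    (hGcasc : ∀ l₀ r₀ L₀ k x, G l₀ r₀ L₀ (k + 1) x =
      ⋃ (x₁ ∈ boxLam x (LL l₀ L₀ k) (LL l₀ L₀ (k + 1)))
        (x₂ ∈ boxLam x (LL l₀ L₀ k) (LL l₀ L₀ (k + 1)))
        (_ : (r₀ * 2 ^ ⌊(k : ℝ) ^ θ⌋₊) * LL l₀ L₀ k < linf (x₁ - x₂)),
        G l₀ r₀ L₀ k x₁ ∩ G l₀ r₀ L₀ k x₂) :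
    ∀ k x, IncrEvent (G l₀ r₀ L₀ k x) := by
  intro k
  induction k with
  | zero => intro x; rw [hG0]; exact hseedIncr L₀ x
  | succ k ih =>
    intro x
    rw [hGcasc]
    exact incr_iUnion fun x₁ => incr_iUnion fun _ => incr_iUnion fun x₂ =>
      incr_iUnion fun _ => incr_iUnion fun _ => incr_inter (ih x₁) (ih x₂)

/-- Locality of `G`. -/
lemma G_dep
    (hL₀ : 1 ≤ L₀)
    (hLL0 : ∀ l₀ L₀, LL l₀ L₀ 0 = L₀)
    (hLLs : ∀ l₀ L₀ k, LL l₀ L₀ (k + 1) = (l₀ * 4 ^ ⌊(k : ℝ) ^ θ⌋₊) * LL l₀ L₀ k)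
    (hLpos : ∀ k, 1 ≤ LL l₀ L₀ k)
    (hseedDep : ∀ L₀ x, DepOn (G0 L₀ x)
      {y | ∀ i, x i - (L₀ : ℤ) ≤ y i ∧ y i < x i + 3 * (L₀ : ℤ)})
    (hG0 : ∀ l₀ r₀ L₀ x, G l₀ r₀ L₀ 0 x = G0 L₀ x)
    (hGcasc : ∀ l₀ r₀ L₀ k x, G l₀ r₀ L₀ (k + 1) x =
      ⋃ (x₁ ∈ boxLam x (LL l₀ L₀ k) (LL l₀ L₀ (k + 1)))
        (x₂ ∈ boxLam x (LL l₀ L₀ k) (LL l₀ L₀ (k + 1)))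
        (_ : (r₀ * 2 ^ ⌊(k : ℝ) ^ θ⌋₊) * LL l₀ L₀ k < linf (x₁ - x₂)),
        G l₀ r₀ L₀ k x₁ ∩ G l₀ r₀ L₀ k x₂) :
    ∀ k x, (∀ i, ((LL l₀ L₀ k : ℕ) : ℤ) ∣ x i) →
      DepOn (G l₀ r₀ L₀ k x)
        {y | ∀ i, x i - (L₀ : ℤ) ≤ y i ∧ y i < x i + (LL l₀ L₀ k : ℤ) + 2 * (L₀ : ℤ)} := by
  intro k
  induction k with
  | zero =>
    intro x _
    rw [hG0]
    apply depOn_mono _ (hseedDep L₀ x)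
    intro y hy i
    have := hy i
    rw [hLL0]
    omega
  | succ k ih =>
    intro x hx
    rw [hGcasc]
    have hdvd : ((LL l₀ L₀ k : ℕ) : ℤ) ∣ ((LL l₀ L₀ (k+1) : ℕ) : ℤ) := by
      rw [hLLs]
      push_cast
      exact dvd_mul_left _ _
    apply depOn_iUnion; intro x₁
    apply depOn_iUnion; intro hx₁
    apply depOn_iUnion; intro x₂
    apply depOn_iUnion; intro hx₂
    apply depOn_iUnion; intro _
    -- the key containment for a point z₁ ∈ boxLam
    have key : ∀ z : Fin d → ℤ, z ∈ boxLam x (LL l₀ L₀ k) (LL l₀ L₀ (k+1)) →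
        {y : Fin d → ℤ | ∀ i, z i - (L₀ : ℤ) ≤ y i ∧ y i < z i + (LL l₀ L₀ k : ℤ) + 2 * L₀} ⊆
        {y : Fin d → ℤ | ∀ i, x i - (L₀ : ℤ) ≤ y i ∧ y i < x i + (LL l₀ L₀ (k+1) : ℤ) + 2 * L₀}
        := by
      intro z hz y hy i
      obtain ⟨hzlat, hzbox⟩ := hz
      have h1 := (hzbox i).1
      have h2 := (hzbox i).2
      have h3 := (hy i).1
      have h4 := (hy i).2
      -- z i + LL k ≤ x i + LL (k+1)
      have hd1 : ((LL l₀ L₀ k : ℕ) : ℤ) ∣ (z i - x i) :=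
        dvd_sub (hzlat i) (dvd_trans hdvd (hx i))
      have hd2 : ((LL l₀ L₀ k : ℕ) : ℤ) ∣ ((x i + (LL l₀ L₀ (k+1) : ℤ)) - z i) := by
        have : ((x i + (LL l₀ L₀ (k+1) : ℤ)) - z i)
            = (LL l₀ L₀ (k+1) : ℤ) - (z i - x i) := by ring
        rw [this]
        exact dvd_sub hdvd hd1
      have hpos : 0 < (x i + (LL l₀ L₀ (k+1) : ℤ)) - z i := by omega
      have hge : ((LL l₀ L₀ k : ℕ) : ℤ) ≤ (x i + (LL l₀ L₀ (k+1) : ℤ)) - z i :=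
        Int.le_of_dvd hpos hd2
      constructor <;> omega
    exact depOn_inter
      (depOn_mono (key x₁ hx₁) (ih x₁ (fun i => (hx₁.1 i))))
      (depOn_mono (key x₂ hx₂) (ih x₂ (fun i => (hx₂.1 i))))

/-- box is covered by an explicit finset. -/
lemma box_cover (x : Fin d → ℤ) (Lk l' : ℕ) (hLk : 1 ≤ Lk)
    (hx : ∀ i, ((l' * Lk : ℕ) : ℤ) ∣ x i) :
    boxLam x Lk (l' * Lk) ⊆
      ↑((Fintype.piFinset (fun _ : Fin d => Finset.range l')).image
        (fun t i => x i + (Lk : ℤ) * t i)) := by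
  intro y hy
  obtain ⟨hylat, hybox⟩ := hy
  simp only [Finset.coe_image, Set.mem_image, Finset.mem_coe, Fintype.mem_piFinset,
    Finset.mem_range]
  have hxdvd : ∀ i, ((Lk : ℕ) : ℤ) ∣ x i := fun i =>
    dvd_trans (by exact_mod_cast (dvd_mul_left Lk l' : Lk ∣ l' * Lk)) (hx i)
  have hm : ∀ i, ∃ m : ℤ, y i - x i = (Lk : ℤ) * m ∧ 0 ≤ m ∧ m < l' := by
    intro i
    obtain ⟨m, hm⟩ := dvd_sub (hylat i) (hxdvd i)
    refine ⟨m, hm, ?_, ?_⟩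
    · have h1 := (hybox i).1
      have hLk' : (0:ℤ) < (Lk : ℤ) := by exact_mod_cast hLk
      nlinarith
    · have h2 := (hybox i).2
      have hLk' : (0:ℤ) < (Lk : ℤ) := by exact_mod_cast hLk
      have : (Lk:ℤ) * m < (Lk:ℤ) * l' := by
        push_cast at h2 ⊢
        nlinarith
      exact lt_of_mul_lt_mul_left this (by positivity)
  choose m hm1 hm2 hm3 using hm
  refine ⟨fun i => (m i).toNat, fun i => ?_, ?_⟩
  · show (m i).toNat < l'
    have := hm3 i
    have h0 := hm2 i
    omega
  · funext i
    show x i + (Lk : ℤ) * ((m i).toNat : ℤ) = y i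
    have h0 := hm2 i
    have := hm1 i
    rw [Int.toNat_of_nonneg h0]
    omega

lemma box_card (x : Fin d → ℤ) (Lk l' : ℕ) :
    ((Fintype.piFinset (fun _ : Fin d => Finset.range l')).image
      (fun t i => x i + (Lk : ℤ) * t i)).card ≤ l' ^ d := by
  apply le_trans (Finset.card_image_le)
  rw [Fintype.card_piFinset]
  simp [Finset.prod_const]

end Gfacts

lemma exp_arith {d t F Sk Sk1 B p1 p2 ν : ℕ} (h5 : 2*d*t + (4*d+1)*F + 1 ≤ B + Sk)
    (h6 : Sk1 = Sk + F) (h7 : p2 = p1 + p1) (h8 : ν = 2*d*t + 4*d*F) :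
    ν + (B + Sk1 + p2 + 1) ≤ B + Sk + p1 + (B + Sk + p1) := by linarith

lemma two_pow_mul_half_pow_le {a m n : ℕ} (h : a + n ≤ m) :
    (2:ℝ)^a * (1/2:ℝ)^m ≤ (1/2:ℝ)^n := by
  have ham : a ≤ m := by omega
  have e1 : (1/2:ℝ)^m = (1/2:ℝ)^(m-a) * (1/2:ℝ)^a := by
    rw [← pow_add]
    congr 1
    omega
  have e2 : (2:ℝ)^a * ((1/2:ℝ)^(m-a) * (1/2:ℝ)^a) = (1/2:ℝ)^(m-a) * ((2:ℝ)^a * (1/2:ℝ)^a) := by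
    ring
  have e3 : (2:ℝ)^a * (1/2:ℝ)^a = 1 := by
    rw [← mul_pow]
    norm_num
  rw [e1, e2, e3, mul_one]
  apply pow_le_pow_of_le_one (by norm_num) (by norm_num)
  omega

lemma Sf_upper (hθ' : 0 ≤ θ) (k : ℕ) : (Sf θ (k+1) : ℝ) ≤ ((k:ℝ)+1)^(θ+1) := by
  have h1 : Sf θ (k+1) ≤ (k+1) * Ff θ k := by
    calc Sf θ (k+1) = ∑ j ∈ Finset.range (k+1), Ff θ j := rfl
      _ ≤ ∑ _j ∈ Finset.range (k+1), Ff θ k := by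
          apply Finset.sum_le_sum
          intro j hj
          exact Ff_mono hθ' (by
            have := Finset.mem_range.1 hj
            omega)
      _ = (k+1) * Ff θ k := by
          rw [Finset.sum_const, Finset.card_range, smul_eq_mul]
  have h2 : ((k:ℝ)+1) * (Ff θ k : ℝ) ≤ ((k:ℝ)+1) * ((k:ℝ)+1)^θ := by
    apply mul_le_mul_of_nonneg_left _ (by positivity)
    calc (Ff θ k : ℝ) ≤ (k:ℝ)^θ := Ff_le k
      _ ≤ ((k:ℝ)+1)^θ := rpow_le_rpow (by positivity) (by linarith) hθ'
  have h3 : ((k:ℝ)+1) * ((k:ℝ)+1)^θ = ((k:ℝ)+1)^(θ+1) := by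
    rw [rpow_add (by positivity), rpow_one]
    ring
  calc (Sf θ (k+1) : ℝ) ≤ (((k+1) * Ff θ k : ℕ) : ℝ) := by exact_mod_cast h1
    _ = ((k:ℝ)+1) * (Ff θ k : ℝ) := by push_cast; ring
    _ ≤ ((k:ℝ)+1)^(θ+1) := by rw [← h3] at *; linarith

lemma Ff_le_pow (hθ' : 0 ≤ θ) (k : ℕ) : (Ff θ k : ℝ) ≤ ((k:ℝ)+1)^(θ+1) := by
  calc (Ff θ k : ℝ) ≤ (k:ℝ)^θ := Ff_le k
    _ ≤ ((k:ℝ)+1)^θ := rpow_le_rpow (by positivity) (by linarith) hθ'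
    _ ≤ ((k:ℝ)+1)^(θ+1) := rpow_le_rpow_of_exponent_le (by
        have : (0:ℝ) ≤ (k:ℝ) := by positivity
        linarith) (by linarith)

end DTC

/-- Abstract decoupling-to-cascading bound (Theorem 6.1, increasing case).
`P u` is a family of probability measures on `{0,1}^{ℤ^d}` satisfying the weak decoupling
inequality **D**(a) with exponents `β, γ, ζ > 0`. Fix `θ > 1` with `(θ+1)ζ > 1`, scales
`l_k = l₀4^{⌊k^θ⌋}`, `r_k = r₀2^{⌊k^θ⌋}`, `L_{k+1} = l_k L_k` (encoded in `LL l₀ L₀ k`), seeds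
`G0 L₀ x` (increasing, local on `x + [−L₀,3L₀)^d`, with `sup_x P^{u'}[G0 L₀ x] → 0` as
`L₀ → ∞`), and cascading events `G l₀ r₀ L₀ (k+1) x`. Then for every `u ∈ (a,u')` there is a
constant `C₂ = C₂(u,u')` such that for all `l₀ ≥ 1`, all `r₀ ≥ C₂(1+log l₀)^{2/γ}` and all
sufficiently large `L₀`, `sup_{x ∈ L_kℤ^d} P^u[G_{x,k}] ≤ 2^{−2^k}` for all `k`. -/
theorem decoupling_to_cascading
    (d : ℕ) (hd : 1 ≤ d) (a b : ℝ) (hab : a < b)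
    (P : ℝ → Measure (Config d))
    (hprob : ∀ u, a < u → u < b → IsProbabilityMeasure (P u))
    (β γ ζ : ℝ) (hβ : 0 < β) (hγ : 0 < γ) (hζ : 0 < ζ)
    (Cd cd : ℝ) (hCd : 0 < Cd) (hcd : 0 < cd)
    (hdec : ∀ L s : ℕ, 1 ≤ L → 1 ≤ s → ∀ x₁ x₂ : Fin d → ℤ, linf (x₁ - x₂) = s * L →
      ∀ u u' : ℝ, a < u → u < u' → u' < b →
        ∀ A₁ A₂ : Set (Config d), IncrEvent A₁ → IncrEvent A₂ →
          DepOn A₁ {y | linf (y - x₁) ≤ L} → DepOn A₂ {y | linf (y - x₂) ≤ L} →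
          (P u (A₁ ∩ A₂)).toReal ≤ (P u' A₁).toReal * (P u' A₂).toReal +
            Cd * Real.exp (-cd * min ((u' - u) ^ β * (s : ℝ) ^ γ)
              (Real.exp ((Real.log L) ^ ζ))))
    (θ : ℝ) (hθ : 1 < θ) (hθζ : (θ + 1) * ζ > 1)
    (LL : ℕ → ℕ → ℕ → ℕ)
    (hLL0 : ∀ l₀ L₀, LL l₀ L₀ 0 = L₀)
    (hLLs : ∀ l₀ L₀ k, LL l₀ L₀ (k + 1) = (l₀ * 4 ^ ⌊(k : ℝ) ^ θ⌋₊) * LL l₀ L₀ k)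
    (G0 : ℕ → (Fin d → ℤ) → Set (Config d))
    (hseedIncr : ∀ L₀ x, IncrEvent (G0 L₀ x))
    (hseedDep : ∀ L₀ x, DepOn (G0 L₀ x)
      {y | ∀ i, x i - (L₀ : ℤ) ≤ y i ∧ y i < x i + 3 * (L₀ : ℤ)})
    (G : ℕ → ℕ → ℕ → ℕ → (Fin d → ℤ) → Set (Config d))
    (hG0 : ∀ l₀ r₀ L₀ x, G l₀ r₀ L₀ 0 x = G0 L₀ x)
    (hGcasc : ∀ l₀ r₀ L₀ k x, G l₀ r₀ L₀ (k + 1) x =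
      ⋃ (x₁ ∈ boxLam x (LL l₀ L₀ k) (LL l₀ L₀ (k + 1)))
        (x₂ ∈ boxLam x (LL l₀ L₀ k) (LL l₀ L₀ (k + 1)))
        (_ : (r₀ * 2 ^ ⌊(k : ℝ) ^ θ⌋₊) * LL l₀ L₀ k < linf (x₁ - x₂)),
        G l₀ r₀ L₀ k x₁ ∩ G l₀ r₀ L₀ k x₂)
    (u' : ℝ) (hu'a : a < u') (hu'b : u' < b)
    (hlim : Tendsto (fun L₀ : ℕ => ⨆ (x : Fin d → ℤ) (_ : x ∈ latticeZ d L₀), P u' (G0 L₀ x))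
      atTop (𝓝 0)) :
    ∀ u : ℝ, a < u → u < u' →
      ∃ C₂ : ℝ, 0 < C₂ ∧
        ∀ l₀ : ℕ, 1 ≤ l₀ → ∀ r₀ : ℕ, C₂ * (1 + Real.log l₀) ^ (2 / γ) ≤ (r₀ : ℝ) →
          ∃ Nbig : ℕ, ∀ L₀ : ℕ, Nbig ≤ L₀ →
            ∀ k : ℕ, ∀ x ∈ latticeZ d (LL l₀ L₀ k),
              P u (G l₀ r₀ L₀ k x) ≤ ENNReal.ofReal ((1 / 2 : ℝ) ^ (2 ^ k)) := by
  intro u hau huu'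
  have hub : u < b := lt_trans huu' hu'b
  set δ : ℝ := u' - u with hδdef
  have hδpos : 0 < δ := by simp [hδdef]; linarith
  have hlog2 : (0:ℝ) < Real.log 2 := Real.log_pos one_lt_two
  -- fixed constants
  obtain ⟨K₇, hK₇1, hK₇⟩ := DTC.exists_K7 hθ d
  set W : ℕ := DTC.Ff θ K₇ with hWdef
  obtain ⟨Cθ, hCθ1, hCθ⟩ := DTC.exists_Ctheta hθ
  obtain ⟨Cg, hCg1, hCg⟩ := DTC.exists_Cg hθ hβ hγ
  set M : ℝ := |Real.log Cd| +
    ((12*d : ℕ) + ((4*d+1)*W : ℕ) + 2 + (4*(d:ℝ))*Cθ + Cθ + 4) * Real.log 2 with hMdef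
  have hMpos : 0 < M := by
    have h1 : (0:ℝ) ≤ |Real.log Cd| := abs_nonneg _
    have h2 : (0:ℝ) < ((12*d : ℕ) + ((4*d+1)*W : ℕ) + 2 + (4*(d:ℝ))*Cθ + Cθ + 4) := by
      have : (0:ℝ) ≤ (4*(d:ℝ))*Cθ := by positivity
      have h3 : (1:ℝ) ≤ Cθ := hCθ1
      positivity
    nlinarith
  set X : ℝ := M * Cg / (cd * δ ^ β) with hXdef
  have hXpos : 0 < X := by
    have : (0:ℝ) < δ ^ β := Real.rpow_pos_of_pos hδpos β
    positivity
  set C₂ : ℝ := 6 * (X ^ (1/γ) + 1) with hC₂def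
  have hC₂6 : 6 ≤ C₂ := by
    have : (0:ℝ) ≤ X ^ (1/γ) := Real.rpow_nonneg (le_of_lt hXpos) _
    rw [hC₂def]; nlinarith
  refine ⟨C₂, by linarith, ?_⟩
  intro l₀ hl₀ r₀ hr₀
  have hlogl₀ : (0:ℝ) ≤ Real.log l₀ := Real.log_nonneg (by exact_mod_cast hl₀)
  have h1logl₀ : (1:ℝ) ≤ 1 + Real.log l₀ := by linarith
  have hpow1 : (1:ℝ) ≤ (1 + Real.log l₀) ^ (2/γ) :=
    Real.one_le_rpow h1logl₀ (by positivity)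
  have hr₀C₂ : C₂ ≤ (r₀ : ℝ) := by nlinarith
  have hr₀6 : 6 ≤ r₀ := by exact_mod_cast le_trans hC₂6 hr₀C₂
  set t : ℕ := Nat.clog 2 l₀ with htdef
  set B : ℕ := 2*d*t + (4*d+1)*W + 1 with hBdef
  -- property (i)
  have hi : ∀ k, 2*d*t + (4*d+1) * DTC.Ff θ k + 1 ≤ B + DTC.Sf θ k := by
    intro k
    rcases le_or_gt k K₇ with hk | hk
    · have h1 : DTC.Ff θ k ≤ W := DTC.Ff_mono (by linarith) hk
      have h2 : (4*d+1) * DTC.Ff θ k ≤ (4*d+1) * W := Nat.mul_le_mul_left _ h1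
      omega
    · have h1 := hK₇ k (le_of_lt hk)
      omega
  -- b1 claim
  have hb1 : ∀ k : ℕ, M * (1 + Real.log l₀) * 2^k ≤
      cd * ((δ * (1/2:ℝ)^(k+2)) ^ β * (((r₀ * 2^(DTC.Ff θ k) : ℕ):ℝ)/6) ^ γ) := by
    intro k
    set F : ℕ := DTC.Ff θ k with hFdef
    have hδβ : (0:ℝ) < δ ^ β := Real.rpow_pos_of_pos hδpos β
    have hr₀pos : (0:ℝ) < (r₀:ℝ) := by
      have : (6:ℝ) ≤ (r₀:ℝ) := by exact_mod_cast hr₀6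
      linarith
    -- `X * (1+log l₀) ≤ (r₀/6)^γ`
    have hr6 : (X^(1/γ)+1) * (1+Real.log l₀)^(2/γ) ≤ (r₀ : ℝ)/6 := by
      rw [hC₂def] at hr₀
      linarith
    have hfac : X * (1 + Real.log l₀) ≤ ((r₀:ℝ)/6) ^ γ := by
      have h1 : ((X^(1/γ)+1) * (1+Real.log l₀)^(2/γ)) ^ γ ≤ ((r₀:ℝ)/6)^γ :=
        Real.rpow_le_rpow (by positivity) hr6 (le_of_lt hγ)
      have h2 : ((X^(1/γ)+1) * (1+Real.log l₀)^(2/γ)) ^ γ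
          = (X^(1/γ)+1)^γ * ((1+Real.log l₀)^(2/γ))^γ :=
        Real.mul_rpow (by positivity) (by positivity)
      have h3 : X ≤ (X^(1/γ)+1)^γ := by
        have e1 : (X^(1/γ))^γ = X := by
          rw [← Real.rpow_mul (le_of_lt hXpos), one_div_mul_cancel (ne_of_gt hγ),
            Real.rpow_one]
        calc X = (X^(1/γ))^γ := e1.symm
          _ ≤ (X^(1/γ)+1)^γ := Real.rpow_le_rpow (by positivity) (by linarith) (le_of_lt hγ)
      have h4 : ((1+Real.log l₀)^(2/γ))^γ = (1+Real.log l₀)^((2:ℝ)) := by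
        rw [← Real.rpow_mul (by linarith), div_mul_cancel₀]
        exact ne_of_gt hγ
      have h6 : 1 + Real.log l₀ ≤ (1+Real.log l₀)^((2:ℝ)) := by
        calc 1 + Real.log l₀ = (1+Real.log l₀)^((1:ℝ)) := (Real.rpow_one _).symm
          _ ≤ (1+Real.log l₀)^((2:ℝ)) :=
            Real.rpow_le_rpow_of_exponent_le h1logl₀ one_le_two
      calc X * (1 + Real.log l₀) ≤ (X^(1/γ)+1)^γ * (1+Real.log l₀)^((2:ℝ)) := by
            apply mul_le_mul h3 h6 (by linarith) (by positivity)
        _ = ((X^(1/γ)+1) * (1+Real.log l₀)^(2/γ)) ^ γ := by rw [h2, h4]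
        _ ≤ ((r₀:ℝ)/6)^γ := h1
    -- power bookkeeping in base 2
    have hhalfpow : ((1/2:ℝ)^(k+2)) = (2:ℝ) ^ (-(((k:ℝ)+2))) := by
      rw [DTC.half_pow_eq_exp, Real.rpow_def_of_pos two_pos]
      push_cast
      ring_nf
    have h2F : ((2:ℝ)^F) = (2:ℝ) ^ ((F:ℝ)) := (Real.rpow_natCast 2 F).symm
    have h2k : ((2:ℝ)^k) = (2:ℝ) ^ ((k:ℝ)) := (Real.rpow_natCast 2 k).symm
    have hFγ : ((k:ℝ)^θ - 1) * γ ≤ (F:ℝ) * γ :=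
      mul_le_mul_of_nonneg_right (DTC.Ff_ge k) (le_of_lt hγ)
    have hkey : (2:ℝ)^((k:ℝ)) ≤ Cg * ((2:ℝ)^(-(((k:ℝ)+2))))^β * (2:ℝ)^((F:ℝ)*γ) := by
      have e1 : ((2:ℝ)^(-(((k:ℝ)+2))))^β = (2:ℝ)^(-((k:ℝ)+2)*β) :=
        (Real.rpow_mul (le_of_lt two_pos) _ _).symm
      rw [e1]
      have e2 : (2:ℝ)^((k:ℝ)) =
          (2:ℝ)^((k:ℝ) + ((k:ℝ)+2)*β + γ - γ*(k:ℝ)^θ) *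
            ((2:ℝ)^(-((k:ℝ)+2)*β) * (2:ℝ)^(((k:ℝ)^θ-1)*γ)) := by
        rw [← Real.rpow_add two_pos, ← Real.rpow_add two_pos]
        ring_nf
      rw [e2]
      have e3 : (2:ℝ)^((k:ℝ) + ((k:ℝ)+2)*β + γ - γ*(k:ℝ)^θ) ≤ Cg := hCg k
      have e4 : (2:ℝ)^(((k:ℝ)^θ-1)*γ) ≤ (2:ℝ)^((F:ℝ)*γ) :=
        Real.rpow_le_rpow_of_exponent_le one_le_two hFγ
      have e5 : (0:ℝ) < (2:ℝ)^(-((k:ℝ)+2)*β) := Real.rpow_pos_of_pos two_pos _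
      calc (2:ℝ)^((k:ℝ) + ((k:ℝ)+2)*β + γ - γ*(k:ℝ)^θ) *
            ((2:ℝ)^(-((k:ℝ)+2)*β) * (2:ℝ)^(((k:ℝ)^θ-1)*γ))
          ≤ Cg * ((2:ℝ)^(-((k:ℝ)+2)*β) * (2:ℝ)^((F:ℝ)*γ)) := by
            apply mul_le_mul e3 _ (by positivity) (by linarith)
            apply mul_le_mul_of_nonneg_left e4 (le_of_lt e5)
        _ = Cg * (2:ℝ)^(-((k:ℝ)+2)*β) * (2:ℝ)^((F:ℝ)*γ) := by ring
    -- expand the RHS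
    have hcast : ((r₀ * 2^F : ℕ):ℝ) = (r₀:ℝ) * 2^F := by push_cast; ring
    have hexp : (((r₀ * 2^F : ℕ):ℝ)/6) ^ γ = ((r₀:ℝ)/6)^γ * (2:ℝ)^((F:ℝ)*γ) := by
      rw [hcast]
      have e1 : (r₀:ℝ) * 2^F / 6 = ((r₀:ℝ)/6) * 2^F := by ring
      rw [e1, Real.mul_rpow (by positivity) (by positivity), h2F,
        ← Real.rpow_mul (le_of_lt two_pos)]
    have hexpβ : (δ * (1/2:ℝ)^(k+2)) ^ β = δ^β * ((2:ℝ)^(-(((k:ℝ)+2))))^β := by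
      rw [Real.mul_rpow (le_of_lt hδpos) (by positivity), hhalfpow]
    rw [hexp, hexpβ]
    have hXeq : cd * δ^β * X = M * Cg := by
      rw [hXdef]
      field_simp
    have hfinal : M * (1 + Real.log l₀) * (2:ℝ)^((k:ℝ)) ≤
        cd * (δ^β * ((2:ℝ)^(-(((k:ℝ)+2))))^β * (((r₀:ℝ)/6)^γ * (2:ℝ)^((F:ℝ)*γ))) := by
      have hstep1 : M * (1 + Real.log l₀) * (2:ℝ)^((k:ℝ)) ≤
          M * (1 + Real.log l₀) * (Cg * ((2:ℝ)^(-(((k:ℝ)+2))))^β * (2:ℝ)^((F:ℝ)*γ)) := by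
        apply mul_le_mul_of_nonneg_left hkey
        positivity
      have hstep2 : M * (1 + Real.log l₀) * (Cg * ((2:ℝ)^(-(((k:ℝ)+2))))^β * (2:ℝ)^((F:ℝ)*γ))
          = (M * Cg) * (1 + Real.log l₀) * ((2:ℝ)^(-(((k:ℝ)+2))))^β * (2:ℝ)^((F:ℝ)*γ) := by
        ring
      have hstep3 : (M * Cg) * (1 + Real.log l₀) ≤ cd * δ^β * ((r₀:ℝ)/6)^γ := by
        calc (M * Cg) * (1 + Real.log l₀) = (cd * δ^β) * (X * (1 + Real.log l₀)) := by
              rw [← hXeq]; ring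
          _ ≤ (cd * δ^β) * ((r₀:ℝ)/6)^γ := by
              apply mul_le_mul_of_nonneg_left hfac (by positivity)
          _ = cd * δ^β * ((r₀:ℝ)/6)^γ := by ring
      calc M * (1 + Real.log l₀) * (2:ℝ)^((k:ℝ))
          ≤ (M * Cg) * (1 + Real.log l₀) * ((2:ℝ)^(-(((k:ℝ)+2))))^β * (2:ℝ)^((F:ℝ)*γ) := by
            rw [← hstep2]; exact hstep1
        _ ≤ (cd * δ^β * ((r₀:ℝ)/6)^γ) * ((2:ℝ)^(-(((k:ℝ)+2))))^β * (2:ℝ)^((F:ℝ)*γ) := by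
            apply mul_le_mul_of_nonneg_right _ (by positivity)
            apply mul_le_mul_of_nonneg_right hstep3 (by positivity)
        _ = cd * (δ^β * ((2:ℝ)^(-(((k:ℝ)+2))))^β * (((r₀:ℝ)/6)^γ * (2:ℝ)^((F:ℝ)*γ))) := by
            ring
    rw [h2k]
    exact hfinal
  -- K₆ & Y
  set Y : ℝ := Real.log (max 1 (M * (1 + Real.log l₀) / cd)) with hYdef
  obtain ⟨K₆, hK₆⟩ := DTC.exists_K6 hθ hζ hθζ Y
  -- choose Nbig
  have hseedN : ∃ N₁ : ℕ, ∀ L₀ : ℕ, N₁ ≤ L₀ →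
      (⨆ (x : Fin d → ℤ) (_ : x ∈ latticeZ d L₀), P u' (G0 L₀ x)) <
        ENNReal.ofReal ((1/2:ℝ)^(B+2)) := by
    have hε : (0:ℝ≥0∞) < ENNReal.ofReal ((1/2:ℝ)^(B+2)) := by
      rw [ENNReal.ofReal_pos]; positivity
    exact Filter.eventually_atTop.mp (hlim.eventually_lt_const hε)
  obtain ⟨N₁, hN₁⟩ := hseedN
  have hlogN : ∃ N₂ : ℕ, ∀ L₀ : ℕ, N₂ ≤ L₀ →
      Y + (K₆:ℝ) * Real.log 2 ≤ (Real.log L₀) ^ ζ := by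
    have h1 : Tendsto (fun L₀ : ℕ => (Real.log L₀) ^ ζ) atTop atTop :=
      (tendsto_rpow_atTop hζ).comp (Real.tendsto_log_atTop.comp tendsto_natCast_atTop_atTop)
    exact (h1.eventually_ge_atTop _).exists_forall_of_atTop
  obtain ⟨N₂, hN₂⟩ := hlogN
  refine ⟨max (max N₁ N₂) 1, ?_⟩
  intro L₀ hL₀N
  have hL₀1 : 1 ≤ L₀ := le_trans (le_max_right _ _) hL₀N
  have hL₀N₁ : N₁ ≤ L₀ := le_trans (le_trans (le_max_left _ _) (le_max_left _ _)) hL₀N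
  have hL₀N₂ : N₂ ≤ L₀ := le_trans (le_trans (le_max_right _ _) (le_max_left _ _)) hL₀N
  -- LL facts
  have hLpos : ∀ k, 1 ≤ LL l₀ L₀ k := by
    intro k
    induction k with
    | zero => rw [hLL0]; exact hL₀1
    | succ k ih =>
      rw [hLLs]
      have : 0 < l₀ * 4 ^ ⌊(k : ℝ) ^ θ⌋₊ := Nat.mul_pos hl₀ (Nat.pow_pos (by norm_num))
      exact Nat.mul_pos this ih
  have hL₀le : ∀ k, L₀ ≤ LL l₀ L₀ k := by
    intro k
    induction k with
    | zero => rw [hLL0]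
    | succ k ih =>
      rw [hLLs]
      calc L₀ ≤ LL l₀ L₀ k := ih
        _ ≤ (l₀ * 4 ^ ⌊(k : ℝ) ^ θ⌋₊) * LL l₀ L₀ k := by
            have : 1 ≤ l₀ * 4 ^ ⌊(k : ℝ) ^ θ⌋₊ :=
              Nat.mul_pos hl₀ (Nat.pow_pos (by norm_num))
            exact Nat.le_mul_of_pos_left _ this
  have hL4S : ∀ k, 4^(DTC.Sf θ k) ≤ LL l₀ L₀ k := by
    intro k
    induction k with
    | zero => rw [hLL0]; simpa [DTC.Sf] using hL₀1
    | succ k ih =>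
      rw [hLLs, DTC.Sf_succ, pow_add]
      calc 4 ^ DTC.Sf θ k * 4 ^ DTC.Ff θ k ≤ LL l₀ L₀ k * 4 ^ DTC.Ff θ k :=
            Nat.mul_le_mul_right _ ih
        _ = 4 ^ DTC.Ff θ k * LL l₀ L₀ k := by ring
        _ ≤ (l₀ * 4 ^ ⌊(k : ℝ) ^ θ⌋₊) * LL l₀ L₀ k := by
            apply Nat.mul_le_mul_right
            show (4:ℕ) ^ DTC.Ff θ k ≤ l₀ * 4 ^ ⌊(k : ℝ) ^ θ⌋₊
            have : (4:ℕ) ^ DTC.Ff θ k = 4 ^ ⌊(k : ℝ) ^ θ⌋₊ := rfl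
            rw [this]
            exact Nat.le_mul_of_pos_left _ hl₀
  -- locality and monotonicity of G
  have hGincr := DTC.G_incr θ LL G0 G l₀ r₀ L₀ hseedIncr hG0 hGcasc
  have hGdep := DTC.G_dep θ LL G0 G l₀ r₀ L₀ hL₀1 hLL0 hLLs hLpos hseedDep hG0 hGcasc
  have hGball : ∀ k x, x ∈ latticeZ d (LL l₀ L₀ k) →
      DepOn (G l₀ r₀ L₀ k x) {y | linf (y - x) ≤ 3 * LL l₀ L₀ k} := by
    intro k x hx
    apply DTC.depOn_mono _ (hGdep k x hx)
    intro y hy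
    simp only [Set.mem_setOf_eq] at hy ⊢
    rw [DTC.linf_le_iff]
    intro i
    have h1 := hy i
    have h2 : L₀ ≤ LL l₀ L₀ k := hL₀le k
    have h3 : (y - x) i = y i - x i := rfl
    rw [h3]
    omega
  -- b2 claim
  have hb2 : ∀ k : ℕ, M * (1 + Real.log l₀) * 2^k ≤
      cd * Real.exp ((Real.log ((6 * LL l₀ L₀ k : ℕ):ℝ)) ^ ζ) := by
    intro k
    have hLk1 : 1 ≤ LL l₀ L₀ k := hLpos k
    have h6Lk1 : (1:ℝ) ≤ ((6 * LL l₀ L₀ k : ℕ):ℝ) := by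
      have : 1 ≤ 6 * LL l₀ L₀ k := by omega
      exact_mod_cast this
    have hYexp : M * (1 + Real.log l₀) / cd ≤ Real.exp Y := by
      rw [hYdef, Real.exp_log (lt_of_lt_of_le one_pos (le_max_left _ _))]
      exact le_max_right _ _
    have hlognn : (0:ℝ) ≤ Real.log ((6 * LL l₀ L₀ k : ℕ):ℝ) := Real.log_nonneg h6Lk1
    have hstep : Y + (k:ℝ) * Real.log 2 ≤ (Real.log ((6 * LL l₀ L₀ k : ℕ):ℝ)) ^ ζ := by
      rcases le_or_gt K₆ k with hk | hk
      · have h1 := hK₆ k hk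
        have h3 : ((4:ℝ))^(DTC.Sf θ k) ≤ ((6 * LL l₀ L₀ k : ℕ):ℝ) := by
          have h4 := hL4S k
          have h5 : (4:ℕ)^(DTC.Sf θ k) ≤ 6 * LL l₀ L₀ k := by omega
          exact_mod_cast h5
        have h2 : (DTC.Sf θ k : ℝ) * Real.log 4 ≤ Real.log ((6 * LL l₀ L₀ k : ℕ):ℝ) := by
          calc (DTC.Sf θ k : ℝ) * Real.log 4 = Real.log ((4:ℝ)^(DTC.Sf θ k)) :=
                (Real.log_pow _ _).symm
            _ ≤ Real.log ((6 * LL l₀ L₀ k : ℕ):ℝ) := Real.log_le_log (by positivity) h3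
        have h6 : ((DTC.Sf θ k : ℝ) * Real.log 4) ^ ζ ≤
            (Real.log ((6 * LL l₀ L₀ k : ℕ):ℝ)) ^ ζ := by
          apply Real.rpow_le_rpow _ h2 (le_of_lt hζ)
          have : (0:ℝ) < Real.log 4 := Real.log_pos (by norm_num)
          positivity
        linarith
      · have h1 := hN₂ L₀ hL₀N₂
        have hL₀r : (1:ℝ) ≤ (L₀:ℝ) := by exact_mod_cast hL₀1
        have h2 : Real.log (L₀:ℝ) ≤ Real.log ((6 * LL l₀ L₀ k : ℕ):ℝ) := by
          apply Real.log_le_log (by linarith)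
          have h3 : L₀ ≤ 6 * LL l₀ L₀ k := le_trans (hL₀le k) (by omega)
          exact_mod_cast h3
        have h3 : (Real.log (L₀:ℝ)) ^ ζ ≤ (Real.log ((6 * LL l₀ L₀ k : ℕ):ℝ)) ^ ζ :=
          Real.rpow_le_rpow (Real.log_nonneg hL₀r) h2 (le_of_lt hζ)
        have h4 : (k:ℝ) * Real.log 2 ≤ (K₆:ℝ) * Real.log 2 := by
          apply mul_le_mul_of_nonneg_right _ (le_of_lt hlog2)
          exact_mod_cast le_of_lt hk
        linarith
    calc M * (1 + Real.log l₀) * 2^k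
        = cd * ((M * (1 + Real.log l₀) / cd) * 2^k) := by field_simp
      _ ≤ cd * (Real.exp Y * Real.exp ((k:ℝ) * Real.log 2)) := by
          apply mul_le_mul_of_nonneg_left _ (le_of_lt hcd)
          rw [DTC.two_pow_eq_exp k]
          apply mul_le_mul_of_nonneg_right hYexp (le_of_lt (Real.exp_pos _))
      _ = cd * Real.exp (Y + (k:ℝ) * Real.log 2) := by rw [← Real.exp_add]
      _ ≤ cd * Real.exp ((Real.log ((6 * LL l₀ L₀ k : ℕ):ℝ)) ^ ζ) := by
          apply mul_le_mul_of_nonneg_left _ (le_of_lt hcd)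
          exact Real.exp_le_exp.2 hstep
  -- the u_k sequence
  set uk : ℕ → ℝ := fun k => u + δ * (1/2:ℝ)^(k+1) with hukdef
  have huk_gt : ∀ k, u < uk k := by
    intro k
    rw [hukdef]
    have : (0:ℝ) < δ * (1/2)^(k+1) := by positivity
    simp only []
    linarith
  have huk_lt : ∀ k, uk k < u' := by
    intro k
    rw [hukdef]
    have h1 : (1/2:ℝ)^(k+1) ≤ (1/2:ℝ)^1 := pow_le_pow_of_le_one (by norm_num) (by norm_num)
      (by omega)
    have h2 : δ * (1/2:ℝ)^(k+1) ≤ δ * (1/2) := by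
      rw [pow_one] at h1
      nlinarith
    simp only []
    have : u + δ = u' := by rw [hδdef]; ring
    nlinarith
  have huk_a : ∀ k, a < uk k := fun k => lt_trans hau (huk_gt k)
  have huk_b : ∀ k, uk k < b := fun k => lt_trans (huk_lt k) hu'b
  have huk_succ : ∀ k, uk (k+1) < uk k := by
    intro k
    rw [hukdef]
    simp only []
    have h1 : (1/2:ℝ)^(k+1+1) < (1/2:ℝ)^(k+1) :=
      pow_lt_pow_right_of_lt_one₀ (by norm_num) (by norm_num) (by omega)
    nlinarith
  have hgap : ∀ k, uk k - uk (k+1) = δ * (1/2:ℝ)^(k+2) := by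
    intro k
    rw [hukdef]
    simp only []
    have : (1/2:ℝ)^(k+1) = 2 * (1/2:ℝ)^(k+2) := by
      rw [pow_succ]
      ring
    rw [this]
    ring
  -- RHS claim
  have claimRHS : ∀ k : ℕ,
      Real.log Cd + ((2*d*t + 4*d*DTC.Ff θ k + (B + DTC.Sf θ (k+1) + 2^(k+2)) + 1 : ℕ):ℝ)
        * Real.log 2 ≤ M * (1 + Real.log l₀) * 2^k := by
    intro k
    have hθ0 : (0:ℝ) ≤ θ := by linarith
    set E : ℝ := 1 + Real.log l₀ with hEdef
    set T : ℝ := (2:ℝ)^k with hTdef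
    have hT1 : (1:ℝ) ≤ T := by
      rw [hTdef]
      exact one_le_pow₀ (by norm_num)
    have hE1 : (1:ℝ) ≤ E := h1logl₀
    have hET : (1:ℝ) ≤ E * T := by
      calc (1:ℝ) = 1*1 := by norm_num
        _ ≤ E * T := mul_le_mul hE1 hT1 (by norm_num) (by linarith)
    have hETT : T ≤ E * T := le_mul_of_one_le_left (by linarith) hE1
    have hETE : E ≤ E * T := le_mul_of_one_le_right (by linarith) hT1
    have ht2E : (t:ℝ) ≤ 2 * E := by
      have h1 := DTC.clog_le l₀ hl₀
      rw [hEdef]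
      rw [htdef]
      linarith
    have hFT : (DTC.Ff θ k : ℝ) ≤ Cθ * T := le_trans (DTC.Ff_le_pow hθ0 k) (hCθ k)
    have hST : (DTC.Sf θ (k+1) : ℝ) ≤ Cθ * T := le_trans (DTC.Sf_upper hθ0 k) (hCθ k)
    have hd0 : (0:ℝ) ≤ (d:ℝ) := by positivity
    have hW0 : (0:ℝ) ≤ (W:ℝ) := by positivity
    have hCθ0 : (0:ℝ) ≤ Cθ := by linarith
    have hweq : ((2*d*t + 4*d*DTC.Ff θ k + (B + DTC.Sf θ (k+1) + 2^(k+2)) + 1 : ℕ):ℝ)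
        = 4*(d:ℝ)*(t:ℝ) + 4*(d:ℝ)*(DTC.Ff θ k:ℝ) + (4*(d:ℝ)+1)*(W:ℝ)
          + (DTC.Sf θ (k+1):ℝ) + 4*T + 2 := by
      rw [hBdef, hTdef]
      push_cast
      ring
    have hsum : 4*(d:ℝ)*(t:ℝ) + 4*(d:ℝ)*(DTC.Ff θ k:ℝ) + (4*(d:ℝ)+1)*(W:ℝ)
          + (DTC.Sf θ (k+1):ℝ) + 4*T + 2
        ≤ ((12*(d:ℝ)) + (4*(d:ℝ)+1)*(W:ℝ) + 2 + 4*(d:ℝ)*Cθ + Cθ + 4) * (E*T) := by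
      have cET : Cθ*T ≤ Cθ*(E*T) := mul_le_mul_of_nonneg_left hETT hCθ0
      have b2 : 4*(d:ℝ)*(t:ℝ) ≤ 12*(d:ℝ)*(E*T) := by
        have c1 : 4*(d:ℝ)*(t:ℝ) ≤ 4*(d:ℝ)*(2*E) :=
          mul_le_mul_of_nonneg_left ht2E (by positivity)
        have c3 : 8*(d:ℝ)*E ≤ 8*(d:ℝ)*(E*T) := by
          have := mul_le_mul_of_nonneg_left hETE (show (0:ℝ) ≤ 8*(d:ℝ) by positivity)
          linarith
        have c4 : 0 ≤ (d:ℝ)*(E*T) := mul_nonneg hd0 (by linarith)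
        linarith
      have b3 : 4*(d:ℝ)*(DTC.Ff θ k:ℝ) ≤ 4*(d:ℝ)*Cθ*(E*T) := by
        have c1 : 4*(d:ℝ)*(DTC.Ff θ k:ℝ) ≤ 4*(d:ℝ)*(Cθ*T) :=
          mul_le_mul_of_nonneg_left hFT (by positivity)
        have c3 : 4*(d:ℝ)*(Cθ*T) ≤ 4*(d:ℝ)*(Cθ*(E*T)) :=
          mul_le_mul_of_nonneg_left cET (by positivity)
        linarith
      have b4 : (4*(d:ℝ)+1)*(W:ℝ) ≤ (4*(d:ℝ)+1)*(W:ℝ)*(E*T) :=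
        le_mul_of_one_le_right (by positivity) hET
      have b5 : (DTC.Sf θ (k+1):ℝ) ≤ Cθ*(E*T) := le_trans hST cET
      have b6 : 4*T ≤ 4*(E*T) := by linarith
      have b7 : (2:ℝ) ≤ 2*(E*T) := by linarith
      linarith
    have hlogCd : Real.log Cd ≤ |Real.log Cd| * (E*T) := by
      have h1 := le_abs_self (Real.log Cd)
      have h2 : |Real.log Cd| ≤ |Real.log Cd| * (E*T) :=
        le_mul_of_one_le_right (abs_nonneg _) hET
      linarith
    have hfin : Real.log Cd
        + (4*(d:ℝ)*(t:ℝ) + 4*(d:ℝ)*(DTC.Ff θ k:ℝ) + (4*(d:ℝ)+1)*(W:ℝ)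
          + (DTC.Sf θ (k+1):ℝ) + 4*T + 2) * Real.log 2
        ≤ M * (E * T) := by
      have h1 : (4*(d:ℝ)*(t:ℝ) + 4*(d:ℝ)*(DTC.Ff θ k:ℝ) + (4*(d:ℝ)+1)*(W:ℝ)
            + (DTC.Sf θ (k+1):ℝ) + 4*T + 2) * Real.log 2
          ≤ (((12*(d:ℝ)) + (4*(d:ℝ)+1)*(W:ℝ) + 2 + 4*(d:ℝ)*Cθ + Cθ + 4) * (E*T)) * Real.log 2
          := mul_le_mul_of_nonneg_right hsum (le_of_lt hlog2)
      have hM2 : M * (E*T) = |Real.log Cd| * (E*T) +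
          (((12*(d:ℝ)) + (4*(d:ℝ)+1)*(W:ℝ) + 2 + 4*(d:ℝ)*Cθ + Cθ + 4) * (E*T)) * Real.log 2
          := by
        rw [hMdef]
        push_cast
        ring
      rw [hM2]
      linarith
    rw [hweq]
    calc Real.log Cd + (4*(d:ℝ)*(t:ℝ) + 4*(d:ℝ)*(DTC.Ff θ k:ℝ) + (4*(d:ℝ)+1)*(W:ℝ)
          + (DTC.Sf θ (k+1):ℝ) + 4*T + 2) * Real.log 2 ≤ M * (E*T) := hfin
      _ = M * (1 + Real.log l₀) * 2^k := by rw [hEdef, hTdef]; ring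
  -- the main induction
  have main : ∀ k, ∀ x ∈ latticeZ d (LL l₀ L₀ k),
      (P (uk k) (G l₀ r₀ L₀ k x)).toReal ≤ (1/2:ℝ)^(B + DTC.Sf θ k + 2^(k+1)) := by
    intro k
    induction k with
    | zero =>
      intro x hx
      rw [hLL0] at hx
      haveI := hprob (uk 0) (huk_a 0) (huk_b 0)
      haveI := hprob u' hu'a hu'b
      have hmono0 : P (uk 0) (G l₀ r₀ L₀ 0 x) ≤ P u' (G0 L₀ x) := by
        rw [hG0]
        apply DTC.mono_meas d hd a b P hprob β γ ζ hβ hγ hζ Cd cd hCd hcd hdec (uk 0) u'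
          (huk_a 0) (huk_lt 0) hu'b _ (hseedIncr L₀ x) x (3 * L₀) ?_
        apply DTC.depOn_mono _ (hseedDep L₀ x)
        intro y hy
        simp only [Set.mem_setOf_eq] at hy ⊢
        rw [DTC.linf_le_iff]
        intro i
        have h1 := hy i
        have h3 : (y - x) i = y i - x i := rfl
        rw [h3]
        omega
      have hsup : P u' (G0 L₀ x) ≤ ⨆ (x : Fin d → ℤ) (_ : x ∈ latticeZ d L₀), P u' (G0 L₀ x) :=
        le_iSup₂ (f := fun (x : Fin d → ℤ) (_ : x ∈ latticeZ d L₀) => P u' (G0 L₀ x)) x hx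
      have hcomb : P (uk 0) (G l₀ r₀ L₀ 0 x) ≤ ENNReal.ofReal ((1/2:ℝ)^(B+2)) :=
        le_trans hmono0 (le_trans hsup (le_of_lt (hN₁ L₀ hL₀N₁)))
      have htr := ENNReal.toReal_le_of_le_ofReal (by positivity) hcomb
      have hexp : B + DTC.Sf θ 0 + 2^(0+1) = B + 2 := by
        simp [DTC.Sf]
      rw [hexp]
      exact htr
    | succ k ih =>
      intro x hx
      haveI hPk1 := hprob (uk (k+1)) (huk_a (k+1)) (huk_b (k+1))
      haveI hPk := hprob (uk k) (huk_a k) (huk_b k)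
      set Lk : ℕ := LL l₀ L₀ k with hLkdef
      set l' : ℕ := l₀ * 4 ^ (DTC.Ff θ k) with hl'def
      set rk : ℕ := r₀ * 2 ^ (DTC.Ff θ k) with hrkdef
      have hLk1 : 1 ≤ Lk := hLpos k
      have hLL1 : LL l₀ L₀ (k+1) = l' * Lk := hLLs l₀ L₀ k
      have hrk6 : 6 ≤ rk := by
        have h1 : 1 ≤ 2 ^ (DTC.Ff θ k) := Nat.one_le_two_pow
        calc 6 ≤ r₀ := hr₀6
          _ = r₀ * 1 := (Nat.mul_one r₀).symm
          _ ≤ r₀ * 2 ^ (DTC.Ff θ k) := Nat.mul_le_mul_left _ h1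
      have hxdvd : ∀ i, ((Lk:ℕ):ℤ) ∣ x i := by
        intro i
        apply dvd_trans _ (hx i)
        have h1 : (Lk:ℕ) ∣ LL l₀ L₀ (k+1) := by
          rw [hLL1]
          exact dvd_mul_left Lk l'
        exact_mod_cast h1
      have hx' : ∀ i, ((l' * Lk : ℕ):ℤ) ∣ x i := by
        intro i
        have h1 := hx i
        rw [hLL1] at h1
        exact h1
      set bf : Finset (Fin d → ℤ) :=
        (Fintype.piFinset (fun _ : Fin d => Finset.range l')).image
          (fun t i => x i + (Lk : ℤ) * t i) with hbfdef
      have hbfdvd : ∀ x₁ ∈ bf, x₁ ∈ latticeZ d Lk := by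
        intro x₁ hx₁
        rw [hbfdef, Finset.mem_image] at hx₁
        obtain ⟨tt, -, rfl⟩ := hx₁
        intro i
        exact dvd_add (hxdvd i) (Dvd.intro _ rfl)
      -- the per-pair bound
      set mb : ℝ := min ((δ * (1/2:ℝ)^(k+2)) ^ β * (((rk:ℕ):ℝ)/6) ^ γ)
          (Real.exp ((Real.log ((6 * Lk : ℕ):ℝ)) ^ ζ)) with hmbdef
      set q : ℝ := (1/2:ℝ)^(B + DTC.Sf θ k + 2^(k+1)) * (1/2:ℝ)^(B + DTC.Sf θ k + 2^(k+1)) +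
        Cd * Real.exp (-cd * mb) with hqdef
      have hq0 : (0:ℝ) ≤ q := by positivity
      have pair : ∀ x₁ ∈ bf, ∀ x₂ ∈ bf, rk * Lk < linf (x₁ - x₂) →
          (P (uk (k+1)) (G l₀ r₀ L₀ k x₁ ∩ G l₀ r₀ L₀ k x₂)).toReal ≤ q := by
        intro x₁ hx₁ x₂ hx₂ hdist
        obtain ⟨y₁, y₂, s, hs1, hrs, hlinfy, hsh1, hsh2⟩ :=
          DTC.recenter Lk rk hLk1 hrk6 x₁ x₂ hdist
        have hdepgen : ∀ x₀ ∈ bf, ∀ y₀ : Fin d → ℤ, (∀ i, (y₀ i - x₀ i).natAbs ≤ 3 * Lk) →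
            DepOn (G l₀ r₀ L₀ k x₀) {y | linf (y - y₀) ≤ 6 * Lk} := by
          intro x₀ hx₀ y₀ hsh
          apply DTC.depOn_mono _ (hGdep k x₀ (hbfdvd x₀ hx₀))
          intro z hz
          simp only [Set.mem_setOf_eq] at hz ⊢
          rw [DTC.linf_le_iff]
          intro i
          have h1 := hz i
          have h2 := hsh i
          have h3 : L₀ ≤ Lk := hL₀le k
          have h4 : (z - y₀) i = z i - y₀ i := rfl
          rw [h4]
          omega
        have hkey := hdec (6*Lk) s (by omega) hs1 y₁ y₂ hlinfy (uk (k+1)) (uk k)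
          (huk_a (k+1)) (huk_succ k) (huk_b k) _ _ (hGincr k x₁) (hGincr k x₂)
          (hdepgen x₁ hx₁ y₁ hsh1) (hdepgen x₂ hx₂ y₂ hsh2)
        have hp1 := ih x₁ (hbfdvd x₁ hx₁)
        have hp2 := ih x₂ (hbfdvd x₂ hx₂)
        have hprod : (P (uk k) (G l₀ r₀ L₀ k x₁)).toReal *
              (P (uk k) (G l₀ r₀ L₀ k x₂)).toReal
            ≤ (1/2:ℝ)^(B + DTC.Sf θ k + 2^(k+1)) * (1/2:ℝ)^(B + DTC.Sf θ k + 2^(k+1)) :=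
          mul_le_mul hp1 hp2 ENNReal.toReal_nonneg (by positivity)
        -- error term monotonicity
        have hsγ : (((rk:ℕ):ℝ)/6) ^ γ ≤ (s:ℝ) ^ γ := by
          apply Real.rpow_le_rpow (by positivity) _ (le_of_lt hγ)
          have h1 : (rk:ℝ) ≤ 6*(s:ℝ) := by exact_mod_cast hrs
          linarith
        have hmble : mb ≤ min ((uk k - uk (k+1)) ^ β * (s:ℝ) ^ γ)
            (Real.exp ((Real.log ((6 * Lk : ℕ):ℝ)) ^ ζ)) := by
          rw [hmbdef]
          apply min_le_min _ le_rfl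
          rw [hgap k]
          apply mul_le_mul_of_nonneg_left hsγ
          positivity
        have herr : Cd * Real.exp (-cd * min ((uk k - uk (k+1)) ^ β * (s:ℝ) ^ γ)
              (Real.exp ((Real.log ((6 * Lk : ℕ):ℝ)) ^ ζ)))
            ≤ Cd * Real.exp (-cd * mb) := by
          apply mul_le_mul_of_nonneg_left _ (le_of_lt hCd)
          apply Real.exp_le_exp.2
          have := mul_le_mul_of_nonneg_left hmble (le_of_lt hcd)
          linarith
        rw [hqdef]
        calc (P (uk (k+1)) (G l₀ r₀ L₀ k x₁ ∩ G l₀ r₀ L₀ k x₂)).toReal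
            ≤ (P (uk k) (G l₀ r₀ L₀ k x₁)).toReal * (P (uk k) (G l₀ r₀ L₀ k x₂)).toReal +
              Cd * Real.exp (-cd * min ((uk k - uk (k+1)) ^ β * (s:ℝ) ^ γ)
                (Real.exp ((Real.log ((6 * Lk : ℕ):ℝ)) ^ ζ))) := hkey
          _ ≤ (1/2:ℝ)^(B + DTC.Sf θ k + 2^(k+1)) * (1/2:ℝ)^(B + DTC.Sf θ k + 2^(k+1)) +
              Cd * Real.exp (-cd * mb) := add_le_add hprod herr
      -- union bound
      have hsub : G l₀ r₀ L₀ (k+1) x ⊆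
          ⋃ x₁ ∈ bf, ⋃ x₂ ∈ bf,
            (if rk * Lk < linf (x₁ - x₂) then G l₀ r₀ L₀ k x₁ ∩ G l₀ r₀ L₀ k x₂ else ∅) := by
        rw [hGcasc]
        intro ω hω
        simp only [Set.mem_iUnion] at hω
        obtain ⟨x₁, hx₁, x₂, hx₂, hdist, hωm⟩ := hω
        have hcov := DTC.box_cover x Lk l' hLk1 hx'
        have hx₁' : x₁ ∈ boxLam x Lk (l' * Lk) := by rw [← hLL1]; exact hx₁
        have hx₂' : x₂ ∈ boxLam x Lk (l' * Lk) := by rw [← hLL1]; exact hx₂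
        have hx₁bf : x₁ ∈ bf := Finset.mem_coe.mp (hcov hx₁')
        have hx₂bf : x₂ ∈ bf := Finset.mem_coe.mp (hcov hx₂')
        have hdist' : rk * Lk < linf (x₁ - x₂) := hdist
        simp only [Set.mem_iUnion]
        exact ⟨x₁, hx₁bf, x₂, hx₂bf, by rw [if_pos hdist']; exact hωm⟩
      have hterm : ∀ x₁ ∈ bf, ∀ x₂ ∈ bf,
          P (uk (k+1)) (if rk * Lk < linf (x₁ - x₂)
            then G l₀ r₀ L₀ k x₁ ∩ G l₀ r₀ L₀ k x₂ else ∅) ≤ ENNReal.ofReal q := by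
        intro x₁ hx₁ x₂ hx₂
        by_cases hc : rk * Lk < linf (x₁ - x₂)
        · rw [if_pos hc]
          calc P (uk (k+1)) (G l₀ r₀ L₀ k x₁ ∩ G l₀ r₀ L₀ k x₂)
              = ENNReal.ofReal ((P (uk (k+1)) (G l₀ r₀ L₀ k x₁ ∩ G l₀ r₀ L₀ k x₂)).toReal) :=
                (ENNReal.ofReal_toReal (measure_ne_top _ _)).symm
            _ ≤ ENNReal.ofReal q := ENNReal.ofReal_le_ofReal (pair x₁ hx₁ x₂ hx₂ hc)
        · rw [if_neg hc]
          simp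
      have hunion : P (uk (k+1)) (G l₀ r₀ L₀ (k+1) x) ≤
          ((l'^d : ℕ) : ℝ≥0∞) * (((l'^d : ℕ) : ℝ≥0∞) * ENNReal.ofReal q) := by
        have hcard : (bf.card : ℝ≥0∞) ≤ ((l' ^ d : ℕ) : ℝ≥0∞) := by
          have := DTC.box_card x Lk l' (d := d)
          exact_mod_cast this
        calc P (uk (k+1)) (G l₀ r₀ L₀ (k+1) x)
            ≤ P (uk (k+1)) (⋃ x₁ ∈ bf, ⋃ x₂ ∈ bf,
              (if rk * Lk < linf (x₁ - x₂)
                then G l₀ r₀ L₀ k x₁ ∩ G l₀ r₀ L₀ k x₂ else ∅)) := measure_mono hsub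
          _ ≤ ∑ x₁ ∈ bf, P (uk (k+1)) (⋃ x₂ ∈ bf,
              (if rk * Lk < linf (x₁ - x₂)
                then G l₀ r₀ L₀ k x₁ ∩ G l₀ r₀ L₀ k x₂ else ∅)) :=
              measure_biUnion_finset_le _ _
          _ ≤ ∑ x₁ ∈ bf, ∑ x₂ ∈ bf, P (uk (k+1))
              (if rk * Lk < linf (x₁ - x₂)
                then G l₀ r₀ L₀ k x₁ ∩ G l₀ r₀ L₀ k x₂ else ∅) :=
              Finset.sum_le_sum fun x₁ _ => measure_biUnion_finset_le _ _
          _ ≤ ∑ x₁ ∈ bf, ∑ _x₂ ∈ bf, ENNReal.ofReal q :=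
              Finset.sum_le_sum fun x₁ hx₁ => Finset.sum_le_sum fun x₂ hx₂ =>
                hterm x₁ hx₁ x₂ hx₂
          _ = (bf.card : ℝ≥0∞) * ((bf.card : ℝ≥0∞) * ENNReal.ofReal q) := by
              simp [Finset.sum_const, nsmul_eq_mul, mul_assoc]
          _ ≤ ((l'^d : ℕ) : ℝ≥0∞) * (((l'^d : ℕ) : ℝ≥0∞) * ENNReal.ofReal q) := by
              apply mul_le_mul' hcard
              exact mul_le_mul' hcard le_rfl
      -- the final numeric inequality
      set ν : ℕ := 2*d*t + 4*d*DTC.Ff θ k with hνdef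
      have hN2 : ((l'^d : ℕ):ℝ) * ((l'^d : ℕ):ℝ) ≤ (2:ℝ)^ν := by
        have h1 : l' ≤ 2^(t + 2*DTC.Ff θ k) := by
          rw [hl'def, pow_add]
          apply Nat.mul_le_mul
          · exact Nat.le_pow_clog (by norm_num) l₀
          · rw [pow_mul]
            norm_num
        have h2 : l'^d * l'^d ≤ 2^ν := by
          calc l'^d * l'^d ≤ (2^(t + 2*DTC.Ff θ k))^d * (2^(t + 2*DTC.Ff θ k))^d :=
                Nat.mul_le_mul (Nat.pow_le_pow_left h1 d) (Nat.pow_le_pow_left h1 d)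
            _ = 2^((t + 2*DTC.Ff θ k)*d + (t + 2*DTC.Ff θ k)*d) := by
                rw [← pow_mul, ← pow_add]
            _ = 2^ν := by
                rw [hνdef]
                congr 1
                ring
        calc ((l'^d : ℕ):ℝ) * ((l'^d : ℕ):ℝ) = ((l'^d * l'^d : ℕ):ℝ) := by push_cast; ring
          _ ≤ ((2^ν : ℕ):ℝ) := by exact_mod_cast h2
          _ = (2:ℝ)^ν := by push_cast; ring
      have hminbig : M * (1 + Real.log l₀) * 2^k ≤ cd * mb := by
        rw [hmbdef]
        rcases min_cases ((δ * (1/2:ℝ)^(k+2)) ^ β * (((rk:ℕ):ℝ)/6) ^ γ)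
            (Real.exp ((Real.log ((6 * Lk : ℕ):ℝ)) ^ ζ)) with ⟨heq, -⟩ | ⟨heq, -⟩
        · rw [heq]
          have := hb1 k
          rw [hrkdef]
          calc M * (1 + Real.log l₀) * 2^k
              ≤ cd * ((δ * (1/2:ℝ)^(k+2)) ^ β * (((r₀ * 2^(DTC.Ff θ k) : ℕ):ℝ)/6) ^ γ) := this
            _ = cd * ((δ * (1/2:ℝ)^(k+2)) ^ β * (((r₀ * 2^(DTC.Ff θ k):ℕ):ℝ)/6) ^ γ) := rfl
        · rw [heq]
          exact hb2 k
      have herr2 : Cd * Real.exp (-cd * mb) ≤ (1/2:ℝ)^(ν + (B + DTC.Sf θ (k+1) + 2^(k+2)) + 1)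
          := by
        have h1 : Real.log Cd + ((ν + (B + DTC.Sf θ (k+1) + 2^(k+2)) + 1 : ℕ):ℝ) * Real.log 2
            ≤ cd * mb := by
          have h2 := claimRHS k
          have h3 : (2*d*t + 4*d*DTC.Ff θ k + (B + DTC.Sf θ (k+1) + 2^(k+2)) + 1 : ℕ)
              = ν + (B + DTC.Sf θ (k+1) + 2^(k+2)) + 1 := by rw [hνdef]
          rw [← h3]
          exact le_trans h2 hminbig
        have h4 : Real.exp (-cd * mb) ≤
            Real.exp (-(Real.log Cd + ((ν + (B + DTC.Sf θ (k+1) + 2^(k+2)) + 1 : ℕ):ℝ)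
              * Real.log 2)) := by
          apply Real.exp_le_exp.2
          linarith
        calc Cd * Real.exp (-cd * mb)
            ≤ Cd * Real.exp (-(Real.log Cd +
                ((ν + (B + DTC.Sf θ (k+1) + 2^(k+2)) + 1 : ℕ):ℝ) * Real.log 2)) :=
              mul_le_mul_of_nonneg_left h4 (le_of_lt hCd)
          _ = Cd * (Real.exp (-(Real.log Cd)) * Real.exp
              (-(((ν + (B + DTC.Sf θ (k+1) + 2^(k+2)) + 1 : ℕ):ℝ) * Real.log 2))) := by
              rw [← Real.exp_add]
              ring_nf
          _ = (1/2:ℝ)^(ν + (B + DTC.Sf θ (k+1) + 2^(k+2)) + 1) := by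
              rw [← DTC.half_pow_eq_exp, Real.exp_neg, Real.exp_log hCd]
              field_simp
      have hfinal : ((l'^d : ℕ):ℝ) * ((l'^d : ℕ):ℝ) * q ≤
          (1/2:ℝ)^(B + DTC.Sf θ (k+1) + 2^(k+1+1)) := by
        have hqle : ((l'^d : ℕ):ℝ) * ((l'^d : ℕ):ℝ) * q ≤ (2:ℝ)^ν * q :=
          mul_le_mul_of_nonneg_right hN2 hq0
        have hterm1 : (2:ℝ)^ν * ((1/2:ℝ)^(B + DTC.Sf θ k + 2^(k+1)) *
              (1/2:ℝ)^(B + DTC.Sf θ k + 2^(k+1)))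
            ≤ (1/2:ℝ)^(B + DTC.Sf θ (k+1) + 2^(k+2) + 1) := by
          rw [← pow_add]
          apply DTC.two_pow_mul_half_pow_le
          have h5 := hi k
          have h6 : DTC.Sf θ (k+1) = DTC.Sf θ k + DTC.Ff θ k := DTC.Sf_succ k
          have h7 : (2:ℕ)^(k+2) = 2^(k+1) + 2^(k+1) := by
            rw [pow_succ]
            ring
          have h8 : ν = 2*d*t + 4*d*DTC.Ff θ k := hνdef
          exact DTC.exp_arith h5 h6 h7 h8
        have hterm2 : (2:ℝ)^ν * (Cd * Real.exp (-cd * mb))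
            ≤ (1/2:ℝ)^(B + DTC.Sf θ (k+1) + 2^(k+2) + 1) := by
          calc (2:ℝ)^ν * (Cd * Real.exp (-cd * mb))
              ≤ (2:ℝ)^ν * (1/2:ℝ)^(ν + (B + DTC.Sf θ (k+1) + 2^(k+2)) + 1) :=
                mul_le_mul_of_nonneg_left herr2 (by positivity)
            _ ≤ (1/2:ℝ)^(B + DTC.Sf θ (k+1) + 2^(k+2) + 1) := by
                apply DTC.two_pow_mul_half_pow_le
                exact Nat.le_of_eq (by ring)
        have hsplit : (2:ℝ)^ν * q = (2:ℝ)^ν * ((1/2:ℝ)^(B + DTC.Sf θ k + 2^(k+1)) *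
              (1/2:ℝ)^(B + DTC.Sf θ k + 2^(k+1))) + (2:ℝ)^ν * (Cd * Real.exp (-cd * mb)) := by
          rw [hqdef]
          ring
        have hhalf : (1/2:ℝ)^(B + DTC.Sf θ (k+1) + 2^(k+2) + 1) +
            (1/2:ℝ)^(B + DTC.Sf θ (k+1) + 2^(k+2) + 1) = (1/2:ℝ)^(B + DTC.Sf θ (k+1) + 2^(k+2))
            := by
          rw [pow_succ]
          ring
        have hexp2 : B + DTC.Sf θ (k+1) + 2^(k+1+1) = B + DTC.Sf θ (k+1) + 2^(k+2) := rfl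
        rw [hexp2]
        calc ((l'^d : ℕ):ℝ) * ((l'^d : ℕ):ℝ) * q ≤ (2:ℝ)^ν * q := hqle
          _ = _ + _ := hsplit
          _ ≤ (1/2:ℝ)^(B + DTC.Sf θ (k+1) + 2^(k+2) + 1) +
              (1/2:ℝ)^(B + DTC.Sf θ (k+1) + 2^(k+2) + 1) := add_le_add hterm1 hterm2
          _ = (1/2:ℝ)^(B + DTC.Sf θ (k+1) + 2^(k+2)) := hhalf
      -- conclude
      have hofreal : ((l'^d : ℕ) : ℝ≥0∞) * (((l'^d : ℕ) : ℝ≥0∞) * ENNReal.ofReal q)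
          = ENNReal.ofReal (((l'^d : ℕ):ℝ) * ((l'^d : ℕ):ℝ) * q) := by
        rw [ENNReal.ofReal_mul (by positivity), ENNReal.ofReal_mul (by positivity),
          ENNReal.ofReal_natCast, mul_assoc]
      apply ENNReal.toReal_le_of_le_ofReal (by positivity)
      calc P (uk (k+1)) (G l₀ r₀ L₀ (k+1) x)
          ≤ ((l'^d : ℕ) : ℝ≥0∞) * (((l'^d : ℕ) : ℝ≥0∞) * ENNReal.ofReal q) := hunion
        _ = ENNReal.ofReal (((l'^d : ℕ):ℝ) * ((l'^d : ℕ):ℝ) * q) := hofreal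
        _ ≤ ENNReal.ofReal ((1/2:ℝ)^(B + DTC.Sf θ (k+1) + 2^(k+1+1))) :=
            ENNReal.ofReal_le_ofReal hfinal
  -- conclusion
  intro k x hx
  haveI hPuk := hprob (uk k) (huk_a k) (huk_b k)
  haveI hPu := hprob u hau hub
  have h1 := main k x hx
  have hmono : P u (G l₀ r₀ L₀ k x) ≤ P (uk k) (G l₀ r₀ L₀ k x) :=
    DTC.mono_meas d hd a b P hprob β γ ζ hβ hγ hζ Cd cd hCd hcd hdec u (uk k)
      hau (huk_gt k) (huk_b k) _ (hGincr k x) x (3 * LL l₀ L₀ k) (hGball k x hx)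
  have h2 : P (uk k) (G l₀ r₀ L₀ k x) ≤ ENNReal.ofReal ((1/2:ℝ)^(B + DTC.Sf θ k + 2^(k+1))) := by
    rw [← ENNReal.ofReal_toReal (measure_ne_top _ _)]
    exact ENNReal.ofReal_le_ofReal h1
  have h3 : ((1/2:ℝ))^(B + DTC.Sf θ k + 2^(k+1)) ≤ (1/2:ℝ)^(2^k) := by
    apply pow_le_pow_of_le_one (by norm_num) (by norm_num)
    have : (2:ℕ)^k ≤ 2^(k+1) := Nat.pow_le_pow_right (by norm_num) (by omega)
    omega
  exact le_trans hmono (le_trans h2 (ENNReal.ofReal_le_ofReal h3))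
end

section
/- Connectivity of the frame set: for R ≥ 4, the set Edges = {x ∈ [−R,R]^d ∩ Z^d : at least two coordinates of x lie in {−R,−R+1,−R+2,R−2,R−1,R}} is a connected subgraph of Z^d (with nearest-neighbor edges); moreover for any two ℓ^1-adjacent centers x'₁, x'₂ ∈ (2R+1)Z^d, the union (x'₁ + Edges) ∪ (x'₂ + Edges) is connected. -/
/-- `S` is a connected subgraph of `ℤ^d` with nearest-neighbor edges. -/
def ConnIn {d : ℕ} (S : Set (Fin d → ℤ)) : Prop :=
  ∀ a ∈ S, ∀ b ∈ S, ∃ (m : ℕ) (f : ℕ → Fin d → ℤ),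
    f 0 = a ∧ f m = b ∧ (∀ i ≤ m, f i ∈ S) ∧ ∀ i < m, lone (f (i + 1) - f i) = 1

/-- The thickened edge frame of the cube `[−R,R]^d`: points with at least two coordinates in
`{−R, −R+1, −R+2, R−2, R−1, R}`. -/
def edgesSet (d R : ℕ) : Set (Fin d → ℤ) :=
  {x | (∀ i, x i ∈ Finset.Icc (-(R : ℤ)) R) ∧
    2 ≤ (Finset.univ.filter fun i =>
      x i ∈ ({-(R : ℤ), -(R : ℤ) + 1, -(R : ℤ) + 2,
        (R : ℤ) - 2, (R : ℤ) - 1, (R : ℤ)} : Finset ℤ)).card}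

def Reach {d : ℕ} (S : Set (Fin d → ℤ)) (a b : Fin d → ℤ) : Prop :=
  ∃ (m : ℕ) (f : ℕ → Fin d → ℤ),
    f 0 = a ∧ f m = b ∧ (∀ i ≤ m, f i ∈ S) ∧ ∀ i < m, lone (f (i + 1) - f i) = 1

lemma lone_sub_comm {d : ℕ} (a b : Fin d → ℤ) : lone (a - b) = lone (b - a) := by
  unfold lone
  refine Finset.sum_congr rfl (fun i _ => ?_)
  have : (a - b) i = -((b - a) i) := by simp
  rw [this, Int.natAbs_neg]

lemma reach_refl {d : ℕ} {S : Set (Fin d → ℤ)} {a : Fin d → ℤ} (h : a ∈ S) :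
    Reach S a a :=
  ⟨0, fun _ => a, rfl, rfl, fun _ _ => h, fun i hi => absurd hi (Nat.not_lt_zero i)⟩

lemma reach_symm {d : ℕ} {S : Set (Fin d → ℤ)} {a b : Fin d → ℤ} (h : Reach S a b) :
    Reach S b a := by
  obtain ⟨m, f, h0, hm, hS, hstep⟩ := h
  refine ⟨m, fun i => f (m - i), by simp [hm], by simp [h0], fun i hi => hS _ (Nat.sub_le m i), ?_⟩
  intro i hi
  have h1 : m - (i + 1) + 1 = m - i := by omega
  have h2 : m - (i+1) < m := by omega
  beta_reduce
  rw [lone_sub_comm, ← h1]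
  exact hstep _ h2

lemma reach_trans {d : ℕ} {S : Set (Fin d → ℤ)} {a b c : Fin d → ℤ}
    (hab : Reach S a b) (hbc : Reach S b c) : Reach S a c := by
  obtain ⟨m, f, hf0, hfm, hfS, hfstep⟩ := hab
  obtain ⟨n, g, hg0, hgn, hgS, hgstep⟩ := hbc
  refine ⟨m + n, fun i => if i ≤ m then f i else g (i - m), by simp [hf0], ?_, ?_, ?_⟩
  · have key : ∀ i, m ≤ i → (if i ≤ m then f i else g (i - m)) = g (i - m) := by
      intro i hi
      rcases Nat.eq_or_lt_of_le hi with h | h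
      · simp [← h, hfm, hg0]
      · rw [if_neg (by omega)]
    beta_reduce
    rw [key (m + n) (by omega)]
    simp [hgn]
  · intro i hi
    by_cases h : i ≤ m
    · simp only [if_pos h]; exact hfS i h
    · simp only [if_neg h]; exact hgS (i - m) (by omega)
  · intro i hi
    have key : ∀ j, m ≤ j → (if j ≤ m then f j else g (j - m)) = g (j - m) := by
      intro j hj
      rcases Nat.eq_or_lt_of_le hj with h | h
      · simp [← h, hfm, hg0]
      · rw [if_neg (by omega)]
    beta_reduce
    by_cases h : i + 1 ≤ m
    · simp only [if_pos h, if_pos (by omega : i ≤ m)]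
      exact hfstep i (by omega)
    · rw [key (i+1) (by omega), key i (by omega)]
      have : i + 1 - m = (i - m) + 1 := by omega
      rw [this]
      exact hgstep (i - m) (by omega)

lemma reach_mono {d : ℕ} {S T : Set (Fin d → ℤ)} (hST : S ⊆ T) {a b : Fin d → ℤ}
    (h : Reach S a b) : Reach T a b := by
  obtain ⟨m, f, h0, hm, hS, hstep⟩ := h
  exact ⟨m, f, h0, hm, fun i hi => hST (hS i hi), hstep⟩

lemma lone_update_sub {d : ℕ} (x : Fin d → ℤ) (k : Fin d) (s t : ℤ) :
    lone (Function.update x k s - Function.update x k t) = (s - t).natAbs := by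
  unfold lone
  rw [Finset.sum_eq_single k]
  · simp
  · intro j _ hj
    simp [Function.update_of_ne hj]
  · simp

lemma reach_update {d : ℕ} {S : Set (Fin d → ℤ)} (x : Fin d → ℤ) (k : Fin d) (t : ℤ)
    (h : ∀ s : ℤ, min (x k) t ≤ s → s ≤ max (x k) t → Function.update x k s ∈ S) :
    Reach S x (Function.update x k t) := by
  set δ := t - x k with hδ
  have htri : (δ = 0 ∧ δ.sign = 0) ∨ (0 < δ ∧ δ.sign = 1) ∨ (δ < 0 ∧ δ.sign = -1) := by
    rcases lt_trichotomy δ 0 with h1 | h1 | h1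
    · exact Or.inr (Or.inr ⟨h1, Int.sign_eq_neg_one_of_neg h1⟩)
    · exact Or.inl ⟨h1, by rw [h1]; rfl⟩
    · exact Or.inr (Or.inl ⟨h1, Int.sign_eq_one_of_pos h1⟩)
  refine ⟨δ.natAbs, fun i => Function.update x k (x k + δ.sign * i), ?_, ?_, ?_, ?_⟩
  · simp
  · beta_reduce
    have : x k + δ.sign * (δ.natAbs : ℤ) = t := by
      rw [Int.sign_mul_natAbs]; omega
    rw [this]
  · intro i hi
    have hi' : (i : ℤ) ≤ (δ.natAbs : ℤ) := by exact_mod_cast hi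
    apply h
    · rw [min_le_iff]
      rcases htri with ⟨h1, h2⟩ | ⟨h1, h2⟩ | ⟨h1, h2⟩ <;> rw [h2] <;> omega
    · rw [le_max_iff]
      rcases htri with ⟨h1, h2⟩ | ⟨h1, h2⟩ | ⟨h1, h2⟩ <;> rw [h2] <;> omega
  · intro i hi
    beta_reduce
    rw [lone_update_sub]
    have hstep : x k + δ.sign * (↑(i + 1)) - (x k + δ.sign * i) = δ.sign := by
      push_cast; ring
    rw [hstep]
    rcases htri with ⟨h1, h2⟩ | ⟨h1, h2⟩ | ⟨h1, h2⟩
    · omega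
    · rw [h2]; rfl
    · rw [h2]; rfl

def band (R : ℕ) : Finset ℤ :=
  ({-(R : ℤ), -(R : ℤ) + 1, -(R : ℤ) + 2, (R : ℤ) - 2, (R : ℤ) - 1, (R : ℤ)} : Finset ℤ)

lemma R_mem_band (R : ℕ) : (R : ℤ) ∈ band R := by simp [band]

lemma negR_mem_band (R : ℕ) : (-(R : ℤ)) ∈ band R := by simp [band]

lemma edges_mem {d R : ℕ} {x : Fin d → ℤ} (hb : ∀ i, x i ∈ Finset.Icc (-(R : ℤ)) R)
    {i j : Fin d} (hij : i ≠ j) (hi : x i ∈ band R) (hj : x j ∈ band R) :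
    x ∈ edgesSet d R := by
  refine ⟨hb, Finset.one_lt_card.mpr ⟨i, ?_, j, ?_, hij⟩⟩
  · simp only [Finset.mem_filter, Finset.mem_univ, true_and]; exact hi
  · simp only [Finset.mem_filter, Finset.mem_univ, true_and]; exact hj

lemma edges_band {d R : ℕ} {x : Fin d → ℤ} (hx : x ∈ edgesSet d R) :
    ∃ i j, i ≠ j ∧ x i ∈ band R ∧ x j ∈ band R := by
  obtain ⟨i, hi, j, hj, hij⟩ := Finset.one_lt_card.mp hx.2
  simp only [Finset.mem_filter, Finset.mem_univ, true_and] at hi hj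
  exact ⟨i, j, hij, hi, hj⟩

lemma reach_mem_right {d : ℕ} {S : Set (Fin d → ℤ)} {a b : Fin d → ℤ}
    (h : Reach S a b) : b ∈ S := by
  obtain ⟨m, f, _, hm, hS, _⟩ := h
  exact hm ▸ hS m le_rfl

lemma exists_third {d : ℕ} (hd : 3 ≤ d) (i j : Fin d) : ∃ k, k ≠ i ∧ k ≠ j := by
  by_contra h
  push_neg at h
  have hsub : (Finset.univ : Finset (Fin d)) ⊆ {i, j} := by
    intro k _
    simp only [Finset.mem_insert, Finset.mem_singleton]
    by_cases hki : k = i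
    · exact Or.inl hki
    · exact Or.inr (h k hki)
  have h1 := Finset.card_le_card hsub
  have h2 : ({i, j} : Finset (Fin d)).card ≤ 2 := by
    apply le_trans (Finset.card_insert_le _ _); simp
  simp only [Finset.card_univ, Fintype.card_fin] at h1
  omega

lemma imid_mem {d R : ℕ} {x : Fin d → ℤ} (hb : ∀ m, x m ∈ Finset.Icc (-(R : ℤ)) R)
    {k : Fin d} {s : ℤ} (h1 : min (x k) (R : ℤ) ≤ s) (h2 : s ≤ max (x k) (R : ℤ)) :
    ∀ m, Function.update x k s m ∈ Finset.Icc (-(R : ℤ)) R := by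
  intro m
  by_cases hm : m = k
  · subst hm
    rw [Function.update_self, Finset.mem_Icc]
    have hk := hb m; rw [Finset.mem_Icc] at hk
    have hlo : -(R : ℤ) ≤ min (x m) R := le_min hk.1 (by omega)
    have hhi : max (x m) (R : ℤ) ≤ R := max_le hk.2 le_rfl
    exact ⟨le_trans hlo h1, le_trans h2 hhi⟩
  · rw [Function.update_of_ne hm]; exact hb m

lemma reach_flatten {d R : ℕ} (i j : Fin d) (hij : i ≠ j) :
    ∀ N (x : Fin d → ℤ), x ∈ edgesSet d R → x i ∈ band R → x j ∈ band R →
      (∑ k, if k = i ∨ k = j then 0 else (x k - R).natAbs) = N →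
      Reach (edgesSet d R) x (fun k => if k = i ∨ k = j then x k else (R : ℤ)) := by
  intro N
  induction N using Nat.strong_induction_on with
  | _ N ih =>
    intro x hx hxi hxj hN
    by_cases hall : ∀ k, k ≠ i → k ≠ j → x k = (R : ℤ)
    · have hxx : (fun k => if k = i ∨ k = j then x k else (R : ℤ)) = x := by
        funext k
        by_cases h : k = i ∨ k = j
        · simp [h]
        · push_neg at h
          simp [h, hall k h.1 h.2]
      rw [hxx]; exact reach_refl hx
    · push_neg at hall
      obtain ⟨k, hki, hkj, hk⟩ := hall
      have hb := hx.1
      have hmid : ∀ s : ℤ, min (x k) (R : ℤ) ≤ s → s ≤ max (x k) (R : ℤ) →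
          Function.update x k s ∈ edgesSet d R := by
        intro s h1 h2
        refine edges_mem (imid_mem hb h1 h2) hij ?_ ?_
        · rw [Function.update_of_ne (Ne.symm hki)]; exact hxi
        · rw [Function.update_of_ne (Ne.symm hkj)]; exact hxj
      have hr1 : Reach (edgesSet d R) x (Function.update x k (R : ℤ)) :=
        reach_update x k (R : ℤ) hmid
      set x' := Function.update x k (R : ℤ) with hx'def
      have hx'i : x' i = x i := Function.update_of_ne (Ne.symm hki) _ _
      have hx'j : x' j = x j := Function.update_of_ne (Ne.symm hkj) _ _
      have hx'mem : x' ∈ edgesSet d R := reach_mem_right hr1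
      have hlt : (∑ m, if m = i ∨ m = j then 0 else (x' m - R).natAbs) < N := by
        rw [← hN]
        apply Finset.sum_lt_sum
        · intro m _
          by_cases h : m = i ∨ m = j
          · simp [h]
          · simp only [if_neg h]
            by_cases hmk : m = k
            · subst hmk; rw [hx'def, Function.update_self]; simp
            · rw [hx'def, Function.update_of_ne hmk]
        · refine ⟨k, Finset.mem_univ k, ?_⟩
          rw [if_neg (by tauto), if_neg (by tauto), hx'def, Function.update_self]
          simp only [sub_self, Int.natAbs_zero]
          omega
      have hr2 := ih _ hlt x' hx'mem (hx'i ▸ hxi) (hx'j ▸ hxj) rfl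
      have htgt : (fun m => if m = i ∨ m = j then x' m else (R : ℤ)) =
          (fun m => if m = i ∨ m = j then x m else (R : ℤ)) := by
        funext m
        by_cases h : m = i ∨ m = j
        · rcases h with h | h <;> subst h <;> simp [hx'i, hx'j]
        · simp [h]
      rw [htgt] at hr2
      exact reach_trans hr1 hr2

lemma reach_corner {d R : ℕ} (hd : 3 ≤ d) {x : Fin d → ℤ} (hx : x ∈ edgesSet d R) :
    Reach (edgesSet d R) x (fun _ => (R : ℤ)) := by
  obtain ⟨i, j, hij, hxi, hxj⟩ := edges_band hx
  have hr1 := reach_flatten i j hij _ x hx hxi hxj rfl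
  set y := (fun k => if k = i ∨ k = j then x k else (R : ℤ)) with hy
  have hymem : y ∈ edgesSet d R := reach_mem_right hr1
  obtain ⟨k, hki, hkj⟩ := exists_third hd i j
  have hyk : y k = (R : ℤ) := by rw [hy]; simp [hki, hkj]
  have hyi : y i = x i := by rw [hy]; simp
  have hyj : y j = x j := by rw [hy]; simp
  -- move coordinate i to R
  have hmid1 : ∀ s : ℤ, min (y i) (R : ℤ) ≤ s → s ≤ max (y i) (R : ℤ) →
      Function.update y i s ∈ edgesSet d R := by
    intro s h1 h2
    refine edges_mem (imid_mem hymem.1 h1 h2) (Ne.symm hkj) ?_ ?_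
    · rw [Function.update_of_ne hij.symm, hyj]; exact hxj
    · rw [Function.update_of_ne hki, hyk]; exact R_mem_band R
  have hr2 : Reach (edgesSet d R) y (Function.update y i (R : ℤ)) :=
    reach_update y i (R : ℤ) hmid1
  set z := Function.update y i (R : ℤ) with hz
  have hzmem : z ∈ edgesSet d R := reach_mem_right hr2
  have hzi : z i = (R : ℤ) := Function.update_self _ _ _
  have hzk : z k = (R : ℤ) := by rw [hz, Function.update_of_ne hki]; exact hyk
  have hmid2 : ∀ s : ℤ, min (z j) (R : ℤ) ≤ s → s ≤ max (z j) (R : ℤ) →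
      Function.update z j s ∈ edgesSet d R := by
    intro s h1 h2
    refine edges_mem (imid_mem hzmem.1 h1 h2) (Ne.symm hki) ?_ ?_
    · rw [Function.update_of_ne hij, hzi]; exact R_mem_band R
    · rw [Function.update_of_ne hkj, hzk]; exact R_mem_band R
  have hr3 : Reach (edgesSet d R) z (Function.update z j (R : ℤ)) :=
    reach_update z j (R : ℤ) hmid2
  have hfin : Function.update z j (R : ℤ) = (fun _ => (R : ℤ)) := by
    funext m
    by_cases hmj : m = j
    · subst hmj; exact Function.update_self _ _ _
    · rw [Function.update_of_ne hmj, hz]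
      by_cases hmi : m = i
      · subst hmi; exact Function.update_self _ _ _
      · rw [Function.update_of_ne hmi, hy]
        simp [hmi, hmj]
  rw [hfin] at hr3
  exact reach_trans hr1 (reach_trans hr2 hr3)

lemma reach_translate {d : ℕ} {S : Set (Fin d → ℤ)} (v : Fin d → ℤ) {a b : Fin d → ℤ}
    (h : Reach S a b) : Reach ((v + ·) '' S) (v + a) (v + b) := by
  obtain ⟨m, f, h0, hm, hS, hstep⟩ := h
  refine ⟨m, fun i => v + f i, by beta_reduce; rw [h0], by beta_reduce; rw [hm],
    fun i hi => ⟨f i, hS i hi, rfl⟩, ?_⟩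
  intro i hi
  beta_reduce
  rw [add_sub_add_left_eq_sub]
  exact hstep i hi

lemma single_coord {d R : ℕ} {x₁ x₂ : Fin d → ℤ}
    (h1 : ∀ i, ((2 * R + 1 : ℕ) : ℤ) ∣ x₁ i) (h2 : ∀ i, ((2 * R + 1 : ℕ) : ℤ) ∣ x₂ i)
    (hl : lone (x₁ - x₂) = 2 * R + 1) :
    ∃ k, (∀ m, m ≠ k → x₁ m = x₂ m) ∧ (x₁ k - x₂ k).natAbs = 2 * R + 1 := by
  set L : ℕ := 2 * R + 1 with hL
  have hdvd : ∀ m, L ∣ ((x₁ - x₂) m).natAbs := by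
    intro m
    have : ((L : ℤ)) ∣ (x₁ - x₂) m := by
      have : (x₁ - x₂) m = x₁ m - x₂ m := rfl
      rw [this]
      exact dvd_sub (h1 m) (h2 m)
    have := Int.natAbs_dvd_natAbs.mpr this
    simpa using this
  have hpos : 0 < ∑ m, ((x₁ - x₂) m).natAbs := by
    rw [show ∑ m, ((x₁ - x₂) m).natAbs = lone (x₁ - x₂) from rfl, hl]; omega
  obtain ⟨k, _, hk⟩ := Finset.exists_lt_of_sum_lt (f := fun _ : Fin d => 0)
    (g := fun m => ((x₁ - x₂) m).natAbs) (by simpa using hpos)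
  have hkL : L ≤ ((x₁ - x₂) k).natAbs := Nat.le_of_dvd (by omega) (hdvd k)
  have hrest : ∑ m ∈ Finset.univ.erase k, ((x₁ - x₂) m).natAbs = 0 := by
    have hsplit : ((x₁ - x₂) k).natAbs + ∑ m ∈ Finset.univ.erase k, ((x₁ - x₂) m).natAbs
        = ∑ m, ((x₁ - x₂) m).natAbs :=
      Finset.add_sum_erase _ (fun m => ((x₁ - x₂) m).natAbs) (Finset.mem_univ k)
    have : ∑ m, ((x₁ - x₂) m).natAbs = L := hl
    omega
  refine ⟨k, ?_, ?_⟩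
  · intro m hm
    have : ((x₁ - x₂) m).natAbs = 0 := by
      have := Finset.sum_eq_zero_iff.mp hrest m (Finset.mem_erase.mpr ⟨hm, Finset.mem_univ m⟩)
      exact this
    have : (x₁ - x₂) m = 0 := Int.natAbs_eq_zero.mp this
    have : x₁ m - x₂ m = 0 := this
    omega
  · have hsplit : ((x₁ - x₂) k).natAbs + ∑ m ∈ Finset.univ.erase k, ((x₁ - x₂) m).natAbs
        = ∑ m, ((x₁ - x₂) m).natAbs :=
      Finset.add_sum_erase _ (fun m => ((x₁ - x₂) m).natAbs) (Finset.mem_univ k)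
    have h3 : ∑ m, ((x₁ - x₂) m).natAbs = L := hl
    have : ((x₁ - x₂) k).natAbs = L := by omega
    exact this

lemma lone_single {d : ℕ} (k : Fin d) (c : ℤ) :
    lone (Function.update (fun _ => (0 : ℤ)) k c) = c.natAbs := by
  unfold lone
  rw [Finset.sum_eq_single k]
  · simp
  · intro j _ hj
    simp [Function.update_of_ne hj]
  · simp

lemma corner_mem {d R : ℕ} (hd : 3 ≤ d) : (fun _ => (R : ℤ)) ∈ edgesSet d R := by
  refine edges_mem (i := ⟨0, by omega⟩) (j := ⟨1, by omega⟩) (fun i => ?_)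
    (by simp) (R_mem_band R) (R_mem_band R)
  rw [Finset.mem_Icc]; omega

lemma union_conn {d R : ℕ} (hd : 3 ≤ d) (hR : 4 ≤ R) (x₁ x₂ : Fin d → ℤ) (k : Fin d)
    (heq : ∀ m, m ≠ k → x₁ m = x₂ m) (hk : x₂ k = x₁ k + ((2 * R + 1 : ℕ) : ℤ)) :
    ConnIn (((x₁ + ·) '' edgesSet d R) ∪ ((x₂ + ·) '' edgesSet d R)) := by
  set S := edgesSet d R with hS
  set U := ((x₁ + ·) '' S) ∪ ((x₂ + ·) '' S) with hU
  have hL : (0:ℤ) ≤ R := by omega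
  set p : Fin d → ℤ := fun _ => (R : ℤ) with hp
  set q : Fin d → ℤ := Function.update p k (-(R : ℤ)) with hq
  have hpmem : p ∈ S := corner_mem hd
  have hqmem : q ∈ S := by
    obtain ⟨a, hak, _⟩ := exists_third hd k k
    obtain ⟨b, hba, hbk⟩ := exists_third hd a k
    refine edges_mem (fun m => ?_) hba ?_ ?_
    · by_cases hm : m = k
      · subst hm; rw [hq, Function.update_self, Finset.mem_Icc]; omega
      · rw [hq, Function.update_of_ne hm]
        simp only [hp, Finset.mem_Icc]
        omega
    · rw [hq, Function.update_of_ne hbk]; exact R_mem_band R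
    · rw [hq, Function.update_of_ne hak]; exact R_mem_band R
  have ha1 : x₁ + p ∈ U := Or.inl ⟨p, hpmem, rfl⟩
  have ha2 : x₂ + q ∈ U := Or.inr ⟨q, hqmem, rfl⟩
  have hbridge : Reach U (x₁ + p) (x₂ + q) := by
    refine ⟨1, fun n => if n = 0 then x₁ + p else x₂ + q, rfl, rfl, ?_, ?_⟩
    · intro i hi
      beta_reduce
      by_cases h : i = 0
      · rw [if_pos h]; exact ha1
      · rw [if_neg h]; exact ha2
    · intro i hi
      interval_cases i
      beta_reduce
      rw [if_neg (by omega : ¬ 0 + 1 = 0), if_pos rfl]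
      have hdiff : x₂ + q - (x₁ + p) = Function.update (fun _ => (0:ℤ)) k 1 := by
        funext m
        by_cases hm : m = k
        · subst hm
          have : (x₂ + q - (x₁ + p)) m = x₂ m + q m - (x₁ m + p m) := rfl
          rw [this, Function.update_self, hq, Function.update_self, hp, hk]
          push_cast; ring
        · have : (x₂ + q - (x₁ + p)) m = x₂ m + q m - (x₁ m + p m) := rfl
          rw [this, Function.update_of_ne hm, hq, Function.update_of_ne hm,
            ← heq m hm]
          ring
      rw [hdiff, lone_single]
      rfl
  have hsub1 : ((x₁ + ·) '' S) ⊆ U := Set.subset_union_left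
  have hsub2 : ((x₂ + ·) '' S) ⊆ U := Set.subset_union_right
  have key : ∀ c ∈ U, Reach U c (x₁ + p) := by
    intro c hc
    rcases hc with ⟨w, hw, rfl⟩ | ⟨w, hw, rfl⟩
    · exact reach_mono hsub1 (reach_translate x₁ (reach_corner hd hw))
    · have h1 : Reach U (x₂ + w) (x₂ + p) :=
        reach_mono hsub2 (reach_translate x₂ (reach_corner hd hw))
      have h2 : Reach U (x₂ + q) (x₂ + p) :=
        reach_mono hsub2 (reach_translate x₂ (reach_corner hd hqmem))
      exact reach_trans h1 (reach_trans (reach_symm h2) (reach_symm hbridge))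
  intro a ha b hb
  exact reach_trans (key a ha) (reach_symm (key b hb))

/-- For `R ≥ 4` the edge frame is connected; moreover for any two ℓ¹-adjacent centers
`x₁, x₂ ∈ (2R+1)ℤ^d` the union of the two translated frames is connected. -/
theorem edges_connected (d R : ℕ) (hd : 3 ≤ d) (hR : 4 ≤ R) :
    ConnIn (edgesSet d R) ∧
      ∀ x₁ x₂ : Fin d → ℤ,
        (∀ i, ((2 * R + 1 : ℕ) : ℤ) ∣ x₁ i) → (∀ i, ((2 * R + 1 : ℕ) : ℤ) ∣ x₂ i) →
        lone (x₁ - x₂) = 2 * R + 1 →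
        ConnIn (((x₁ + ·) '' edgesSet d R) ∪ ((x₂ + ·) '' edgesSet d R)) := by
  constructor
  · intro a ha b hb
    exact reach_trans (reach_corner hd ha) (reach_symm (reach_corner hd hb))
  · intro x₁ x₂ h1 h2 hl
    obtain ⟨k, heq, habs⟩ := single_coord h1 h2 hl
    rcases Int.natAbs_eq_iff.mp habs with hcase | hcase
    · rw [Set.union_comm]
      exact union_conn hd hR x₂ x₁ k (fun m hm => (heq m hm).symm) (by omega)
    · exact union_conn hd hR x₁ x₂ k heq (by omega)
end
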